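/- arXiv:2207.06246 — 7 statements merged into one kernel-verified Lean document; each statement's English description precedes it below -/
import Mathlib

section
/- Let 𝔡, K ∈ ℕ, let 𝒢 : ℝ^𝔡 → ℝ^𝔡 be measurable, for every k ∈ {1,…,K} let ψ_k : ℝ^𝔡 → ℝ be continuously differentiable, assume for all k, l ∈ {1,…,K} with k ≠ l and all θ ∈ ℝ^𝔡 with min_{m∈{1,…,K}} ‖(∇ψ_m)(θ)‖ > 0 that ⟨(∇ψ_k)(θ), (∇ψ_l)(θ)⟩ = 0, let τ ∈ (0,∞], and let Θ ∈ C([0,τ), ℝ^𝔡) satisfy for all t ∈ [0,τ) that inf_{s∈[0,t]} min_{k∈{1,…,K}} ‖(∇ψ_k)(Θ_s)‖ > 0, that ∫₀ᵗ ‖𝒢(Θ_s)‖ ds < ∞, and that Θ_t = Θ_0 + ∫₀ᵗ ( 𝒢(Θ_s) − Σ_{k=1}^K ‖(∇ψ_k)(Θ_s)‖⁻² ⟨𝒢(Θ_s), (∇ψ_k)(Θ_s)⟩ (∇ψ_k)(Θ_s) ) ds. Then for all k ∈ {1,…,K} and all t ∈ [0,τ) it holds that ψ_k(Θ_t) = ψ_k(Θ_0).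 -/
open MeasureTheory InnerProductSpace
open scoped RealInnerProductSpace ENNReal

variable {E : Type*} [NormedAddCommGroup E] [InnerProductSpace ℝ E] [CompleteSpace E]

lemma grad_cont {f : E → ℝ} (hf : ContDiff ℝ 1 f) : Continuous (fun x => gradient f x) :=
  (toDual ℝ E).symm.continuous.comp (hf.continuous_fderiv one_ne_zero)

lemma chord_eq {f : E → ℝ} (hf : ContDiff ℝ 1 f) (x y : E) :
    f y - f x = ∫ r in (0:ℝ)..1, ⟪gradient f (x + r • (y - x)), y - x⟫ := by
  have hline : ∀ r : ℝ, HasDerivAt (fun r : ℝ => x + r • (y - x)) (y - x) r := by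
    intro r
    simpa using ((hasDerivAt_id r).smul_const (y - x)).const_add x
  have hd : ∀ r ∈ Set.uIcc (0:ℝ) 1,
      HasDerivAt (fun r : ℝ => f (x + r • (y - x)))
        ⟪gradient f (x + r • (y - x)), y - x⟫ r := by
    intro r _
    have hF := ((hf.differentiable one_ne_zero) (x + r • (y - x))).hasFDerivAt
    have h3 : ⟪gradient f (x + r • (y - x)), y - x⟫
        = fderiv ℝ f (x + r • (y - x)) (y - x) := toDual_symm_apply
    rw [h3]
    exact hF.comp_hasDerivAt r (hline r)
  have hcont : Continuous fun r : ℝ => ⟪gradient f (x + r • (y - x)), y - x⟫ := by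
    have hl : Continuous fun r : ℝ => x + r • (y - x) := by continuity
    exact (continuous_inner.comp (((grad_cont hf).comp hl).prodMk continuous_const))
  have h := intervalIntegral.integral_eq_sub_of_hasDerivAt hd (hcont.intervalIntegrable 0 1)
  rw [h]; simp

/-- Lemma 2.1 (Gradient flow dynamics on submanifolds): if the gradient flow is projected
onto the orthogonal complement of the gradients of the functions `ψ k`, then the quantities
`ψ k (Θ t)` are conserved along the trajectory. -/
theorem stmt0
    (𝔡 K : ℕ)
    (𝒢 : EuclideanSpace ℝ (Fin 𝔡) → EuclideanSpace ℝ (Fin 𝔡))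
    (h𝒢meas : Measurable 𝒢)
    (ψ : Fin K → EuclideanSpace ℝ (Fin 𝔡) → ℝ)
    (hψ : ∀ k, ContDiff ℝ 1 (ψ k))
    (horth : ∀ k l : Fin K, k ≠ l → ∀ θ : EuclideanSpace ℝ (Fin 𝔡),
      (∀ m : Fin K, 0 < ‖gradient (ψ m) θ‖) →
      ⟪gradient (ψ k) θ, gradient (ψ l) θ⟫ = 0)
    (τ : ℝ≥0∞) (hτ : 0 < τ)
    (Θ : ℝ → EuclideanSpace ℝ (Fin 𝔡))
    (hΘcont : ContinuousOn Θ {t : ℝ | 0 ≤ t ∧ ENNReal.ofReal t < τ})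
    (hpos : ∀ t : ℝ, 0 ≤ t → ENNReal.ofReal t < τ →
      ∃ c > 0, ∀ s ∈ Set.Icc (0 : ℝ) t, ∀ k : Fin K, c ≤ ‖gradient (ψ k) (Θ s)‖)
    (hint : ∀ t : ℝ, 0 ≤ t → ENNReal.ofReal t < τ →
      IntegrableOn (fun s => ‖𝒢 (Θ s)‖) (Set.Icc (0 : ℝ) t))
    (hflow : ∀ t : ℝ, 0 ≤ t → ENNReal.ofReal t < τ →
      Θ t = Θ 0 + ∫ s in (0:ℝ)..t,
        (𝒢 (Θ s) - ∑ k : Fin K,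
          ((‖gradient (ψ k) (Θ s)‖ ^ 2)⁻¹ * ⟪𝒢 (Θ s), gradient (ψ k) (Θ s)⟫) •
            gradient (ψ k) (Θ s))) :
    ∀ k : Fin K, ∀ t : ℝ, 0 ≤ t → ENNReal.ofReal t < τ →
      ψ k (Θ t) = ψ k (Θ 0) := by
  intro k t ht0 htτ
  set v : ℝ → EuclideanSpace ℝ (Fin 𝔡) := fun s =>
    𝒢 (Θ s) - ∑ l : Fin K,
      ((‖gradient (ψ l) (Θ s)‖ ^ 2)⁻¹ * ⟪𝒢 (Θ s), gradient (ψ l) (Θ s)⟫) •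
        gradient (ψ l) (Θ s) with hv
  set g : EuclideanSpace ℝ (Fin 𝔡) → EuclideanSpace ℝ (Fin 𝔡) := fun x => gradient (ψ k) x with hg
  have hsub : Set.Icc (0:ℝ) t ⊆ {u : ℝ | 0 ≤ u ∧ ENNReal.ofReal u < τ} := by
    intro u hu
    exact ⟨hu.1, lt_of_le_of_lt (ENNReal.ofReal_le_ofReal hu.2) htτ⟩
  have hΘc : ContinuousOn Θ (Set.Icc (0:ℝ) t) := hΘcont.mono hsub
  obtain ⟨c, hc, hcle⟩ := hpos t ht0 htτ
  have hgradpos : ∀ s ∈ Set.Icc (0:ℝ) t, ∀ m : Fin K, 0 < ‖gradient (ψ m) (Θ s)‖ :=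
    fun s hs m => lt_of_lt_of_le hc (hcle s hs m)
  -- integrability of v
  have hvint : IntegrableOn v (Set.Icc (0:ℝ) t) := by
    have hΘm : AEMeasurable Θ (volume.restrict (Set.Icc (0:ℝ) t)) :=
      hΘc.aemeasurable measurableSet_Icc
    have hGm : AEMeasurable (fun s => 𝒢 (Θ s)) (volume.restrict (Set.Icc (0:ℝ) t)) :=
      h𝒢meas.comp_aemeasurable hΘm
    have hglm : ∀ l : Fin K, AEMeasurable (fun s => gradient (ψ l) (Θ s))
        (volume.restrict (Set.Icc (0:ℝ) t)) :=
      fun l => (grad_cont (hψ l)).measurable.comp_aemeasurable hΘm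
    have hvm : AEMeasurable v (volume.restrict (Set.Icc (0:ℝ) t)) := by
      refine hGm.sub (Finset.aemeasurable_fun_sum _ (fun l _ => ?_))
      exact ((((hglm l).norm.pow_const 2).inv.mul (hGm.inner (hglm l))).smul (hglm l))
    have hbnd : ∀ s ∈ Set.Icc (0:ℝ) t, ‖v s‖ ≤ (1 + K) * ‖𝒢 (Θ s)‖ := by
      intro s hs
      have hterm : ∀ l : Fin K,
          ‖((‖gradient (ψ l) (Θ s)‖ ^ 2)⁻¹ * ⟪𝒢 (Θ s), gradient (ψ l) (Θ s)⟫) •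
            gradient (ψ l) (Θ s)‖ ≤ ‖𝒢 (Θ s)‖ := by
        intro l
        have hgl : 0 < ‖gradient (ψ l) (Θ s)‖ := hgradpos s hs l
        have hcs := abs_real_inner_le_norm (𝒢 (Θ s)) (gradient (ψ l) (Θ s))
        rw [norm_smul, Real.norm_eq_abs, abs_mul, abs_inv, abs_of_nonneg (by positivity :
          (0:ℝ) ≤ ‖gradient (ψ l) (Θ s)‖ ^ 2)]
        rw [inv_mul_eq_div, div_mul_eq_mul_div, div_le_iff₀ (by positivity)]
        calc |⟪𝒢 (Θ s), gradient (ψ l) (Θ s)⟫| * ‖gradient (ψ l) (Θ s)‖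
            ≤ (‖𝒢 (Θ s)‖ * ‖gradient (ψ l) (Θ s)‖) * ‖gradient (ψ l) (Θ s)‖ :=
              mul_le_mul_of_nonneg_right hcs (norm_nonneg _)
          _ = ‖𝒢 (Θ s)‖ * ‖gradient (ψ l) (Θ s)‖ ^ 2 := by ring
      calc ‖v s‖ ≤ ‖𝒢 (Θ s)‖ + ‖∑ l : Fin K,
            ((‖gradient (ψ l) (Θ s)‖ ^ 2)⁻¹ * ⟪𝒢 (Θ s), gradient (ψ l) (Θ s)⟫) •
              gradient (ψ l) (Θ s)‖ := norm_sub_le _ _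
        _ ≤ ‖𝒢 (Θ s)‖ + ∑ l : Fin K, ‖((‖gradient (ψ l) (Θ s)‖ ^ 2)⁻¹ *
              ⟪𝒢 (Θ s), gradient (ψ l) (Θ s)⟫) • gradient (ψ l) (Θ s)‖ := by
            gcongr
            exact norm_sum_le _ _
        _ ≤ ‖𝒢 (Θ s)‖ + ∑ _l : Fin K, ‖𝒢 (Θ s)‖ := by
            gcongr with l
            exact hterm l
        _ = (1 + K) * ‖𝒢 (Θ s)‖ := by
            simp [Finset.sum_const, Finset.card_univ]
            ring
    refine Integrable.mono' ((hint t ht0 htτ).const_mul (1 + K)) hvm.aestronglyMeasurable ?_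
    exact (ae_restrict_iff' measurableSet_Icc).2 (ae_of_all _ hbnd)
  have hvi : ∀ a b : ℝ, 0 ≤ a → a ≤ b → b ≤ t → IntervalIntegrable v volume a b := by
    intro a b ha hab hbt
    refine (hvint.mono_set ?_).intervalIntegrable
    rw [Set.uIcc_of_le hab]
    exact Set.Icc_subset_Icc ha hbt
  -- orthogonality
  have horthv : ∀ s ∈ Set.Icc (0:ℝ) t, ⟪g (Θ s), v s⟫ = 0 := by
    intro s hs
    have hps := hgradpos s hs
    have hksq : ⟪gradient (ψ k) (Θ s), gradient (ψ k) (Θ s)⟫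
        = ‖gradient (ψ k) (Θ s)‖ ^ 2 := real_inner_self_eq_norm_sq _
    have hk0 : (0:ℝ) < ‖gradient (ψ k) (Θ s)‖ := hps k
    simp only [hg, hv, inner_sub_right, inner_sum, real_inner_smul_right]
    rw [Finset.sum_eq_single k (fun l _ hlk => by
      rw [horth k l hlk.symm (Θ s) hps, mul_zero]) (by simp)]
    rw [hksq, real_inner_comm]
    field_simp
    ring
  -- flow increment
  have hflow' : ∀ a b : ℝ, 0 ≤ a → a ≤ b → b ≤ t → Θ b - Θ a = ∫ s in a..b, v s := by
    intro a b ha hab hbt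
    have h1 := hflow a ha (hsub ⟨ha, le_trans hab hbt⟩).2
    have h2 := hflow b (le_trans ha hab) (hsub ⟨le_trans ha hab, hbt⟩).2
    rw [h1, h2]
    have := intervalIntegral.integral_interval_sub_left
      (hvi 0 b le_rfl (le_trans ha hab) hbt) (hvi 0 a le_rfl ha (le_trans hab hbt))
    simp only [hv] at this ⊢
    rw [add_sub_add_comm, sub_self, zero_add, this]
  -- per-interval estimate
  have hseg : ∀ ε : ℝ, 0 ≤ ε → ∀ a b : ℝ, 0 ≤ a → a ≤ b → b ≤ t →
      (∀ s ∈ Set.Icc a b, ∀ r ∈ Set.Icc (0:ℝ) 1,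
        ‖g (Θ a + r • (Θ b - Θ a)) - g (Θ s)‖ ≤ ε) →
      |ψ k (Θ b) - ψ k (Θ a)| ≤ ε * ∫ s in a..b, ‖v s‖ := by
    intro ε hε a b ha hab hbt hsmall
    have hΘab := hflow' a b ha hab hbt
    set G : EuclideanSpace ℝ (Fin 𝔡) := ∫ r in (0:ℝ)..1, g (Θ a + r • (Θ b - Θ a)) with hG
    have hgc : Continuous fun r : ℝ => g (Θ a + r • (Θ b - Θ a)) :=
      (grad_cont (hψ k)).comp (continuous_const.add (continuous_id.smul continuous_const))
    have h1 : ψ k (Θ b) - ψ k (Θ a)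
        = ∫ r in (0:ℝ)..1, ⟪g (Θ a + r • (Θ b - Θ a)), Θ b - Θ a⟫ :=
      chord_eq (hψ k) (Θ a) (Θ b)
    have h2 : ∫ r in (0:ℝ)..1, ⟪g (Θ a + r • (Θ b - Θ a)), Θ b - Θ a⟫
        = ⟪G, Θ b - Θ a⟫ := by
      have h := ((innerSL ℝ (E := EuclideanSpace ℝ (Fin 𝔡))).flip
        (Θ b - Θ a)).intervalIntegral_comp_comm (hgc.intervalIntegrable (μ := volume) 0 1)
      simp only [ContinuousLinearMap.flip_apply, innerSL_apply_apply] at h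
      exact h
    have h3 : ⟪G, Θ b - Θ a⟫ = ∫ s in a..b, ⟪G, v s⟫ := by
      rw [hΘab]
      have h := (innerSL ℝ G).intervalIntegral_comp_comm (hvi a b ha hab hbt)
      simp only [innerSL_apply_apply] at h
      exact h.symm
    have h4 : ∫ s in a..b, ⟪G, v s⟫ = ∫ s in a..b, ⟪G - g (Θ s), v s⟫ := by
      apply intervalIntegral.integral_congr
      intro s hs
      rw [Set.uIcc_of_le hab] at hs
      have h0 : ⟪g (Θ s), v s⟫ = 0 :=
        horthv s ⟨le_trans ha hs.1, le_trans hs.2 hbt⟩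
      show ⟪G, v s⟫ = ⟪G - g (Θ s), v s⟫
      rw [inner_sub_left, h0, sub_zero]
    have hGg : ∀ s ∈ Set.Icc a b, ‖G - g (Θ s)‖ ≤ ε := by
      intro s hs
      have hGs : G - g (Θ s)
          = ∫ r in (0:ℝ)..1, (g (Θ a + r • (Θ b - Θ a)) - g (Θ s)) := by
        rw [intervalIntegral.integral_sub (hgc.intervalIntegrable 0 1)
          (intervalIntegrable_const (c := g (Θ s)) (μ := volume) (a := (0:ℝ)) (b := 1))]
        simp [hG]
      rw [hGs]
      have hb := intervalIntegral.norm_integral_le_of_norm_le_const (C := ε)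
        (f := fun r : ℝ => g (Θ a + r • (Θ b - Θ a)) - g (Θ s)) (a := 0) (b := 1) ?_
      · simpa using hb
      · intro r hr
        rw [Set.uIoc_of_le zero_le_one] at hr
        exact hsmall s hs r ⟨le_of_lt hr.1, hr.2⟩
    rw [h1, h2, h3, h4]
    have hvin : IntervalIntegrable (fun s => ε * ‖v s‖) volume a b :=
      ((hvi a b ha hab hbt).norm.const_mul ε)
    calc |∫ s in a..b, ⟪G - g (Θ s), v s⟫|
        ≤ |∫ s in a..b, ε * ‖v s‖| := by
          rw [← Real.norm_eq_abs]
          apply intervalIntegral.norm_integral_le_abs_of_norm_le _ hvin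
          rw [Set.uIoc_of_le hab]
          filter_upwards [ae_restrict_mem measurableSet_Ioc] with s hs
          calc ‖⟪G - g (Θ s), v s⟫‖ ≤ ‖G - g (Θ s)‖ * ‖v s‖ :=
                abs_real_inner_le_norm _ _
            _ ≤ ε * ‖v s‖ := mul_le_mul_of_nonneg_right
                (hGg s ⟨le_of_lt hs.1, hs.2⟩) (norm_nonneg _)
      _ = ε * ∫ s in a..b, ‖v s‖ := by
          rw [intervalIntegral.integral_const_mul, abs_of_nonneg]
          exact mul_nonneg hε
            (intervalIntegral.integral_nonneg hab (fun s _ => norm_nonneg _))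
  -- uniform continuity
  have hδ : ∀ ε : ℝ, 0 < ε → ∃ δ > 0, ∀ a b : ℝ, 0 ≤ a → a ≤ b → b ≤ t → b - a < δ →
      ∀ s ∈ Set.Icc a b, ∀ r ∈ Set.Icc (0:ℝ) 1,
        ‖g (Θ a + r • (Θ b - Θ a)) - g (Θ s)‖ ≤ ε := by
    intro ε hε
    set D : Set ((ℝ × ℝ) × ℝ) := (Set.Icc (0:ℝ) t ×ˢ Set.Icc (0:ℝ) t) ×ˢ Set.Icc (0:ℝ) 1
      with hD
    have hDc : IsCompact D := (isCompact_Icc.prod isCompact_Icc).prod isCompact_Icc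
    set Φ : ((ℝ × ℝ) × ℝ) → EuclideanSpace ℝ (Fin 𝔡) :=
      fun p => g (Θ p.1.1 + p.2 • (Θ p.1.2 - Θ p.1.1)) with hΦ
    have hΦc : ContinuousOn Φ D := by
      apply (grad_cont (hψ k)).comp_continuousOn
      have h1 : ContinuousOn (fun p : (ℝ × ℝ) × ℝ => Θ p.1.1) D :=
        hΘc.comp (continuous_fst.comp continuous_fst).continuousOn
          (fun p hp => hp.1.1)
      have h2 : ContinuousOn (fun p : (ℝ × ℝ) × ℝ => Θ p.1.2) D :=
        hΘc.comp (continuous_snd.comp continuous_fst).continuousOn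
          (fun p hp => hp.1.2)
      exact h1.add ((continuous_snd.continuousOn).smul (h2.sub h1))
    have hu := hDc.uniformContinuousOn_of_continuous hΦc
    rw [Metric.uniformContinuousOn_iff] at hu
    obtain ⟨δ, hδ0, hδu⟩ := hu ε hε
    refine ⟨δ, hδ0, ?_⟩
    intro a b ha hab hbt hlen s hs r hr
    have hsIcc : s ∈ Set.Icc (0:ℝ) t := ⟨le_trans ha hs.1, le_trans hs.2 hbt⟩
    have haIcc : a ∈ Set.Icc (0:ℝ) t := ⟨ha, le_trans hab hbt⟩
    have hbIcc : b ∈ Set.Icc (0:ℝ) t := ⟨le_trans ha hab, hbt⟩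
    have hx : (((a, b), r) : (ℝ × ℝ) × ℝ) ∈ D := ⟨⟨haIcc, hbIcc⟩, hr⟩
    have hy : (((s, s), r) : (ℝ × ℝ) × ℝ) ∈ D := ⟨⟨hsIcc, hsIcc⟩, hr⟩
    have hdist : dist (((a, b), r) : (ℝ × ℝ) × ℝ) ((s, s), r) < δ := by
      rw [Prod.dist_eq, Prod.dist_eq]
      simp only [dist_self, Real.dist_eq]
      have h1 : |a - s| < δ := abs_lt.2 ⟨by linarith [hs.2], by linarith [hs.1]⟩
      have h2 : |b - s| < δ := abs_lt.2 ⟨by linarith [hs.2], by linarith [hs.1]⟩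
      exact max_lt (max_lt h1 h2) hδ0
    have hd := hδu _ hx _ hy hdist
    have hΦy : Φ ((s, s), r) = g (Θ s) := by simp [hΦ]
    rw [hΦy] at hd
    have hΦx : Φ ((a, b), r) = g (Θ a + r • (Θ b - Θ a)) := rfl
    rw [hΦx, dist_eq_norm] at hd
    exact le_of_lt hd
  -- main estimate
  have key : ∀ ε : ℝ, 0 < ε →
      |ψ k (Θ t) - ψ k (Θ 0)| ≤ ε * ∫ s in (0:ℝ)..t, ‖v s‖ := by
    intro ε hε
    obtain ⟨δ, hδ0, hδP⟩ := hδ ε hε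
    obtain ⟨n0, hn0⟩ := exists_nat_gt (t / δ)
    set n : ℕ := n0 + 1 with hn
    have hnpos : (0:ℝ) < n := by positivity
    have hstep : t / n < δ := by
      have h1 : t / δ < (n : ℝ) := lt_of_lt_of_le hn0 (by exact_mod_cast Nat.le_succ n0)
      rw [div_lt_iff₀ hδ0] at h1
      rw [div_lt_iff₀ hnpos]
      linarith
    set p : ℕ → ℝ := fun i => i * (t / n) with hp
    have hp0 : p 0 = 0 := by simp [hp]
    have hpn : p n = t := by
      simp only [hp]
      field_simp
    have hpmono : ∀ i : ℕ, p i ≤ p (i + 1) := by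
      intro i
      have ht' : 0 ≤ t / n := by positivity
      simp only [hp]
      exact mul_le_mul_of_nonneg_right (by exact_mod_cast Nat.le_succ i) ht'
    have hplen : ∀ i : ℕ, p (i + 1) - p i = t / n := by
      intro i
      simp only [hp]
      push_cast
      ring
    have hptop : ∀ i : ℕ, i ≤ n → p i ∈ Set.Icc (0:ℝ) t := by
      intro i hi
      constructor
      · have : 0 ≤ t / n := by positivity
        simp only [hp]
        positivity
      · have h1 : (i : ℝ) * (t / n) ≤ (n : ℝ) * (t / n) :=
          mul_le_mul_of_nonneg_right (by exact_mod_cast hi) (by positivity)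
        have h2 : (n : ℝ) * (t / n) = t := by field_simp
        simp only [hp]
        linarith
    have htel : ψ k (Θ t) - ψ k (Θ 0)
        = ∑ i ∈ Finset.range n, (ψ k (Θ (p (i+1))) - ψ k (Θ (p i))) := by
      rw [Finset.sum_range_sub (fun i => ψ k (Θ (p i))), hp0, hpn]
    have hnormint : ∀ i : ℕ, i < n →
        IntervalIntegrable (fun s => ‖v s‖) volume (p i) (p (i+1)) := by
      intro i hi
      have hvn : IntegrableOn (fun s => ‖v s‖) (Set.Icc (0:ℝ) t) volume := hvint.norm
      refine (hvn.mono_set ?_).intervalIntegrable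
      rw [Set.uIcc_of_le (hpmono i)]
      exact Set.Icc_subset_Icc (hptop i (le_of_lt hi)).1 (hptop (i+1) hi).2
    have hsum := intervalIntegral.sum_integral_adjacent_intervals hnormint
    calc |ψ k (Θ t) - ψ k (Θ 0)|
        = |∑ i ∈ Finset.range n, (ψ k (Θ (p (i+1))) - ψ k (Θ (p i)))| := by rw [htel]
      _ ≤ ∑ i ∈ Finset.range n, |ψ k (Θ (p (i+1))) - ψ k (Θ (p i))| :=
          Finset.abs_sum_le_sum_abs _ _
      _ ≤ ∑ i ∈ Finset.range n, ε * ∫ s in p i..p (i+1), ‖v s‖ := by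
          apply Finset.sum_le_sum
          intro i hi
          have hi' := Finset.mem_range.1 hi
          apply hseg ε (le_of_lt hε) (p i) (p (i+1)) (hptop i (le_of_lt hi')).1
            (hpmono i) (hptop (i+1) hi').2
          apply hδP (p i) (p (i+1)) (hptop i (le_of_lt hi')).1 (hpmono i)
            (hptop (i+1) hi').2
          rw [hplen i]
          exact hstep
      _ = ε * ∑ i ∈ Finset.range n, ∫ s in p i..p (i+1), ‖v s‖ :=
          (Finset.mul_sum _ _ _).symm
      _ = ε * ∫ s in (0:ℝ)..t, ‖v s‖ := by rw [hsum, hp0, hpn]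
  -- conclusion
  have hC : 0 ≤ ∫ s in (0:ℝ)..t, ‖v s‖ :=
    intervalIntegral.integral_nonneg ht0 (fun s _ => norm_nonneg _)
  set C := ∫ s in (0:ℝ)..t, ‖v s‖
  have habs : |ψ k (Θ t) - ψ k (Θ 0)| ≤ 0 := by
    by_contra h
    push_neg at h
    have h1 := key (|ψ k (Θ t) - ψ k (Θ 0)| / (2 * (C + 1))) (by positivity)
    have h2 : |ψ k (Θ t) - ψ k (Θ 0)| / (2 * (C + 1)) * C < |ψ k (Θ t) - ψ k (Θ 0)| := by
      rw [div_mul_eq_mul_div, div_lt_iff₀ (by positivity)]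
      nlinarith
    linarith
  exact sub_eq_zero.mp (abs_eq_zero.mp (le_antisymm habs (abs_nonneg _)))
end

section
/- Let 𝔡, K ∈ ℕ, for every k ∈ {1,…,K} let ψ_k : ℝ^𝔡 → ℝ be continuously differentiable, let U = {θ ∈ ℝ^𝔡 : min_{k∈{1,…,K}} ‖(∇ψ_k)(θ)‖ > 0}, let 𝓛 ∈ C(U,ℝ), let 𝒢 : U → ℝ^𝔡 be locally bounded and measurable, assume for all θ ∈ U and all k, l ∈ {1,…,K} with k ≠ l that ⟨(∇ψ_k)(θ), (∇ψ_l)(θ)⟩ = 0, let γ ∈ C([0,∞),[0,∞)) and Θ ∈ C([0,∞),U) satisfy for all t ∈ [0,∞) that Θ_t = Θ_0 − ∫₀ᵗ γ(s) ( 𝒢(Θ_s) − Σ_{k=1}^K ‖(∇ψ_k)(Θ_s)‖⁻² ⟨𝒢(Θ_s), (∇ψ_k)(Θ_s)⟩ (∇ψ_k)(Θ_s) ) ds, and assume that there exist 𝔏_r ∈ C¹(U,ℝ), r ∈ ℕ, such that for every compact K ⊆ U it holds that sup_{r∈ℕ} sup_{θ∈K} ‖∇𝔏_r(θ)‖ <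 ∞ and such that for every θ ∈ U it holds that lim_{r→∞} 𝔏_r(θ) = 𝓛(θ) and lim_{r→∞} ∇𝔏_r(θ) = 𝒢(θ). Then (i) for all k ∈ {1,…,K} and all t ∈ [0,∞) it holds that ψ_k(Θ_t) = ψ_k(Θ_0), and (ii) for all s, t ∈ [0,∞) with s ≤ t it holds that 𝓛(Θ_t) = 𝓛(Θ_s) − ∫_s^t γ(u) ‖ 𝒢(Θ_u) − Σ_{k=1}^K ‖(∇ψ_k)(Θ_u)‖⁻² ⟨𝒢(Θ_u), (∇ψ_k)(Θ_u)⟩ (∇ψ_k)(Θ_u) ‖² du ≤ 𝓛(Θ_s). -/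
open MeasureTheory
open scoped RealInnerProductSpace

open Metric intervalIntegral

variable {𝔡 : ℕ}

lemma proj_inner_zero {K : ℕ} (n : Fin K → EuclideanSpace ℝ (Fin 𝔡)) (hn : ∀ k, n k ≠ 0)
    (ho : ∀ k l, k ≠ l → ⟪n k, n l⟫ = 0) (G : EuclideanSpace ℝ (Fin 𝔡)) (k : Fin K) :
    ⟪n k, G - ∑ l, ((‖n l‖ ^ 2)⁻¹ * ⟪G, n l⟫) • n l⟫ = 0 := by
  rw [inner_sub_right, inner_sum]
  rw [Finset.sum_eq_single k (fun l _ hl => by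
        rw [real_inner_smul_right, ho k l (Ne.symm hl)]; ring) (by simp)]
  rw [real_inner_smul_right, real_inner_self_eq_norm_sq]
  have h : ‖n k‖ ^ 2 ≠ 0 := pow_ne_zero _ (norm_ne_zero_iff.mpr (hn k))
  field_simp [real_inner_comm (n k) G]
  rw [mul_div_cancel_left₀ _ (norm_ne_zero_iff.mpr (hn k)), real_inner_comm, sub_self]

lemma proj_inner_self {K : ℕ} (n : Fin K → EuclideanSpace ℝ (Fin 𝔡)) (hn : ∀ k, n k ≠ 0)
    (ho : ∀ k l, k ≠ l → ⟪n k, n l⟫ = 0) (G : EuclideanSpace ℝ (Fin 𝔡)) :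
    ⟪G, G - ∑ l, ((‖n l‖ ^ 2)⁻¹ * ⟪G, n l⟫) • n l⟫
      = ‖G - ∑ l, ((‖n l‖ ^ 2)⁻¹ * ⟪G, n l⟫) • n l‖ ^ 2 := by
  set w := G - ∑ l, ((‖n l‖ ^ 2)⁻¹ * ⟪G, n l⟫) • n l with hw
  have h1 : ⟪∑ l, ((‖n l‖ ^ 2)⁻¹ * ⟪G, n l⟫) • n l, w⟫ = 0 := by
    rw [sum_inner]
    refine Finset.sum_eq_zero fun l _ => ?_
    rw [real_inner_smul_left, proj_inner_zero n hn ho G l, mul_zero]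
  have h2 : ‖w‖ ^ 2 = ⟪w, w⟫ := (real_inner_self_eq_norm_sq w).symm
  rw [h2]
  nth_rewrite 1 [hw]
  rw [inner_sub_left, h1, sub_zero]

lemma proj_term_norm_le (n G : EuclideanSpace ℝ (Fin 𝔡)) :
    ‖((‖n‖ ^ 2)⁻¹ * ⟪G, n⟫) • n‖ ≤ ‖G‖ := by
  rcases eq_or_ne n 0 with h | h
  · simp [h]
  · have hn : 0 < ‖n‖ := norm_pos_iff.mpr h
    rw [norm_smul]
    have : |(‖n‖ ^ 2)⁻¹ * ⟪G, n⟫| ≤ (‖n‖ ^ 2)⁻¹ * (‖G‖ * ‖n‖) := by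
      rw [abs_mul, abs_of_nonneg (by positivity : (0:ℝ) ≤ (‖n‖ ^ 2)⁻¹)]
      exact mul_le_mul_of_nonneg_left (abs_real_inner_le_norm G n) (by positivity)
    calc |(‖n‖ ^ 2)⁻¹ * ⟪G, n⟫| * ‖n‖ ≤ (‖n‖ ^ 2)⁻¹ * (‖G‖ * ‖n‖) * ‖n‖ :=
          mul_le_mul_of_nonneg_right this hn.le
      _ = ‖G‖ := by field_simp


lemma bdd_on_compact {E : Type*} [NormedAddCommGroup E] {𝒢 : E → E} {A : Set E}
    (hA : IsCompact A)
    (h : ∀ θ ∈ A, ∃ r > (0:ℝ), ∃ C : ℝ, ∀ x ∈ Metric.ball θ r, ‖𝒢 x‖ ≤ C) :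
    ∃ C : ℝ, ∀ x ∈ A, ‖𝒢 x‖ ≤ C := by
  choose! r hr C hC using h
  obtain ⟨t, ht, hcov⟩ := hA.elim_nhds_subcover (fun θ => Metric.ball θ (r θ))
    (fun θ hθ => Metric.ball_mem_nhds θ (hr θ hθ))
  obtain ⟨M, hM⟩ := (t.image C).exists_le
  refine ⟨M, fun x hx => ?_⟩
  obtain ⟨θ, hθt, hxθ⟩ := Set.mem_iUnion₂.mp (hcov hx)
  exact (hC θ (ht θ hθt) x hxθ).trans (hM _ (Finset.mem_image_of_mem C hθt))

variable {𝔡 : ℕ}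

lemma gradient_continuous_of_contDiff {f : EuclideanSpace ℝ (Fin 𝔡) → ℝ}
    (hf : ContDiff ℝ 1 f) : Continuous (gradient f) := by
  have h1 : Continuous (fderiv ℝ f) := hf.continuous_fderiv one_ne_zero
  have : gradient f = fun x => (InnerProductSpace.toDual ℝ _).symm (fderiv ℝ f x) := rfl
  rw [this]
  exact (InnerProductSpace.toDual ℝ _).symm.continuous.comp h1

lemma gradient_continuousOn_of_contDiffOn {f : EuclideanSpace ℝ (Fin 𝔡) → ℝ}
    {U : Set (EuclideanSpace ℝ (Fin 𝔡))} (hU : IsOpen U) (hf : ContDiffOn ℝ 1 f U) :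
    ContinuousOn (gradient f) U := by
  have h1 : ContinuousOn (fderiv ℝ f) U := hf.continuousOn_fderiv_of_isOpen hU le_rfl
  have : gradient f = fun x => (InnerProductSpace.toDual ℝ _).symm (fderiv ℝ f x) := rfl
  rw [this]
  exact (InnerProductSpace.toDual ℝ _).symm.continuous.comp_continuousOn h1

lemma hasGradientAt_of_contDiffOn {f : EuclideanSpace ℝ (Fin 𝔡) → ℝ}
    {U : Set (EuclideanSpace ℝ (Fin 𝔡))} (hU : IsOpen U) (hf : ContDiffOn ℝ 1 f U)
    {θ : EuclideanSpace ℝ (Fin 𝔡)} (hθ : θ ∈ U) :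
    HasGradientAt f (gradient f θ) θ :=
  (((hf.contDiffAt (hU.mem_nhds hθ)).differentiableAt one_ne_zero)).hasGradientAt


set_option maxHeartbeats 1000000 in
lemma ftcAux {𝔡 : ℕ} {v : ℝ → EuclideanSpace ℝ (Fin 𝔡)} {a b : ℝ} (hab : a ≤ b)
    (hv : IntegrableOn v (Set.Icc a b))
    {Φ : ℝ → EuclideanSpace ℝ (Fin 𝔡)}
    (hΦ : ∀ t ∈ Set.Icc a b, Φ t = Φ a - ∫ u in a..t, v u)
    {U : Set (EuclideanSpace ℝ (Fin 𝔡))} (hU : IsOpen U)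
    (hΦU : ∀ t ∈ Set.Icc a b, Φ t ∈ U)
    {f : EuclideanSpace ℝ (Fin 𝔡) → ℝ}
    {g : EuclideanSpace ℝ (Fin 𝔡) → EuclideanSpace ℝ (Fin 𝔡)}
    (hfg : ∀ θ ∈ U, HasGradientAt f (g θ) θ)
    (hg : ContinuousOn g U) :
    f (Φ b) = f (Φ a) - ∫ u in a..b, ⟪g (Φ u), v u⟫ := by
  have haIcc : a ∈ Set.Icc a b := ⟨le_rfl, hab⟩
  have hbIcc : b ∈ Set.Icc a b := ⟨hab, le_rfl⟩
  have huIcc : Set.uIcc a b = Set.Icc a b := Set.uIcc_of_le hab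
  -- continuity of Φ
  have hΦcont : ContinuousOn Φ (Set.Icc a b) := by
    have h1 : ContinuousOn (fun t => Φ a - ∫ u in a..t, v u) (Set.Icc a b) := by
      have h2 := intervalIntegral.continuousOn_primitive_interval
        (μ := volume) (a := a) (b := b) (f := v) (by rwa [huIcc])
      rw [huIcc] at h2
      exact continuousOn_const.sub h2
    exact h1.congr hΦ
  -- compact image and thickening
  set K0 := Φ '' Set.Icc a b with hK0
  have hK0c : IsCompact K0 := isCompact_Icc.image_of_continuousOn hΦcont
  have hK0U : K0 ⊆ U := by rintro _ ⟨t, ht, rfl⟩; exact hΦU t ht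
  obtain ⟨ρ, ρpos, hρsub⟩ := hK0c.exists_cthickening_subset_open hU hK0U
  set K1 := Metric.cthickening ρ K0 with hK1
  have hK1c : IsCompact K1 := hK0c.cthickening
  have hK1U : K1 ⊆ U := hρsub
  have hK0K1 : K0 ⊆ K1 := Metric.self_subset_cthickening _
  -- bound for g on K1
  obtain ⟨M, hM⟩ := hK1c.exists_bound_of_continuousOn (hg.mono hK1U)
  have hM0 : 0 ≤ M := le_trans (norm_nonneg _) (hM _ (hK0K1 ⟨a, haIcc, rfl⟩))
  -- uniform continuity of g on K1
  have hgUC := Metric.uniformContinuousOn_iff.1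
    (hK1c.uniformContinuousOn_of_continuous (hg.mono hK1U))
  -- integrability of target integrand
  have hgΦm : AEStronglyMeasurable (fun u => g (Φ u)) (volume.restrict (Set.Icc a b)) :=
    (hg.comp hΦcont fun t ht => hΦU t ht).aestronglyMeasurable measurableSet_Icc
  have hY : IntegrableOn (fun u => ⟪g (Φ u), v u⟫) (Set.Icc a b) := by
    refine Integrable.mono' (hv.norm.const_mul M) (hgΦm.inner hv.aestronglyMeasurable) ?_
    refine (ae_restrict_iff' measurableSet_Icc).2 (Filter.Eventually.of_forall fun u hu => ?_)
    calc ‖⟪g (Φ u), v u⟫‖ ≤ ‖g (Φ u)‖ * ‖v u‖ := norm_inner_le_norm _ _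
      _ ≤ M * ‖v u‖ := mul_le_mul_of_nonneg_right (hM _ (hK0K1 ⟨u, hu, rfl⟩)) (norm_nonneg _)
  set I := ∫ u in Set.Icc a b, ‖v u‖ with hIdef
  have hInn : 0 ≤ I := setIntegral_nonneg measurableSet_Icc fun u _ => norm_nonneg _
  -- the indicator function
  set vi := (Set.Icc a b).indicator v with hvi
  have hviInt : Integrable vi volume := (integrable_indicator_iff measurableSet_Icc).2 hv
  -- MAIN ESTIMATE
  have key : ∀ ε' : ℝ, 0 < ε' → ε' ≤ 1 →
      |f (Φ b) - (f (Φ a) - ∫ u in a..b, ⟪g (Φ u), v u⟫)| ≤ ε' * (3 + I + M) := by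
    intro ε' hε' hε'1
    obtain ⟨δ₁, hδ₁pos, hδ₁⟩ := hgUC ε' hε'
    have hfb : ContinuousAt f (Φ b) :=
      (hfg _ (hΦU b hbIcc)).hasFDerivAt.differentiableAt.continuousAt
    obtain ⟨δ₂, hδ₂pos, hδ₂⟩ := Metric.continuousAt_iff.1 hfb ε' hε'
    set η := min (min ρ ε') (min (δ₁ / 2) (δ₂ / 2)) with hη
    have hηpos : 0 < η := by positivity
    obtain ⟨w, hwsupp, hwL1, hwcont, hwint⟩ :=
      hviInt.exists_hasCompactSupport_integral_sub_le hηpos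
    set D := ∫ x, ‖vi x - w x‖ with hD
    have hDnn : 0 ≤ D := integral_nonneg fun x => norm_nonneg _
    have hDη : D ≤ η := hwL1
    -- the approximate flow
    set Φw : ℝ → EuclideanSpace ℝ (Fin 𝔡) := fun t => Φ a - ∫ u in a..t, w u with hΦw
    have hΦwa : Φw a = Φ a := by simp [hΦw]
    -- interval integrability of v and w on subintervals
    have hvt : ∀ t ∈ Set.Icc a b, IntervalIntegrable v volume a t := by
      intro t ht
      apply IntegrableOn.intervalIntegrable
      rw [Set.uIcc_of_le ht.1]
      exact hv.mono_set (Set.Icc_subset_Icc le_rfl ht.2)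
    -- closeness
    have hclose : ∀ t ∈ Set.Icc a b, dist (Φw t) (Φ t) ≤ D := by
      intro t ht
      have hsub : Set.Ioc a t ⊆ Set.Icc a b :=
        Set.Ioc_subset_Icc_self.trans (Set.Icc_subset_Icc le_rfl ht.2)
      rw [dist_eq_norm, hΦ t ht]
      have heq : Φw t - (Φ a - ∫ u in a..t, v u) = ∫ u in a..t, (v u - w u) := by
        rw [intervalIntegral.integral_sub (hvt t ht) (hwcont.intervalIntegrable a t)]
        simp [hΦw]
      rw [heq]
      calc ‖∫ u in a..t, (v u - w u)‖ ≤ ∫ u in a..t, ‖v u - w u‖ :=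
            intervalIntegral.norm_integral_le_integral_norm ht.1
        _ = ∫ u in Set.Ioc a t, ‖v u - w u‖ := by
            rw [intervalIntegral.integral_of_le ht.1]
        _ = ∫ u in Set.Ioc a t, ‖vi u - w u‖ := by
            refine setIntegral_congr_fun measurableSet_Ioc fun u hu => ?_
            rw [hvi, Set.indicator_of_mem (hsub hu)]
        _ ≤ D := by
            rw [hD]
            exact setIntegral_le_integral (hviInt.sub hwint).norm
              (Filter.Eventually.of_forall fun x => norm_nonneg _)
    have hcloseη : ∀ t ∈ Set.Icc a b, dist (Φw t) (Φ t) ≤ η := fun t ht =>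
      (hclose t ht).trans hDη
    -- Φw stays in K1 ⊆ U
    have hΦwK1 : ∀ t ∈ Set.Icc a b, Φw t ∈ K1 := by
      intro t ht
      refine Metric.mem_cthickening_of_dist_le (Φw t) (Φ t) ρ K0 ⟨t, ht, rfl⟩ ?_
      calc dist (Φw t) (Φ t) ≤ η := hcloseη t ht
        _ ≤ ρ := (min_le_left _ _).trans (min_le_left _ _)
    have hΦwU : ∀ t ∈ Set.Icc a b, Φw t ∈ U := fun t ht => hK1U (hΦwK1 t ht)
    -- FTC for the approximate flow
    have hΦwcont : Continuous Φw :=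
      continuous_const.sub (intervalIntegral.continuous_primitive
        (fun c d => hwcont.intervalIntegrable c d) a)
    have hFTC : f (Φw b) = f (Φ a) - ∫ u in a..b, ⟪g (Φw u), w u⟫ := by
      have hderiv : ∀ t ∈ Set.uIcc a b,
          HasDerivAt (fun u => f (Φw u)) (-⟪g (Φw t), w t⟫) t := by
        intro t ht
        rw [huIcc] at ht
        have h1 : HasDerivAt (fun u => ∫ x in a..u, w x) (w t) t :=
          intervalIntegral.integral_hasDerivAt_right (hwcont.intervalIntegrable a t)
            hwcont.stronglyMeasurable.stronglyMeasurableAtFilter hwcont.continuousAt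
        have h2 : HasDerivAt Φw (-(w t)) t := by
          simpa using (h1.const_sub (Φ a))
        have h3 := (hfg _ (hΦwU t ht)).hasFDerivAt.comp_hasDerivAt t h2
        exact h3.congr_deriv (by simp [InnerProductSpace.toDual_apply_apply, inner_neg_right])
      have hint : IntervalIntegrable (fun t => -⟪g (Φw t), w t⟫) volume a b := by
        apply ContinuousOn.intervalIntegrable
        apply ContinuousOn.neg
        exact ContinuousOn.inner
          (hg.comp hΦwcont.continuousOn (by rw [huIcc]; exact hΦwU))
          hwcont.continuousOn
      have := intervalIntegral.integral_eq_sub_of_hasDerivAt hderiv hint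
      rw [intervalIntegral.integral_neg] at this
      rw [hΦwa] at this
      linarith [this]
    -- compare the two integrals
    have hintY : IntervalIntegrable (fun u => ⟪g (Φ u), v u⟫) volume a b := by
      apply IntegrableOn.intervalIntegrable; rwa [huIcc]
    have hintX : IntervalIntegrable (fun u => ⟪g (Φw u), w u⟫) volume a b := by
      apply ContinuousOn.intervalIntegrable
      exact ContinuousOn.inner
        (hg.comp hΦwcont.continuousOn (by rw [huIcc]; exact hΦwU)) hwcont.continuousOn
    -- pointwise bound on Icc
    have hptw : ∀ u ∈ Set.Icc a b,
        ‖⟪g (Φw u), w u⟫ - ⟪g (Φ u), v u⟫‖ ≤ ε' * ‖v u‖ + (ε' + M) * ‖vi u - w u‖ := by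
      intro u hu
      have hgdist : ‖g (Φw u) - g (Φ u)‖ ≤ ε' := by
        rw [← dist_eq_norm]
        exact le_of_lt (hδ₁ _ (hΦwK1 u hu) _ (hK0K1 ⟨u, hu, rfl⟩)
          (lt_of_le_of_lt (hcloseη u hu)
            (lt_of_le_of_lt ((min_le_right _ _).trans (min_le_left _ _)) (by linarith))))
      have hwv : vi u - w u = v u - w u := by rw [hvi, Set.indicator_of_mem hu]
      have split : ⟪g (Φw u), w u⟫ - ⟪g (Φ u), v u⟫
          = ⟪g (Φw u) - g (Φ u), w u⟫ + ⟪g (Φ u), w u - v u⟫ := by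
        rw [inner_sub_left, inner_sub_right]; ring
      rw [split]
      have hwu : ‖w u‖ ≤ ‖v u‖ + ‖vi u - w u‖ := by
        rw [hwv]
        calc ‖w u‖ = ‖v u - (v u - w u)‖ := by congr 1; abel
          _ ≤ ‖v u‖ + ‖v u - w u‖ := norm_sub_le _ _
      calc ‖⟪g (Φw u) - g (Φ u), w u⟫ + ⟪g (Φ u), w u - v u⟫‖
          ≤ ‖⟪g (Φw u) - g (Φ u), w u⟫‖ + ‖⟪g (Φ u), w u - v u⟫‖ := norm_add_le _ _
        _ ≤ ‖g (Φw u) - g (Φ u)‖ * ‖w u‖ + ‖g (Φ u)‖ * ‖w u - v u‖ :=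
            add_le_add (norm_inner_le_norm _ _) (norm_inner_le_norm _ _)
        _ ≤ ε' * (‖v u‖ + ‖vi u - w u‖) + M * ‖vi u - w u‖ := by
            refine add_le_add (mul_le_mul hgdist hwu (norm_nonneg _) hε'.le) ?_
            rw [hwv, norm_sub_rev]
            exact mul_le_mul_of_nonneg_right (hM _ (hK0K1 ⟨u, hu, rfl⟩)) (norm_nonneg _)
        _ = ε' * ‖v u‖ + (ε' + M) * ‖vi u - w u‖ := by ring
    -- integral comparison
    have hIcmp : |(∫ u in a..b, ⟪g (Φw u), w u⟫) - ∫ u in a..b, ⟪g (Φ u), v u⟫|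
        ≤ ε' * I + (ε' + M) * η := by
      rw [← intervalIntegral.integral_sub hintX hintY]
      have h1 : |∫ u in a..b, (⟪g (Φw u), w u⟫ - ⟪g (Φ u), v u⟫)|
          ≤ ∫ u in a..b, ‖⟪g (Φw u), w u⟫ - ⟪g (Φ u), v u⟫‖ := by
        rw [← Real.norm_eq_abs]
        exact intervalIntegral.norm_integral_le_integral_norm hab
      refine h1.trans ?_
      have h2 : (∫ u in a..b, ‖⟪g (Φw u), w u⟫ - ⟪g (Φ u), v u⟫‖)
          ≤ ∫ u in a..b, (ε' * ‖v u‖ + (ε' + M) * ‖vi u - w u‖) := by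
        apply intervalIntegral.integral_mono_on hab
        · exact (hintX.sub hintY).norm
        · apply IntervalIntegrable.add
          · apply IntegrableOn.intervalIntegrable
            rw [huIcc]; exact hv.norm.const_mul ε'
          · apply IntervalIntegrable.const_mul
            apply Integrable.intervalIntegrable
            exact (hviInt.sub hwint).norm
        · exact hptw
      refine h2.trans ?_
      have hint1 : IntervalIntegrable (fun u => ε' * ‖v u‖) volume a b := by
        apply IntegrableOn.intervalIntegrable
        rw [huIcc]; exact hv.norm.const_mul ε'
      have hint2 : IntervalIntegrable (fun u => (ε' + M) * ‖vi u - w u‖) volume a b := by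
        apply IntervalIntegrable.const_mul
        exact Integrable.intervalIntegrable (hviInt.sub hwint).norm
      rw [intervalIntegral.integral_add hint1 hint2, intervalIntegral.integral_const_mul,
        intervalIntegral.integral_const_mul]
      refine add_le_add ?_ ?_
      · refine mul_le_mul_of_nonneg_left ?_ hε'.le
        rw [intervalIntegral.integral_of_le hab, hIdef, ← integral_Icc_eq_integral_Ioc]
      · refine mul_le_mul_of_nonneg_left ?_ (by positivity)
        calc (∫ u in a..b, ‖vi u - w u‖) = ∫ u in Set.Ioc a b, ‖vi u - w u‖ :=
            intervalIntegral.integral_of_le hab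
          _ ≤ D := setIntegral_le_integral (hviInt.sub hwint).norm
              (Filter.Eventually.of_forall fun x => norm_nonneg _)
          _ ≤ η := hDη
    -- endpoint comparison
    have hend : |f (Φ b) - f (Φw b)| ≤ ε' := by
      rw [abs_sub_comm, ← Real.dist_eq]
      apply le_of_lt
      apply hδ₂
      calc dist (Φw b) (Φ b) ≤ η := hcloseη b hbIcc
        _ ≤ δ₂ / 2 := (min_le_right _ _).trans (min_le_right _ _)
        _ < δ₂ := by linarith
    -- put together
    have hηε' : η ≤ ε' := (min_le_left _ _).trans (min_le_right _ _)
    have : f (Φ b) - (f (Φ a) - ∫ u in a..b, ⟪g (Φ u), v u⟫)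
        = (f (Φ b) - f (Φw b)) + ((∫ u in a..b, ⟪g (Φ u), v u⟫) - ∫ u in a..b, ⟪g (Φw u), w u⟫) := by
      rw [hFTC]; ring
    rw [this]
    calc |(f (Φ b) - f (Φw b)) + ((∫ u in a..b, ⟪g (Φ u), v u⟫) - ∫ u in a..b, ⟪g (Φw u), w u⟫)|
        ≤ |f (Φ b) - f (Φw b)| + |(∫ u in a..b, ⟪g (Φ u), v u⟫) - ∫ u in a..b, ⟪g (Φw u), w u⟫| :=
          abs_add_le _ _
      _ ≤ ε' + (ε' * I + (ε' + M) * η) := by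
          refine add_le_add hend ?_
          rw [abs_sub_comm]; exact hIcmp
      _ ≤ ε' + (ε' * I + (ε' + M) * ε') := by
          refine add_le_add le_rfl (add_le_add le_rfl ?_)
          exact mul_le_mul_of_nonneg_left hηε' (by positivity)
      _ ≤ ε' * (3 + I + M) := by nlinarith [hε'.le, hε'1, hM0, hInn]
  -- conclude
  have habs : |f (Φ b) - (f (Φ a) - ∫ u in a..b, ⟪g (Φ u), v u⟫)| ≤ 0 := by
    refine le_of_forall_pos_le_add fun ε hε => ?_
    have hc : (0:ℝ) < 3 + I + M := by linarith
    have hε'pos : 0 < min 1 (ε / (3 + I + M)) := by positivity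
    have h1 := key _ hε'pos (min_le_left _ _)
    have h2 : min 1 (ε / (3 + I + M)) * (3 + I + M) ≤ ε := by
      calc min 1 (ε / (3 + I + M)) * (3 + I + M) ≤ (ε / (3 + I + M)) * (3 + I + M) :=
            mul_le_mul_of_nonneg_right (min_le_right _ _) hc.le
        _ = ε := div_mul_cancel₀ _ hc.ne'
    linarith
  have hz : f (Φ b) - (f (Φ a) - ∫ u in a..b, ⟪g (Φ u), v u⟫) = 0 :=
    abs_eq_zero.mp (le_antisymm habs (abs_nonneg _))
  linarith

set_option maxHeartbeats 1600000 in
/-- Corollary 2.4 (Gradient flow dynamics on submanifolds): conservation of the `ψ k`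
along the projected flow and the energy descent identity. -/
theorem stmt2
    (𝔡 K : ℕ)
    (ψ : Fin K → EuclideanSpace ℝ (Fin 𝔡) → ℝ)
    (hψ : ∀ k, ContDiff ℝ 1 (ψ k))
    (U : Set (EuclideanSpace ℝ (Fin 𝔡)))
    (hUdef : U = {θ : EuclideanSpace ℝ (Fin 𝔡) | ∀ k : Fin K, 0 < ‖gradient (ψ k) θ‖})
    (𝓛 : EuclideanSpace ℝ (Fin 𝔡) → ℝ) (h𝓛 : ContinuousOn 𝓛 U)
    (𝒢 : EuclideanSpace ℝ (Fin 𝔡) → EuclideanSpace ℝ (Fin 𝔡))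
    (h𝒢meas : Measurable 𝒢)
    (h𝒢loc : ∀ θ ∈ U, ∃ r > (0:ℝ), ∃ C : ℝ, ∀ x ∈ Metric.ball θ r, ‖𝒢 x‖ ≤ C)
    (horth : ∀ θ ∈ U, ∀ k l : Fin K, k ≠ l →
      ⟪gradient (ψ k) θ, gradient (ψ l) θ⟫ = 0)
    (γ : ℝ → ℝ) (hγcont : ContinuousOn γ (Set.Ici 0)) (hγnonneg : ∀ t, 0 ≤ t → 0 ≤ γ t)
    (Θ : ℝ → EuclideanSpace ℝ (Fin 𝔡))
    (hΘcont : ContinuousOn Θ (Set.Ici 0))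
    (hΘU : ∀ t : ℝ, 0 ≤ t → Θ t ∈ U)
    (hflow : ∀ t : ℝ, 0 ≤ t → Θ t = Θ 0 - ∫ s in (0:ℝ)..t,
      γ s • (𝒢 (Θ s) - ∑ k : Fin K,
        ((‖gradient (ψ k) (Θ s)‖ ^ 2)⁻¹ * ⟪𝒢 (Θ s), gradient (ψ k) (Θ s)⟫) •
          gradient (ψ k) (Θ s)))
    (𝔏 : ℕ → EuclideanSpace ℝ (Fin 𝔡) → ℝ)
    (h𝔏 : ∀ r : ℕ, ContDiffOn ℝ 1 (𝔏 r) U)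
    (hbdd : ∀ Kc : Set (EuclideanSpace ℝ (Fin 𝔡)), Kc ⊆ U → IsCompact Kc →
      ∃ C : ℝ, ∀ r : ℕ, ∀ θ ∈ Kc, ‖gradient (𝔏 r) θ‖ ≤ C)
    (hlim𝓛 : ∀ θ ∈ U, Filter.Tendsto (fun r : ℕ => 𝔏 r θ) Filter.atTop (nhds (𝓛 θ)))
    (hlim𝒢 : ∀ θ ∈ U, Filter.Tendsto (fun r : ℕ => gradient (𝔏 r) θ) Filter.atTop (nhds (𝒢 θ))) :
    (∀ k : Fin K, ∀ t : ℝ, 0 ≤ t → ψ k (Θ t) = ψ k (Θ 0)) ∧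
    (∀ s t : ℝ, 0 ≤ s → s ≤ t →
      (𝓛 (Θ t) = 𝓛 (Θ s) - ∫ u in s..t,
        γ u * ‖𝒢 (Θ u) - ∑ k : Fin K,
          ((‖gradient (ψ k) (Θ u)‖ ^ 2)⁻¹ * ⟪𝒢 (Θ u), gradient (ψ k) (Θ u)⟫) •
            gradient (ψ k) (Θ u)‖ ^ 2) ∧
      𝓛 (Θ t) ≤ 𝓛 (Θ s)) := by
  have hUopen : IsOpen U := by
    rw [hUdef]
    have he : {θ : EuclideanSpace ℝ (Fin 𝔡) | ∀ k : Fin K, 0 < ‖gradient (ψ k) θ‖}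
        = ⋂ k : Fin K, {θ | 0 < ‖gradient (ψ k) θ‖} := by
      ext θ; simp [Set.mem_iInter]
    rw [he]
    exact isOpen_iInter_of_finite fun k =>
      isOpen_lt continuous_const (gradient_continuous_of_contDiff (hψ k)).norm
  set w : ℝ → EuclideanSpace ℝ (Fin 𝔡) := fun s =>
    𝒢 (Θ s) - ∑ k : Fin K,
      ((‖gradient (ψ k) (Θ s)‖ ^ 2)⁻¹ * ⟪𝒢 (Θ s), gradient (ψ k) (Θ s)⟫) •
        gradient (ψ k) (Θ s) with hwdef
  set v : ℝ → EuclideanSpace ℝ (Fin 𝔡) := fun s => γ s • w s with hvdef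
  -- nonvanishing gradients on U
  have hnz : ∀ u : ℝ, 0 ≤ u → ∀ l : Fin K, gradient (ψ l) (Θ u) ≠ 0 := by
    intro u hu l
    have h1 := hΘU u hu
    rw [hUdef] at h1
    exact norm_pos_iff.mp (h1 l)
  -- measurability
  have hmeas : ∀ T : ℝ, AEStronglyMeasurable v (volume.restrict (Set.Icc 0 T)) := by
    intro T
    have hsub : Set.Icc (0:ℝ) T ⊆ Set.Ici 0 := Set.Icc_subset_Ici_self
    have hΘm : AEStronglyMeasurable Θ (volume.restrict (Set.Icc 0 T)) :=
      (hΘcont.mono hsub).aestronglyMeasurable measurableSet_Icc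
    have hγm : AEStronglyMeasurable γ (volume.restrict (Set.Icc 0 T)) :=
      (hγcont.mono hsub).aestronglyMeasurable measurableSet_Icc
    have hGm : AEStronglyMeasurable (fun s => 𝒢 (Θ s)) (volume.restrict (Set.Icc 0 T)) :=
      (h𝒢meas.comp_aemeasurable hΘm.aemeasurable).aestronglyMeasurable
    have hgradm : ∀ k : Fin K, AEStronglyMeasurable (fun s => gradient (ψ k) (Θ s))
        (volume.restrict (Set.Icc 0 T)) := fun k =>
      (gradient_continuous_of_contDiff (hψ k)).comp_aestronglyMeasurable hΘm
    apply hγm.smul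
    apply hGm.sub
    apply Finset.aestronglyMeasurable_fun_sum
    intro k _
    have hcoef : AEStronglyMeasurable
        (fun s => (‖gradient (ψ k) (Θ s)‖ ^ 2)⁻¹ * ⟪𝒢 (Θ s), gradient (ψ k) (Θ s)⟫)
        (volume.restrict (Set.Icc 0 T)) := by
      apply AEStronglyMeasurable.mul
      · exact (((hgradm k).norm.aemeasurable.pow_const 2).inv).aestronglyMeasurable
      · exact hGm.inner (hgradm k)
    exact hcoef.smul (hgradm k)
  -- boundedness
  have hbnd : ∀ T : ℝ, 0 ≤ T → ∃ M : ℝ, ∀ u ∈ Set.Icc (0:ℝ) T, ‖v u‖ ≤ M := by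
    intro T hT
    have hA : IsCompact (Θ '' Set.Icc 0 T) :=
      isCompact_Icc.image_of_continuousOn (hΘcont.mono Set.Icc_subset_Ici_self)
    have hAU : Θ '' Set.Icc 0 T ⊆ U := by rintro _ ⟨u, hu, rfl⟩; exact hΘU u hu.1
    obtain ⟨MG, hMG⟩ := bdd_on_compact hA fun θ hθ => h𝒢loc θ (hAU hθ)
    have hMG0 : 0 ≤ MG := le_trans (norm_nonneg _) (hMG _ ⟨0, ⟨le_rfl, hT⟩, rfl⟩)
    obtain ⟨Mγ, hMγ⟩ := isCompact_Icc.exists_bound_of_continuousOn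
      (hγcont.mono (Set.Icc_subset_Ici_self : Set.Icc (0:ℝ) T ⊆ _))
    refine ⟨Mγ * ((K + 1) * MG), fun u hu => ?_⟩
    have hwb : ‖w u‖ ≤ (K + 1) * MG := by
      have hGb : ‖𝒢 (Θ u)‖ ≤ MG := hMG _ ⟨u, hu, rfl⟩
      calc ‖w u‖ ≤ ‖𝒢 (Θ u)‖ + ‖∑ k : Fin K,
            ((‖gradient (ψ k) (Θ u)‖ ^ 2)⁻¹ * ⟪𝒢 (Θ u), gradient (ψ k) (Θ u)⟫) •
              gradient (ψ k) (Θ u)‖ := norm_sub_le _ _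
        _ ≤ MG + ∑ k : Fin K, ‖((‖gradient (ψ k) (Θ u)‖ ^ 2)⁻¹ *
              ⟪𝒢 (Θ u), gradient (ψ k) (Θ u)⟫) • gradient (ψ k) (Θ u)‖ :=
            add_le_add hGb (norm_sum_le _ _)
        _ ≤ MG + ∑ _k : Fin K, MG := by
            refine add_le_add le_rfl (Finset.sum_le_sum fun k _ => ?_)
            exact (proj_term_norm_le _ _).trans hGb
        _ = MG + K * MG := by simp [Finset.sum_const, mul_comm]
        _ = (K + 1) * MG := by ring
    have : ‖v u‖ = ‖γ u‖ * ‖w u‖ := norm_smul _ _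
    rw [this]
    exact mul_le_mul (hMγ u hu) hwb (norm_nonneg _)
      (le_trans (norm_nonneg _) (hMγ u hu))
  -- integrability
  have hvint : ∀ s t : ℝ, 0 ≤ s → s ≤ t → IntegrableOn v (Set.Icc s t) := by
    intro s t hs hst
    obtain ⟨M, hM⟩ := hbnd t (hs.trans hst)
    refine Integrable.mono' (integrable_const M)
      ((hmeas t).mono_measure (Measure.restrict_mono
        (Set.Icc_subset_Icc hs le_rfl) le_rfl)) ?_
    refine (ae_restrict_iff' measurableSet_Icc).2 (Filter.Eventually.of_forall fun u hu => ?_)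
    exact hM u ⟨hs.trans hu.1, hu.2⟩
  -- flow on subintervals
  have hflow' : ∀ s t : ℝ, 0 ≤ s → s ≤ t → ∀ u ∈ Set.Icc s t,
      Θ u = Θ s - ∫ r in s..u, v r := by
    intro s t hs hst u hu
    have hu0 : 0 ≤ u := hs.trans hu.1
    have hIu : IntervalIntegrable v volume 0 u := by
      apply IntegrableOn.intervalIntegrable
      rw [Set.uIcc_of_le hu0]
      exact hvint 0 u le_rfl hu0
    have hIs : IntervalIntegrable v volume 0 s := by
      apply IntegrableOn.intervalIntegrable
      rw [Set.uIcc_of_le hs]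
      exact hvint 0 s le_rfl hs
    have hsplit : (∫ r in (0:ℝ)..u, v r) - ∫ r in (0:ℝ)..s, v r = ∫ r in s..u, v r :=
      intervalIntegral.integral_interval_sub_left hIu hIs
    rw [hflow u hu0, hflow s hs, ← hsplit]
    abel
  -- PART (i)
  have part1 : ∀ k : Fin K, ∀ t : ℝ, 0 ≤ t → ψ k (Θ t) = ψ k (Θ 0) := by
    intro k t ht
    have hF := ftcAux ht (hvint 0 t le_rfl ht) (hflow' 0 t le_rfl ht)
      isOpen_univ (fun u _ => Set.mem_univ _)
      (fun θ _ => ((hψ k).differentiable one_ne_zero θ).hasGradientAt)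
      (gradient_continuous_of_contDiff (hψ k)).continuousOn
    rw [hF]
    have hzero : Set.EqOn (fun u => ⟪gradient (ψ k) (Θ u), v u⟫) (fun _ => (0:ℝ))
        (Set.uIcc 0 t) := by
      intro u hu
      rw [Set.uIcc_of_le ht] at hu
      have hΘu : Θ u ∈ U := hΘU u hu.1
      show ⟪gradient (ψ k) (Θ u), v u⟫ = 0
      have : ⟪gradient (ψ k) (Θ u), v u⟫ = γ u * ⟪gradient (ψ k) (Θ u), w u⟫ :=
        real_inner_smul_right _ _ _
      rw [this, proj_inner_zero _ (hnz u hu.1) (fun a b hab => horth _ hΘu a b hab)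
        (𝒢 (Θ u)) k, mul_zero]
    rw [intervalIntegral.integral_congr hzero]
    simp
  refine ⟨part1, ?_⟩
  -- PART (ii)
  intro s t hs hst
  have hts : Θ t ∈ U := hΘU t (hs.trans hst)
  have hss : Θ s ∈ U := hΘU s hs
  have hr : ∀ r : ℕ, 𝔏 r (Θ t) = 𝔏 r (Θ s) -
      ∫ u in s..t, ⟪gradient (𝔏 r) (Θ u), v u⟫ := fun r =>
    ftcAux hst (hvint s t hs hst) (hflow' s t hs hst) hUopen
      (fun u hu => hΘU u (hs.trans hu.1))
      (fun θ hθ => hasGradientAt_of_contDiffOn hUopen (h𝔏 r) hθ)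
      (gradient_continuousOn_of_contDiffOn hUopen (h𝔏 r))
  have hIccsub : Set.Icc s t ⊆ Set.Ici (0:ℝ) := fun u hu => hs.trans hu.1
  have hA : IsCompact (Θ '' Set.Icc s t) :=
    isCompact_Icc.image_of_continuousOn (hΘcont.mono hIccsub)
  have hAU : Θ '' Set.Icc s t ⊆ U := by rintro _ ⟨u, hu, rfl⟩; exact hΘU u (hs.trans hu.1)
  obtain ⟨C, hC⟩ := hbdd (Θ '' Set.Icc s t) hAU hA
  have huIoc : Set.uIoc s t = Set.Ioc s t := Set.uIoc_of_le hst
  have hIocIcc : Set.Ioc s t ⊆ Set.Icc s t := Set.Ioc_subset_Icc_self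
  have hvmIoc : AEStronglyMeasurable v (volume.restrict (Set.Ioc s t)) :=
    (hmeas t).mono_measure (Measure.restrict_mono
      (Set.Ioc_subset_Icc_self.trans (Set.Icc_subset_Icc hs le_rfl)) le_rfl)
  have hDCT : Filter.Tendsto (fun r : ℕ => ∫ u in s..t, ⟪gradient (𝔏 r) (Θ u), v u⟫)
      Filter.atTop (nhds (∫ u in s..t, ⟪𝒢 (Θ u), v u⟫)) := by
    apply intervalIntegral.tendsto_integral_filter_of_dominated_convergence
      (fun u => C * ‖v u‖)
    · refine Filter.Eventually.of_forall fun r => ?_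
      rw [huIoc]
      have hgradΘ : ContinuousOn (fun u => gradient (𝔏 r) (Θ u)) (Set.Ioc s t) :=
        (gradient_continuousOn_of_contDiffOn hUopen (h𝔏 r)).comp
          (hΘcont.mono (hIocIcc.trans hIccsub))
          (fun u hu => hΘU u (hs.trans hu.1.le))
      exact (hgradΘ.aestronglyMeasurable measurableSet_Ioc).inner hvmIoc
    · refine Filter.Eventually.of_forall fun r => ?_
      rw [huIoc]
      refine Filter.Eventually.of_forall fun u hu => ?_
      calc ‖⟪gradient (𝔏 r) (Θ u), v u⟫‖ ≤ ‖gradient (𝔏 r) (Θ u)‖ * ‖v u‖ :=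
            norm_inner_le_norm _ _
        _ ≤ C * ‖v u‖ := mul_le_mul_of_nonneg_right
            (hC r _ ⟨u, hIocIcc hu, rfl⟩) (norm_nonneg _)
    · apply IntegrableOn.intervalIntegrable
      rw [Set.uIcc_of_le hst]
      exact (hvint s t hs hst).norm.const_mul C
    · rw [huIoc]
      refine Filter.Eventually.of_forall fun u hu => ?_
      exact (hlim𝒢 _ (hΘU u (hs.trans hu.1.le))).inner tendsto_const_nhds
  have h1 : Filter.Tendsto (fun r : ℕ => 𝔏 r (Θ t)) Filter.atTop (nhds (𝓛 (Θ t))) :=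
    hlim𝓛 _ hts
  have h2 : Filter.Tendsto (fun r : ℕ => 𝔏 r (Θ s) - ∫ u in s..t, ⟪gradient (𝔏 r) (Θ u), v u⟫)
      Filter.atTop (nhds (𝓛 (Θ s) - ∫ u in s..t, ⟪𝒢 (Θ u), v u⟫)) :=
    (hlim𝓛 _ hss).sub hDCT
  have h1' : Filter.Tendsto (fun r : ℕ => 𝔏 r (Θ s) - ∫ u in s..t, ⟪gradient (𝔏 r) (Θ u), v u⟫)
      Filter.atTop (nhds (𝓛 (Θ t))) := by
    have hfe : (fun r : ℕ => 𝔏 r (Θ t))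
        = fun r : ℕ => 𝔏 r (Θ s) - ∫ u in s..t, ⟪gradient (𝔏 r) (Θ u), v u⟫ :=
      funext hr
    rwa [hfe] at h1
  have heq : 𝓛 (Θ t) = 𝓛 (Θ s) - ∫ u in s..t, ⟪𝒢 (Θ u), v u⟫ :=
    tendsto_nhds_unique h1' h2
  have hcongr : Set.EqOn (fun u => ⟪𝒢 (Θ u), v u⟫)
      (fun u => γ u * ‖𝒢 (Θ u) - ∑ k : Fin K,
        ((‖gradient (ψ k) (Θ u)‖ ^ 2)⁻¹ * ⟪𝒢 (Θ u), gradient (ψ k) (Θ u)⟫) •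
          gradient (ψ k) (Θ u)‖ ^ 2) (Set.uIcc s t) := by
    intro u hu
    rw [Set.uIcc_of_le hst] at hu
    have hu0 : 0 ≤ u := hs.trans hu.1
    have hΘu : Θ u ∈ U := hΘU u hu0
    show ⟪𝒢 (Θ u), v u⟫ = _
    have hsr : ⟪𝒢 (Θ u), v u⟫ = γ u * ⟪𝒢 (Θ u), w u⟫ := real_inner_smul_right _ _ _
    rw [hsr, proj_inner_self _ (hnz u hu0) (fun a b hab => horth _ hΘu a b hab) (𝒢 (Θ u))]
  have hinteq : (∫ u in s..t, ⟪𝒢 (Θ u), v u⟫)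
      = ∫ u in s..t, γ u * ‖𝒢 (Θ u) - ∑ k : Fin K,
        ((‖gradient (ψ k) (Θ u)‖ ^ 2)⁻¹ * ⟪𝒢 (Θ u), gradient (ψ k) (Θ u)⟫) •
          gradient (ψ k) (Θ u)‖ ^ 2 :=
    intervalIntegral.integral_congr hcongr
  have hnonneg : 0 ≤ ∫ u in s..t, γ u * ‖𝒢 (Θ u) - ∑ k : Fin K,
      ((‖gradient (ψ k) (Θ u)‖ ^ 2)⁻¹ * ⟪𝒢 (Θ u), gradient (ψ k) (Θ u)⟫) •
        gradient (ψ k) (Θ u)‖ ^ 2 := by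
    apply intervalIntegral.integral_nonneg hst
    intro u hu
    exact mul_nonneg (hγnonneg u (hs.trans hu.1)) (sq_nonneg _)
  constructor
  · rw [heq, hinteq]
  · rw [heq, hinteq]; linarith
end

section
/- Let 𝔡, K ∈ ℕ, for every k ∈ {1,…,K} let ψ_k : ℝ^𝔡 → ℝ be continuously differentiable, let U = {θ ∈ ℝ^𝔡 : min_{k∈{1,…,K}} ‖(∇ψ_k)(θ)‖ > 0}, let 𝓛 ∈ C¹(U,ℝ), assume for all θ ∈ U and all k, l ∈ {1,…,K} with k ≠ l that ⟨(∇ψ_k)(θ), (∇ψ_l)(θ)⟩ = 0, and let γ ∈ C([0,∞),[0,∞)) and Θ ∈ C([0,∞),U) satisfy for all t ∈ [0,∞) that Θ_t = Θ_0 − ∫₀ᵗ γ(s) ( (∇𝓛)(Θ_s) − Σ_{k=1}^K ‖(∇ψ_k)(Θ_s)‖⁻² ⟨(∇𝓛)(Θ_s), (∇ψ_k)(Θ_s)⟩ (∇ψ_k)(Θ_s) ) ds. Then (i) for all k ∈ {1,…,K} and all t ∈ [0,∞) it holds that ψ_k(Θ_t) = ψ_k(Θ_0), and (ii) for all s, t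 ∈ [0,∞) with s ≤ t it holds that 𝓛(Θ_t) = 𝓛(Θ_s) − ∫_s^t γ(u) ‖ (∇𝓛)(Θ_u) − Σ_{k=1}^K ‖(∇ψ_k)(Θ_u)‖⁻² ⟨(∇𝓛)(Θ_u), (∇ψ_k)(Θ_u)⟩ (∇ψ_k)(Θ_u) ‖² du ≤ 𝓛(Θ_s). -/
open MeasureTheory
open scoped RealInnerProductSpace

/-- Corollary 2.5 (Gradient flow dynamics on submanifolds, differentiable case). -/
theorem stmt3
    (𝔡 K : ℕ)
    (ψ : Fin K → EuclideanSpace ℝ (Fin 𝔡) → ℝ)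
    (hψ : ∀ k, ContDiff ℝ 1 (ψ k))
    (U : Set (EuclideanSpace ℝ (Fin 𝔡)))
    (hUdef : U = {θ : EuclideanSpace ℝ (Fin 𝔡) | ∀ k : Fin K, 0 < ‖gradient (ψ k) θ‖})
    (𝓛 : EuclideanSpace ℝ (Fin 𝔡) → ℝ) (h𝓛 : ContDiffOn ℝ 1 𝓛 U)
    (horth : ∀ θ ∈ U, ∀ k l : Fin K, k ≠ l →
      ⟪gradient (ψ k) θ, gradient (ψ l) θ⟫ = 0)
    (γ : ℝ → ℝ) (hγcont : ContinuousOn γ (Set.Ici 0)) (hγnonneg : ∀ t, 0 ≤ t → 0 ≤ γ t)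
    (Θ : ℝ → EuclideanSpace ℝ (Fin 𝔡))
    (hΘcont : ContinuousOn Θ (Set.Ici 0))
    (hΘU : ∀ t : ℝ, 0 ≤ t → Θ t ∈ U)
    (hflow : ∀ t : ℝ, 0 ≤ t → Θ t = Θ 0 - ∫ s in (0:ℝ)..t,
      γ s • (gradient 𝓛 (Θ s) - ∑ k : Fin K,
        ((‖gradient (ψ k) (Θ s)‖ ^ 2)⁻¹ * ⟪gradient 𝓛 (Θ s), gradient (ψ k) (Θ s)⟫) •
          gradient (ψ k) (Θ s))) :
    (∀ k : Fin K, ∀ t : ℝ, 0 ≤ t → ψ k (Θ t) = ψ k (Θ 0)) ∧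
    (∀ s t : ℝ, 0 ≤ s → s ≤ t →
      (𝓛 (Θ t) = 𝓛 (Θ s) - ∫ u in s..t,
        γ u * ‖gradient 𝓛 (Θ u) - ∑ k : Fin K,
          ((‖gradient (ψ k) (Θ u)‖ ^ 2)⁻¹ * ⟪gradient 𝓛 (Θ u), gradient (ψ k) (Θ u)⟫) •
            gradient (ψ k) (Θ u)‖ ^ 2) ∧
      𝓛 (Θ t) ≤ 𝓛 (Θ s)) := by
  have hE : True := trivial
  set V : EuclideanSpace ℝ (Fin 𝔡) → EuclideanSpace ℝ (Fin 𝔡) := fun θ => gradient 𝓛 θ - ∑ k : Fin K,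
      ((‖gradient (ψ k) θ‖ ^ 2)⁻¹ * ⟪gradient 𝓛 θ, gradient (ψ k) θ⟫) • gradient (ψ k) θ
    with hV
  set f : ℝ → EuclideanSpace ℝ (Fin 𝔡) := fun s => γ s • V (Θ s) with hf
  -- continuity of gradients of ψ
  have hgradψ : ∀ k, Continuous (fun θ => gradient (ψ k) θ) := by
    intro k
    have h1 : Continuous (fderiv ℝ (ψ k)) := (hψ k).continuous_fderiv one_ne_zero
    exact (InnerProductSpace.toDual ℝ (EuclideanSpace ℝ (Fin 𝔡))).symm.continuous.comp h1
  -- U open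
  have hUopen : IsOpen U := by
    rw [hUdef]
    have : {θ : EuclideanSpace ℝ (Fin 𝔡) | ∀ k : Fin K, 0 < ‖gradient (ψ k) θ‖}
        = ⋂ k : Fin K, {θ : EuclideanSpace ℝ (Fin 𝔡) | 0 < ‖gradient (ψ k) θ‖} := by
      ext θ; simp
    rw [this]
    exact isOpen_iInter_of_finite fun k =>
      isOpen_lt continuous_const ((hgradψ k).norm)
  -- continuity of gradient 𝓛 on U
  have hgrad𝓛 : ContinuousOn (fun θ => gradient 𝓛 θ) U := by
    have h1 : ContinuousOn (fderiv ℝ 𝓛) U := h𝓛.continuousOn_fderiv_of_isOpen hUopen le_rfl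
    exact ((InnerProductSpace.toDual ℝ (EuclideanSpace ℝ (Fin 𝔡))).symm.continuous.comp_continuousOn h1)
  -- continuity of V on U
  have hVcont : ContinuousOn V U := by
    apply ContinuousOn.sub hgrad𝓛
    apply continuousOn_finset_sum
    intro k _
    apply ContinuousOn.fun_smul _ (hgradψ k).continuousOn
    apply ContinuousOn.fun_mul
    · refine ((hgradψ k).norm.pow 2).continuousOn.inv₀ ?_
      intro θ hθ
      rw [hUdef] at hθ
      exact pow_ne_zero 2 (ne_of_gt (hθ k))
    · exact ContinuousOn.inner hgrad𝓛 (hgradψ k).continuousOn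
  -- continuity of f on [0, ∞)
  have hfcont : ContinuousOn f (Set.Ici 0) :=
    hγcont.smul (hVcont.comp hΘcont fun t ht => hΘU t ht)
  -- key inner product identities
  have hkey1 : ∀ θ ∈ U, ∀ k : Fin K, ⟪gradient (ψ k) θ, V θ⟫ = 0 := by
    intro θ hθ k
    have hθ' := hθ
    rw [hUdef] at hθ'
    have hne : ‖gradient (ψ k) θ‖ ≠ 0 := ne_of_gt (hθ' k)
    rw [hV]
    simp only [inner_sub_right, inner_sum, real_inner_smul_right]
    rw [Finset.sum_eq_single k]
    · rw [real_inner_self_eq_norm_sq, real_inner_comm (gradient 𝓛 θ)]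
      field_simp
      ring
    · intro l _ hlk
      rw [horth θ hθ k l (Ne.symm hlk)]; ring
    · simp
  have hkey2 : ∀ θ ∈ U, ⟪gradient 𝓛 θ, V θ⟫ = ‖V θ‖ ^ 2 := by
    intro θ hθ
    have : ⟪V θ, V θ⟫ = ⟪gradient 𝓛 θ, V θ⟫ := by
      nth_rewrite 1 [hV]
      simp only [inner_sub_left, sum_inner, real_inner_smul_left]
      rw [Finset.sum_eq_zero, sub_zero]
      intro k _
      rw [hkey1 θ hθ k]; ring
    rw [← this, real_inner_self_eq_norm_sq]
  -- derivative of Θ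
  have hΘderiv : ∀ t : ℝ, 0 ≤ t → HasDerivWithinAt Θ (-(f t)) (Set.Ici t) t := by
    intro t ht
    have hint : IntervalIntegrable f volume 0 t := by
      apply ContinuousOn.intervalIntegrable
      apply hfcont.mono
      rw [Set.uIcc_of_le ht]
      exact Set.Icc_subset_Ici_self
    have hmeas : StronglyMeasurableAtFilter f (nhdsWithin t (Set.Ioi t)) volume :=
      ⟨Set.Ici (0:ℝ),
        Filter.mem_of_superset self_mem_nhdsWithin
          (Set.Ioi_subset_Ici_self.trans (Set.Ici_subset_Ici.2 ht)),
        hfcont.aestronglyMeasurable measurableSet_Ici⟩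
    have hcw : ContinuousWithinAt f (Set.Ioi t) t :=
      ((hfcont t ht).mono (Set.Ici_subset_Ici.2 ht)).mono Set.Ioi_subset_Ici_self
    have hF : HasDerivWithinAt (fun u => ∫ x in (0:ℝ)..u, f x) (f t) (Set.Ici t) t :=
      intervalIntegral.integral_hasDerivWithinAt_right hint hmeas hcw
    have hF' : HasDerivWithinAt (fun u => Θ 0 - ∫ x in (0:ℝ)..u, f x) (-(f t)) (Set.Ici t) t := by
      simpa using (hasDerivWithinAt_const t (Set.Ici t) (Θ 0)).fun_sub hF
    apply hF'.congr
    · intro u hu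
      exact hflow u (le_trans ht hu)
    · exact hflow t ht
  -- chain rules
  have hψderiv : ∀ (k : Fin K) (t : ℝ), 0 ≤ t →
      HasDerivWithinAt (fun u => ψ k (Θ u)) 0 (Set.Ici t) t := by
    intro k t ht
    have hg : HasGradientAt (ψ k) (gradient (ψ k) (Θ t)) (Θ t) :=
      ((hψ k).differentiable one_ne_zero (Θ t)).hasGradientAt
    have := hg.hasFDerivAt.comp_hasDerivWithinAt t (hΘderiv t ht)
    have hval : (InnerProductSpace.toDual ℝ (EuclideanSpace ℝ (Fin 𝔡)) (gradient (ψ k) (Θ t))) (-(f t)) = 0 := by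
      rw [InnerProductSpace.toDual_apply_apply, inner_neg_right, hf]
      simp only [real_inner_smul_right]
      rw [hkey1 (Θ t) (hΘU t ht) k]
      ring
    rwa [hval] at this
  have h𝓛deriv : ∀ t : ℝ, 0 ≤ t →
      HasDerivWithinAt (fun u => 𝓛 (Θ u)) (-(γ t * ‖V (Θ t)‖ ^ 2)) (Set.Ici t) t := by
    intro t ht
    have hdiff : DifferentiableAt ℝ 𝓛 (Θ t) :=
      (h𝓛.differentiableOn one_ne_zero).differentiableAt (hUopen.mem_nhds (hΘU t ht))
    have hg : HasGradientAt 𝓛 (gradient 𝓛 (Θ t)) (Θ t) := hdiff.hasGradientAt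
    have := hg.hasFDerivAt.comp_hasDerivWithinAt t (hΘderiv t ht)
    have hval : (InnerProductSpace.toDual ℝ (EuclideanSpace ℝ (Fin 𝔡)) (gradient 𝓛 (Θ t))) (-(f t))
        = -(γ t * ‖V (Θ t)‖ ^ 2) := by
      rw [InnerProductSpace.toDual_apply_apply, inner_neg_right, hf]
      simp only [real_inner_smul_right]
      rw [hkey2 (Θ t) (hΘU t ht)]
    rwa [hval] at this
  constructor
  · -- part (i)
    intro k t ht
    have hcont : ContinuousOn (fun u => ψ k (Θ u)) (Set.Icc 0 t) :=
      (hψ k).continuous.comp_continuousOn (hΘcont.mono Set.Icc_subset_Ici_self)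
    have := constant_of_has_deriv_right_zero hcont
      (fun x hx => hψderiv k x hx.1) t (Set.right_mem_Icc.2 ht)
    exact this
  · -- part (ii)
    intro s t hs hst
    set g : ℝ → ℝ := fun u => γ u * ‖V (Θ u)‖ ^ 2 with hg
    have hgcont : ContinuousOn g (Set.Ici 0) :=
      hγcont.mul (((hVcont.comp hΘcont fun u hu => hΘU u hu).norm).pow 2)
    have hconst : ∀ x ∈ Set.Icc s t, 𝓛 (Θ x) + ∫ v in s..x, g v = 𝓛 (Θ s) := by
      have hcont𝓛 : ContinuousOn (fun u => 𝓛 (Θ u)) (Set.Icc s t) :=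
        h𝓛.continuousOn.comp (hΘcont.mono fun x hx => le_trans hs hx.1)
          (fun x hx => hΘU x (le_trans hs hx.1))
      have hintst : IntervalIntegrable g volume s t := by
        apply ContinuousOn.intervalIntegrable
        apply hgcont.mono
        rw [Set.uIcc_of_le hst]
        exact fun v hv => le_trans hs hv.1
      have hcontI : ContinuousOn (fun u => ∫ v in s..u, g v) (Set.Icc s t) := by
        rw [← Set.uIcc_of_le hst]
        exact intervalIntegral.continuousOn_primitive_interval' hintst
          (by rw [Set.uIcc_of_le hst]; exact Set.left_mem_Icc.2 hst)
      have hc := constant_of_has_deriv_right_zero (hcont𝓛.add hcontI) ?_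
      · intro x hx
        have := hc x hx
        simpa using this
      intro x hx
      have hx0 : (0:ℝ) ≤ x := le_trans hs hx.1
      have hint : IntervalIntegrable g volume s x := by
        apply ContinuousOn.intervalIntegrable
        apply hgcont.mono
        rw [Set.uIcc_of_le hx.1]
        exact fun v hv => le_trans hs hv.1
      have hmeas : StronglyMeasurableAtFilter g (nhdsWithin x (Set.Ioi x)) volume :=
        ⟨Set.Ici (0:ℝ),
          Filter.mem_of_superset self_mem_nhdsWithin
            (Set.Ioi_subset_Ici_self.trans (Set.Ici_subset_Ici.2 hx0)),
          hgcont.aestronglyMeasurable measurableSet_Ici⟩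
      have hcw : ContinuousWithinAt g (Set.Ioi x) x :=
        ((hgcont x hx0).mono (Set.Ici_subset_Ici.2 hx0)).mono Set.Ioi_subset_Ici_self
      have hI : HasDerivWithinAt (fun u => ∫ v in s..u, g v) (g x) (Set.Ici x) x :=
        intervalIntegral.integral_hasDerivWithinAt_right hint hmeas hcw
      have := (h𝓛deriv x hx0).add hI
      simpa [hg] using this
    have heq : 𝓛 (Θ t) = 𝓛 (Θ s) - ∫ u in s..t, g u := by
      have := hconst t (Set.right_mem_Icc.2 hst)
      linarith
    refine ⟨heq, ?_⟩
    have hnn : 0 ≤ ∫ u in s..t, g u := by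
      apply intervalIntegral.integral_nonneg hst
      intro u hu
      exact mul_nonneg (hγnonneg u (le_trans hs hu.1)) (sq_nonneg _)
    linarith
end

section
/- Let 𝔡, K ∈ ℕ, for every k ∈ {1,…,K} let ψ_k : ℝ^𝔡 → ℝ be continuously differentiable, let U = {θ ∈ ℝ^𝔡 : min_{k∈{1,…,K}} ‖(∇ψ_k)(θ)‖ > 0}, assume for all θ ∈ U and all k, l ∈ {1,…,K} with k ≠ l that ⟨(∇ψ_k)(θ), (∇ψ_l)(θ)⟩ = 0, and let γ ∈ C([0,∞),[0,∞)), 𝓛 ∈ C¹(U,ℝ), and Θ ∈ C([0,∞),U) satisfy for all t ∈ [0,∞) that γ(t) ‖ (∇𝓛)(Θ_t) − Σ_{k=1}^K ‖(∇ψ_k)(Θ_t)‖⁻² ⟨(∇𝓛)(Θ_t), (∇ψ_k)(Θ_t)⟩ (∇ψ_k)(Θ_t) ‖² = ‖(∇𝓛)(Θ_t)‖² and Θ_t = Θ_0 − ∫₀ᵗ γ(s) ( (∇𝓛)(Θ_s) − Σ_{k=1}^K ‖(∇ψ_k)(Θ_s)‖⁻² ⟨(∇𝓛)(Θ_s), (∇ψ_k)(Θ_s)⟩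 (∇ψ_k)(Θ_s) ) ds. Then (i) for all k ∈ {1,…,K} and all t ∈ [0,∞) it holds that ψ_k(Θ_t) = ψ_k(Θ_0), and (ii) for all s, t ∈ [0,∞) with s ≤ t it holds that 𝓛(Θ_t) = 𝓛(Θ_s) − ∫_s^t ‖(∇𝓛)(Θ_u)‖² du. -/
open MeasureTheory
open scoped RealInnerProductSpace

/-- Corollary 2.6 (Gradient flow dynamics on submanifolds with rescaled time):
if `γ` is chosen so that the projected gradient has the same decay of the energy as the
standard gradient flow, then the `ψ k` are conserved and the energy decreases at the
standard rate. -/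
theorem stmt4
    (𝔡 K : ℕ)
    (ψ : Fin K → EuclideanSpace ℝ (Fin 𝔡) → ℝ)
    (hψ : ∀ k, ContDiff ℝ 1 (ψ k))
    (U : Set (EuclideanSpace ℝ (Fin 𝔡)))
    (hUdef : U = {θ : EuclideanSpace ℝ (Fin 𝔡) | ∀ k : Fin K, 0 < ‖gradient (ψ k) θ‖})
    (horth : ∀ θ ∈ U, ∀ k l : Fin K, k ≠ l →
      ⟪gradient (ψ k) θ, gradient (ψ l) θ⟫ = 0)
    (γ : ℝ → ℝ) (hγcont : ContinuousOn γ (Set.Ici 0)) (hγnonneg : ∀ t, 0 ≤ t → 0 ≤ γ t)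
    (𝓛 : EuclideanSpace ℝ (Fin 𝔡) → ℝ) (h𝓛 : ContDiffOn ℝ 1 𝓛 U)
    (Θ : ℝ → EuclideanSpace ℝ (Fin 𝔡))
    (hΘcont : ContinuousOn Θ (Set.Ici 0))
    (hΘU : ∀ t : ℝ, 0 ≤ t → Θ t ∈ U)
    (hγeq : ∀ t : ℝ, 0 ≤ t →
      γ t * ‖gradient 𝓛 (Θ t) - ∑ k : Fin K,
        ((‖gradient (ψ k) (Θ t)‖ ^ 2)⁻¹ * ⟪gradient 𝓛 (Θ t), gradient (ψ k) (Θ t)⟫) •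
          gradient (ψ k) (Θ t)‖ ^ 2 = ‖gradient 𝓛 (Θ t)‖ ^ 2)
    (hflow : ∀ t : ℝ, 0 ≤ t → Θ t = Θ 0 - ∫ s in (0:ℝ)..t,
      γ s • (gradient 𝓛 (Θ s) - ∑ k : Fin K,
        ((‖gradient (ψ k) (Θ s)‖ ^ 2)⁻¹ * ⟪gradient 𝓛 (Θ s), gradient (ψ k) (Θ s)⟫) •
          gradient (ψ k) (Θ s))) :
    (∀ k : Fin K, ∀ t : ℝ, 0 ≤ t → ψ k (Θ t) = ψ k (Θ 0)) ∧
    (∀ s t : ℝ, 0 ≤ s → s ≤ t →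
      𝓛 (Θ t) = 𝓛 (Θ s) - ∫ u in s..t, ‖gradient 𝓛 (Θ u)‖ ^ 2) := by
  classical
  -- the projected gradient
  set P : EuclideanSpace ℝ (Fin 𝔡) → EuclideanSpace ℝ (Fin 𝔡) := fun θ => gradient 𝓛 θ - ∑ k : Fin K,
      ((‖gradient (ψ k) θ‖ ^ 2)⁻¹ * ⟪gradient 𝓛 θ, gradient (ψ k) θ⟫) •
        gradient (ψ k) θ with hP
  set v : ℝ → EuclideanSpace ℝ (Fin 𝔡) := fun s => γ s • P (Θ s) with hv
  -- continuity of gradients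
  have hgψcont : ∀ k, Continuous (gradient (ψ k)) := by
    intro k
    have h1 : Continuous (fderiv ℝ (ψ k)) := (hψ k).continuous_fderiv one_ne_zero
    exact (InnerProductSpace.toDual ℝ (EuclideanSpace ℝ (Fin 𝔡))).symm.continuous.comp h1
  have hUopen : IsOpen U := by
    rw [hUdef]
    have : {θ : EuclideanSpace ℝ (Fin 𝔡) | ∀ k : Fin K, 0 < ‖gradient (ψ k) θ‖} =
        ⋂ k : Fin K, {θ : EuclideanSpace ℝ (Fin 𝔡) | 0 < ‖gradient (ψ k) θ‖} := by
      ext θ; simp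
    rw [this]
    exact isOpen_iInter_of_finite fun k =>
      isOpen_lt continuous_const ((hgψcont k).norm)
  have hg𝓛cont : ContinuousOn (gradient 𝓛) U := by
    have h1 : ContinuousOn (fderiv ℝ 𝓛) U :=
      h𝓛.continuousOn_fderiv_of_isOpen hUopen le_rfl
    exact (InnerProductSpace.toDual ℝ (EuclideanSpace ℝ (Fin 𝔡))).symm.continuous.comp_continuousOn h1
  have h𝓛diff : ∀ θ ∈ U, DifferentiableAt ℝ 𝓛 θ := fun θ hθ =>
    (h𝓛.differentiableOn one_ne_zero θ hθ).differentiableAt (hUopen.mem_nhds hθ)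
  have hψnorm : ∀ θ ∈ U, ∀ k : Fin K, gradient (ψ k) θ ≠ 0 := by
    intro θ hθ k
    rw [hUdef] at hθ
    have := hθ k
    simpa using (norm_pos_iff.mp this)
  -- continuity of P on U
  have hPcont : ContinuousOn P U := by
    apply ContinuousOn.sub hg𝓛cont
    apply continuousOn_finset_sum
    intro k _
    refine ContinuousOn.smul (f := fun a => (‖gradient (ψ k) a‖ ^ 2)⁻¹ * ⟪gradient 𝓛 a, gradient (ψ k) a⟫) ?_ (hgψcont k).continuousOn
    apply ContinuousOn.mul
    · apply ContinuousOn.inv₀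
      · exact ((hgψcont k).norm.pow 2).continuousOn
      · intro θ hθ
        exact pow_ne_zero 2 (norm_ne_zero_iff.mpr (hψnorm θ hθ k))
    · exact ContinuousOn.inner hg𝓛cont (hgψcont k).continuousOn
  have hΘmaps : Set.MapsTo Θ (Set.Ici 0) U := fun t ht => hΘU t ht
  have hvcont : ContinuousOn v (Set.Ici (0:ℝ)) :=
    ContinuousOn.smul hγcont (hPcont.comp hΘcont hΘmaps)
  -- extend v continuously to all of ℝ
  set w : ℝ → EuclideanSpace ℝ (Fin 𝔡) := fun s => v (max s 0) with hw
  have hwcont : Continuous w := by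
    apply hvcont.comp_continuous (continuous_id.max continuous_const)
    intro x; exact le_max_right x 0
  have hweq : ∀ s : ℝ, 0 ≤ s → w s = v s := by
    intro s hs; simp [hw, max_eq_left hs]
  have hΘeq : ∀ t : ℝ, 0 ≤ t → Θ t = Θ 0 - ∫ s in (0:ℝ)..t, w s := by
    intro t ht
    rw [hflow t ht]
    congr 1
    apply intervalIntegral.integral_congr
    intro s hs
    rw [Set.uIcc_of_le ht] at hs
    exact (hweq s hs.1).symm
  -- the derivative of Θ
  have hΘderiv : ∀ t : ℝ, 0 ≤ t → HasDerivWithinAt Θ (-(v t)) (Set.Ici 0) t := by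
    intro t ht
    have hF : HasDerivAt (fun u => Θ 0 - ∫ s in (0:ℝ)..u, w s) (-(w t)) t := by
      have := (hwcont.integral_hasStrictDerivAt 0 t).hasDerivAt
      simpa using this.const_sub (Θ 0)
    have := hF.hasDerivWithinAt (s := Set.Ici 0)
    rw [hweq t ht] at this
    apply this.congr
    · intro u hu; exact hΘeq u hu
    · exact hΘeq t ht
  -- key orthogonality: ⟪gradient ψ k θ, P θ⟫ = 0 on U
  have hkey1 : ∀ θ ∈ U, ∀ k : Fin K, ⟪gradient (ψ k) θ, P θ⟫ = 0 := by
    intro θ hθ k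
    rw [hP]
    simp only [inner_sub_right, inner_sum, real_inner_smul_right]
    rw [Finset.sum_eq_single k]
    · rw [real_inner_self_eq_norm_sq]
      have hnk : ‖gradient (ψ k) θ‖ ^ 2 ≠ 0 :=
        pow_ne_zero 2 (norm_ne_zero_iff.mpr (hψnorm θ hθ k))
      rw [real_inner_comm (gradient 𝓛 θ)]
      field_simp
      rw [div_self (norm_ne_zero_iff.mpr (hψnorm θ hθ k))]
      ring
    · intro l _ hl
      rw [horth θ hθ k l (Ne.symm hl)]
      ring
    · intro h; exact absurd (Finset.mem_univ k) h
  have hkey2 : ∀ θ ∈ U, ⟪gradient 𝓛 θ, P θ⟫ = ‖P θ‖ ^ 2 := by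
    intro θ hθ
    have hdecomp : gradient 𝓛 θ = P θ + ∑ k : Fin K,
        ((‖gradient (ψ k) θ‖ ^ 2)⁻¹ * ⟪gradient 𝓛 θ, gradient (ψ k) θ⟫) •
          gradient (ψ k) θ := by
      rw [hP]; module
    rw [hdecomp, inner_add_left, real_inner_self_eq_norm_sq, sum_inner]
    have : ∀ k ∈ Finset.univ, ⟪((‖gradient (ψ k) θ‖ ^ 2)⁻¹ *
        ⟪gradient 𝓛 θ, gradient (ψ k) θ⟫) • gradient (ψ k) θ, P θ⟫ = 0 := by
      intro k _
      rw [real_inner_smul_left, hkey1 θ hθ k]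
      ring
    rw [Finset.sum_congr rfl this]
    simp
  constructor
  · -- part (i)
    intro k t ht
    rcases eq_or_lt_of_le ht with h | h
    · rw [← h]
    have := constant_of_has_deriv_right_zero
      (f := fun u => ψ k (Θ u)) (a := 0) (b := t)
      (((hψ k).continuous.comp_continuousOn
        (hΘcont.mono Set.Icc_subset_Ici_self)))
      ?_ t (Set.right_mem_Icc.mpr ht)
    · exact this
    · intro x hx
      have hx0 : (0:ℝ) ≤ x := hx.1
      have hΘ' : HasDerivWithinAt Θ (-(v x)) (Set.Ici x) x :=
        (hΘderiv x hx0).mono (Set.Ici_subset_Ici.mpr hx0)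
      have hgrad : HasGradientAt (ψ k) (gradient (ψ k) (Θ x)) (Θ x) :=
        (((hψ k).differentiable one_ne_zero) (Θ x)).hasGradientAt
      have hcomp := hgrad.hasFDerivAt.comp_hasDerivWithinAt x hΘ'
      have hval : (InnerProductSpace.toDual ℝ (EuclideanSpace ℝ (Fin 𝔡)) (gradient (ψ k) (Θ x))) (-(v x)) = 0 := by
        rw [InnerProductSpace.toDual_apply_apply, inner_neg_right, hv]
        simp only [real_inner_smul_right]
        rw [hkey1 (Θ x) (hΘU x hx0) k]
        ring
      rw [hval] at hcomp
      exact hcomp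
  · -- part (ii)
    intro s t hs hst
    have key := intervalIntegral.integral_eq_sub_of_hasDeriv_right_of_le hst
      (f := fun u => 𝓛 (Θ u)) (f' := fun u => -‖gradient 𝓛 (Θ u)‖ ^ 2)
      ?_ ?_ ?_
    · rw [intervalIntegral.integral_neg] at key
      linarith
    · -- continuity of 𝓛 ∘ Θ on [s,t]
      apply (h𝓛.continuousOn).comp (hΘcont.mono ?_) ?_
      · exact fun u hu => le_trans hs hu.1
      · intro u hu
        exact hΘU u (le_trans hs hu.1)
    · intro x hx
      have hx0 : (0:ℝ) ≤ x := le_trans hs (le_of_lt hx.1)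
      have hΘ' : HasDerivWithinAt Θ (-(v x)) (Set.Ioi x) x :=
        (hΘderiv x hx0).mono (fun u hu => le_trans hx0 (le_of_lt hu))
      have hgrad : HasGradientAt 𝓛 (gradient 𝓛 (Θ x)) (Θ x) :=
        (h𝓛diff (Θ x) (hΘU x hx0)).hasGradientAt
      have hcomp := hgrad.hasFDerivAt.comp_hasDerivWithinAt x hΘ'
      have hval : (InnerProductSpace.toDual ℝ (EuclideanSpace ℝ (Fin 𝔡)) (gradient 𝓛 (Θ x))) (-(v x)) =
          -‖gradient 𝓛 (Θ x)‖ ^ 2 := by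
        rw [InnerProductSpace.toDual_apply_apply, inner_neg_right, hv]
        simp only [real_inner_smul_right]
        rw [hkey2 (Θ x) (hΘU x hx0), hγeq x hx0]
      rw [hval] at hcomp
      exact hcomp
    · -- integrability
      apply ContinuousOn.intervalIntegrable
      rw [Set.uIcc_of_le hst]
      apply ContinuousOn.neg
      apply ContinuousOn.pow
      apply ContinuousOn.norm
      apply hg𝓛cont.comp (hΘcont.mono ?_) ?_
      · exact fun u hu => le_trans hs hu.1
      · intro u hu
        exact hΘU u (le_trans hs hu.1)
end

section
/- For all θ ∈ ℳ (i.e., all θ = (θ₁,θ₂,θ₃) ∈ ℝ³ with θ₁² + θ₂² = 1) it holds that 𝔊₁(θ) = 2θ₃ ∫₀¹ ( θ₃(max{θ₁s+θ₂,0} − m(θ)) + f̄ − f(s) ) (θ₂² s − θ₁θ₂) 𝟙_{I^θ}(s) ds, 𝔊₂(θ) = 2θ₃ ∫₀¹ ( θ₃(max{θ₁s+θ₂,0} − m(θ)) + f̄ − f(s) ) (θ₁² − θ₁θ₂ s) 𝟙_{I^θ}(s) ds, and 𝔊₃(θ) = 2 ∫₀¹ ( θ₃(max{θ₁s+θ₂,0}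 − m(θ)) + f̄ − f(s) ) ( max{θ₁s+θ₂,0} − m(θ) ) ds. -/
open MeasureTheory Real Set
open scoped RealInnerProductSpace

/-- The mean value `f̄ = ∫₀¹ f(x) dx` of the target function. -/
noncomputable def fbar (f : ℝ → ℝ) : ℝ := ∫ s in (0:ℝ)..1, f s

/-- `m(θ) = ∫₀¹ max{θ₁ s + θ₂, 0} ds`. -/
noncomputable def mfun (θ : EuclideanSpace ℝ (Fin 3)) : ℝ :=
  ∫ s in (0:ℝ)..1, max (θ 0 * s + θ 1) 0

/-- The risk function `𝓛`. -/
noncomputable def riskL (f : ℝ → ℝ) (θ : EuclideanSpace ℝ (Fin 3)) : ℝ :=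
  ∫ s in (0:ℝ)..1, (θ 2 * (max (θ 0 * s + θ 1) 0 - mfun θ) + fbar f - f s) ^ 2

/-- `g(θ) = θ₁² + θ₂²`; the manifold `ℳ` is `g⁻¹(1)`. -/
noncomputable def gfun (θ : EuclideanSpace ℝ (Fin 3)) : ℝ := θ 0 ^ 2 + θ 1 ^ 2

/-- The activity interval `I^θ = {s ∈ [0,1] : θ₁ s + θ₂ > 0}`. -/
def Iact (θ : EuclideanSpace ℝ (Fin 3)) : Set ℝ :=
  {s ∈ Set.Icc (0:ℝ) 1 | 0 < θ 0 * s + θ 1}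

namespace Stmt5Aux

open scoped Interval

abbrev E3 := EuclideanSpace ℝ (Fin 3)

noncomputable def ell (s : ℝ) : E3 →L[ℝ] ℝ :=
  s • EuclideanSpace.proj 0 + EuclideanSpace.proj 1

lemma ell_apply (s : ℝ) (v : E3) : ell s v = v 0 * s + v 1 := by
  simp [ell, mul_comm]

noncomputable def dind (θ : E3) (s : ℝ) : ℝ := (Iact θ).indicator (fun _ => (1:ℝ)) s

noncomputable def mder (θ : E3) : E3 →L[ℝ] ℝ := ∫ s in (0:ℝ)..1, dind θ s • ell s

lemma abs_coord_le (z : E3) (i : Fin 3) : |z i| ≤ ‖z‖ := by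
  rw [EuclideanSpace.norm_eq]
  calc |z i| = Real.sqrt (‖z i‖ ^ 2) := by
        rw [Real.sqrt_sq (norm_nonneg _), Real.norm_eq_abs]
    _ ≤ _ := Real.sqrt_le_sqrt (Finset.single_le_sum
        (f := fun j => ‖z j‖ ^ 2) (fun j _ => sq_nonneg _) (Finset.mem_univ i))

lemma lin_diff (x y : E3) {s : ℝ} (hs : |s| ≤ 1) :
    |(x 0 * s + x 1) - (y 0 * s + y 1)| ≤ 2 * ‖x - y‖ := by
  have h0 : |x 0 - y 0| ≤ ‖x - y‖ := by simpa using abs_coord_le (x - y) 0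
  have h1 : |x 1 - y 1| ≤ ‖x - y‖ := by simpa using abs_coord_le (x - y) 1
  have he : (x 0 * s + x 1) - (y 0 * s + y 1) = (x 0 - y 0) * s + (x 1 - y 1) := by ring
  rw [he]
  calc |(x 0 - y 0) * s + (x 1 - y 1)| ≤ |(x 0 - y 0) * s| + |x 1 - y 1| := abs_add_le _ _
    _ = |x 0 - y 0| * |s| + |x 1 - y 1| := by rw [abs_mul]
    _ ≤ ‖x - y‖ * 1 + ‖x - y‖ :=
        add_le_add (mul_le_mul h0 hs (abs_nonneg _) (norm_nonneg _)) h1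
    _ = 2 * ‖x - y‖ := by ring

lemma relu_diff (x y : E3) {s : ℝ} (hs : |s| ≤ 1) :
    |max (x 0 * s + x 1) 0 - max (y 0 * s + y 1) 0| ≤ 2 * ‖x - y‖ :=
  le_trans (abs_max_sub_max_le_abs _ _ 0) (lin_diff x y hs)

lemma relu_cont (x : E3) : Continuous fun s : ℝ => max (x 0 * s + x 1) 0 := by fun_prop

lemma relu_intervalIntegrable (x : E3) :
    IntervalIntegrable (fun s => max (x 0 * s + x 1) 0) volume 0 1 :=
  (relu_cont x).intervalIntegrable _ _

lemma mfun_lip (x y : E3) : |mfun x - mfun y| ≤ 2 * ‖x - y‖ := by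
  have hsub : mfun x - mfun y
      = ∫ s in (0:ℝ)..1, (max (x 0 * s + x 1) 0 - max (y 0 * s + y 1) 0) :=
    (intervalIntegral.integral_sub (relu_intervalIntegrable x) (relu_intervalIntegrable y)).symm
  rw [hsub]
  have h := intervalIntegral.norm_integral_le_of_norm_le_const
    (a := 0) (b := 1) (C := 2 * ‖x - y‖)
    (f := fun s => max (x 0 * s + x 1) 0 - max (y 0 * s + y 1) 0) ?_
  · simpa using h
  · intro s hs
    rw [uIoc_of_le zero_le_one] at hs
    have hs1 : |s| ≤ 1 := abs_le.2 ⟨by linarith [hs.1], hs.2⟩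
    simpa [Real.norm_eq_abs] using relu_diff x y hs1

lemma mfun_zero : mfun (0 : E3) = 0 := by
  simp [mfun]

lemma mfun_bound (z : E3) : |mfun z| ≤ 2 * ‖z‖ := by
  simpa [mfun_zero] using mfun_lip z 0

lemma relu_bound (z : E3) {s : ℝ} (hs : |s| ≤ 1) : |max (z 0 * s + z 1) 0| ≤ 2 * ‖z‖ := by
  simpa using relu_diff z 0 hs

lemma proj_hasFDerivAt (θ : E3) (i : Fin 3) :
    HasFDerivAt (fun x : E3 => x i) (EuclideanSpace.proj i : E3 →L[ℝ] ℝ) θ :=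
  (EuclideanSpace.proj (𝕜 := ℝ) i).hasFDerivAt

lemma lin_hasFDerivAt (θ : E3) (s : ℝ) :
    HasFDerivAt (fun x : E3 => x 0 * s + x 1) (ell s) θ :=
  ((proj_hasFDerivAt θ 0).mul_const s).add (proj_hasFDerivAt θ 1)

lemma lin_continuous (s : ℝ) : Continuous fun x : E3 => x 0 * s + x 1 := by
  have h0 : Continuous fun x : E3 => x 0 := (EuclideanSpace.proj (𝕜 := ℝ) (0 : Fin 3)).continuous
  have h1 : Continuous fun x : E3 => x 1 := (EuclideanSpace.proj (𝕜 := ℝ) (1 : Fin 3)).continuous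
  exact (h0.mul continuous_const).add h1

lemma relu_hasFDerivAt (θ : E3) {s : ℝ} (hs : s ∈ Set.Icc (0:ℝ) 1)
    (hne : θ 0 * s + θ 1 ≠ 0) :
    HasFDerivAt (fun x : E3 => max (x 0 * s + x 1) 0) (dind θ s • ell s) θ := by
  rcases hne.lt_or_gt with hneg | hpos
  · have hU : IsOpen {x : E3 | x 0 * s + x 1 < 0} :=
      isOpen_lt (lin_continuous s) continuous_const
    have heq : (fun x : E3 => max (x 0 * s + x 1) 0) =ᶠ[nhds θ] fun _ => (0:ℝ) :=
      Filter.eventuallyEq_of_mem (hU.mem_nhds hneg) fun x hx => max_eq_right (le_of_lt hx)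
    have hd : dind θ s = 0 := by
      have hmem : s ∉ Iact θ := fun h => absurd h.2 (not_lt.2 hneg.le)
      simp [dind, Set.indicator_of_notMem hmem]
    rw [hd, zero_smul]
    exact (hasFDerivAt_const (0:ℝ) θ).congr_of_eventuallyEq heq
  · have hU : IsOpen {x : E3 | 0 < x 0 * s + x 1} :=
      isOpen_lt continuous_const (lin_continuous s)
    have heq : (fun x : E3 => max (x 0 * s + x 1) 0) =ᶠ[nhds θ] fun x => x 0 * s + x 1 :=
      Filter.eventuallyEq_of_mem (hU.mem_nhds hpos) fun x hx => max_eq_left (le_of_lt hx)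
    have hd : dind θ s = 1 := by
      have hmem : s ∈ Iact θ := ⟨hs, hpos⟩
      simp [dind, Set.indicator_of_mem hmem]
    rw [hd, one_smul]
    exact (lin_hasFDerivAt θ s).congr_of_eventuallyEq heq

lemma ae_ne (θ : E3) (hθ : θ 0 ≠ 0 ∨ θ 1 ≠ 0) :
    ∀ᵐ s : ℝ, θ 0 * s + θ 1 ≠ 0 := by
  by_cases h0 : θ 0 = 0
  · have h1 : θ 1 ≠ 0 := hθ.resolve_left (not_not.2 h0)
    exact Filter.Eventually.of_forall fun s => by simp [h0, h1]
  · have hsub : {s : ℝ | θ 0 * s + θ 1 = 0} ⊆ {-θ 1 / θ 0} := by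
      intro s hs
      simp only [mem_setOf_eq] at hs
      simp only [mem_singleton_iff]
      field_simp
      linarith [hs]
    have hnull : volume {s : ℝ | θ 0 * s + θ 1 = 0} = 0 :=
      measure_mono_null hsub (measure_singleton _)
    rw [ae_iff]
    simpa [not_not] using hnull


lemma meas_Iact (θ : E3) : MeasurableSet (Iact θ) := by
  have he : Iact θ = Set.Icc 0 1 ∩ {s : ℝ | 0 < θ 0 * s + θ 1} := rfl
  rw [he]
  exact measurableSet_Icc.inter (measurableSet_lt measurable_const (by fun_prop))

lemma dind_meas (θ : E3) : Measurable (dind θ) :=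
  Measurable.indicator measurable_const (meas_Iact θ)

lemma ell_cont : Continuous ell := by
  unfold ell
  exact (continuous_id.smul continuous_const).add continuous_const

lemma relu_lip_on (x y : E3) {s : ℝ} (hs : s ∈ Ι (0:ℝ) 1) :
    |max (x 0 * s + x 1) 0 - max (y 0 * s + y 1) 0| ≤ 2 * ‖x - y‖ := by
  rw [uIoc_of_le zero_le_one] at hs
  exact relu_diff x y (abs_le.2 ⟨by linarith [hs.1], hs.2⟩)

lemma mfun_deriv (θ : E3) (hθ : θ 0 ≠ 0 ∨ θ 1 ≠ 0) :
    IntervalIntegrable (fun s => dind θ s • ell s) volume 0 1 ∧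
      HasFDerivAt mfun (mder θ) θ := by
  have key := intervalIntegral.hasFDerivAt_integral_of_dominated_loc_of_lip
    (𝕜 := ℝ) (μ := volume) (a := 0) (b := 1)
    (F := fun (x : E3) s => max (x 0 * s + x 1) 0)
    (F' := fun s => dind θ s • ell s) (x₀ := θ)
    (bound := fun _ => 2) (Metric.ball_mem_nhds θ zero_lt_one)
    (Filter.Eventually.of_forall fun x => (relu_cont x).aestronglyMeasurable)
    (relu_intervalIntegrable θ)
    ((dind_meas θ).aestronglyMeasurable.smul ell_cont.aestronglyMeasurable)
    ?_ intervalIntegrable_const ?_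
  · exact key
  · refine Filter.Eventually.of_forall fun s hs => ?_
    rw [lipschitzOnWith_iff_dist_le_mul]
    intro x _ y _
    rw [Real.dist_eq, dist_eq_norm]
    have h2 : ((Real.nnabs 2 : NNReal) : ℝ) = 2 := by
      simp
    rw [h2]
    exact relu_lip_on x y hs
  · refine (ae_ne θ hθ).mono fun s hne hs => ?_
    rw [uIoc_of_le zero_le_one] at hs
    exact relu_hasFDerivAt θ (Ioc_subset_Icc_self hs) hne

lemma mder_apply (θ : E3) (hθ : θ 0 ≠ 0 ∨ θ 1 ≠ 0) (v : E3) :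
    mder θ v = ∫ s in (0:ℝ)..1, dind θ s * (v 0 * s + v 1) := by
  rw [mder, ContinuousLinearMap.intervalIntegral_apply (mfun_deriv θ hθ).1 v]
  refine intervalIntegral.integral_congr fun s _ => ?_
  simp [ell_apply]

noncomputable def Gfun (f : ℝ → ℝ) (θ : E3) (s : ℝ) : ℝ :=
  θ 2 * (max (θ 0 * s + θ 1) 0 - mfun θ) + fbar f - f s

noncomputable def Amap (f : ℝ → ℝ) (θ : E3) (s : ℝ) : E3 →L[ℝ] ℝ :=
  θ 2 • (dind θ s • ell s - mder θ) +
    (max (θ 0 * s + θ 1) 0 - mfun θ) • (EuclideanSpace.proj 2 : E3 →L[ℝ] ℝ)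

lemma riskL_deriv (f : ℝ → ℝ) (hf : ContinuousOn f (Set.Icc 0 1)) (θ : E3)
    (hθ : θ 0 ≠ 0 ∨ θ 1 ≠ 0) :
    IntervalIntegrable (fun s => (2 * Gfun f θ s) • Amap f θ s) volume 0 1 ∧
      HasFDerivAt (riskL f)
        (∫ s in (0:ℝ)..1, (2 * Gfun f θ s) • Amap f θ s) θ := by
  obtain ⟨C0, hC0⟩ := (isCompact_Icc (a := (0:ℝ)) (b := 1)).exists_bound_of_continuousOn hf
  have hC0' : (0:ℝ) ≤ C0 := le_trans (norm_nonneg (f 0)) (hC0 0 ⟨le_refl _, zero_le_one⟩)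
  set B : ℝ := ‖θ‖ + 1 with hB
  set C : ℝ := |fbar f| + C0 with hC
  have hB1 : (1:ℝ) ≤ B := by
    have := norm_nonneg θ; linarith
  have hCnn : (0:ℝ) ≤ C := add_nonneg (abs_nonneg _) hC0'
  set K : ℝ := 8 * B * (8 * B ^ 2 + 2 * C) with hKdef
  have hKnn : (0:ℝ) ≤ K := by positivity
  have hfm : AEStronglyMeasurable f (volume.restrict (Ι (0:ℝ) 1)) := by
    rw [uIoc_of_le zero_le_one]
    exact (hf.mono Set.Ioc_subset_Icc_self).aestronglyMeasurable measurableSet_Ioc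
  have hGm : ∀ x : E3, AEStronglyMeasurable
      (fun s => x 2 * (max (x 0 * s + x 1) 0 - mfun x) + fbar f - f s)
      (volume.restrict (Ι (0:ℝ) 1)) := fun x =>
    (Continuous.aestronglyMeasurable (by fun_prop)).sub hfm
  have key := intervalIntegral.hasFDerivAt_integral_of_dominated_loc_of_lip
    (𝕜 := ℝ) (μ := volume) (a := 0) (b := 1)
    (F := fun (x : E3) s => (x 2 * (max (x 0 * s + x 1) 0 - mfun x) + fbar f - f s) ^ 2)
    (F' := fun s => (2 * Gfun f θ s) • Amap f θ s)
    (x₀ := θ) (bound := fun _ => K) (Metric.ball_mem_nhds θ zero_lt_one) ?_ ?_ ?_ ?_ intervalIntegrable_const ?_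
  · exact key
  · -- measurability of F x
    refine Filter.Eventually.of_forall fun x => ?_
    show AEStronglyMeasurable
      (fun s => (x 2 * (max (x 0 * s + x 1) 0 - mfun x) + fbar f - f s) ^ 2)
      (volume.restrict (Ι (0:ℝ) 1))
    have h1 := (hGm x).mul (hGm x)
    have he : (fun s => (x 2 * (max (x 0 * s + x 1) 0 - mfun x) + fbar f - f s) ^ 2)
        = ((fun s => x 2 * (max (x 0 * s + x 1) 0 - mfun x) + fbar f - f s) *
            fun s => x 2 * (max (x 0 * s + x 1) 0 - mfun x) + fbar f - f s) := by
      funext s; simp [pow_two]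
    rw [he]; exact h1
  · -- integrability of F θ
    apply ContinuousOn.intervalIntegrable
    rw [uIcc_of_le zero_le_one]
    exact ((Continuous.continuousOn (by fun_prop)).sub hf).pow 2
  · -- measurability of F'
    have hA : AEStronglyMeasurable (Amap f θ) (volume.restrict (Ι (0:ℝ) 1)) := by
      have t1 : AEStronglyMeasurable (fun s => dind θ s • ell s - mder θ)
          (volume.restrict (Ι (0:ℝ) 1)) :=
        ((dind_meas θ).aestronglyMeasurable.smul ell_cont.aestronglyMeasurable).sub
          aestronglyMeasurable_const
      have t2 := t1.const_smul (θ 2)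
      have t3 : AEStronglyMeasurable
          (fun s => (max (θ 0 * s + θ 1) 0 - mfun θ) •
            (EuclideanSpace.proj 2 : E3 →L[ℝ] ℝ)) (volume.restrict (Ι (0:ℝ) 1)) :=
        (Continuous.aestronglyMeasurable (f := fun s : ℝ => max (θ 0 * s + θ 1) 0 - mfun θ)
          (by fun_prop)).smul aestronglyMeasurable_const
      exact t2.add t3
    exact ((hGm θ).const_mul 2).smul hA
  · -- Lipschitz bound
    refine Filter.Eventually.of_forall fun s hs => ?_
    rw [lipschitzOnWith_iff_dist_le_mul]
    intro x hx y hy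
    have hs1 : |s| ≤ 1 := by
      rw [uIoc_of_le zero_le_one] at hs
      exact abs_le.2 ⟨by linarith [hs.1], hs.2⟩
    have hsIcc : s ∈ Set.Icc (0:ℝ) 1 := by
      rw [uIoc_of_le zero_le_one] at hs
      exact Ioc_subset_Icc_self hs
    have hfs : |f s| ≤ C0 := by
      have := hC0 s hsIcc; rwa [Real.norm_eq_abs] at this
    have hxB : ‖x‖ ≤ B := by
      have hd : ‖x - θ‖ < 1 := by rwa [Metric.mem_ball, dist_eq_norm] at hx
      have := norm_sub_norm_le x θ; linarith
    have hyB : ‖y‖ ≤ B := by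
      have hd : ‖y - θ‖ < 1 := by rwa [Metric.mem_ball, dist_eq_norm] at hy
      have := norm_sub_norm_le y θ; linarith
    set gx : ℝ := x 2 * (max (x 0 * s + x 1) 0 - mfun x) + fbar f - f s with hgx
    set gy : ℝ := y 2 * (max (y 0 * s + y 1) 0 - mfun y) + fbar f - f s with hgy
    set d : ℝ := ‖x - y‖ with hd
    have habs_sub : ∀ a b : ℝ, |a - b| ≤ |a| + |b| := fun a b => by
      rw [sub_eq_add_neg]
      exact (abs_add_le _ _).trans (by rw [abs_neg])
    have hx2 : |x 2| ≤ B := le_trans (abs_coord_le x 2) hxB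
    have hy2 : |y 2| ≤ B := le_trans (abs_coord_le y 2) hyB
    have he2 : |x 2 - y 2| ≤ d := by simpa using abs_coord_le (x - y) 2
    have hRx : |max (x 0 * s + x 1) 0| ≤ 2 * B := (relu_bound x hs1).trans (by linarith)
    have hRy : |max (y 0 * s + y 1) 0| ≤ 2 * B := (relu_bound y hs1).trans (by linarith)
    have hmx : |mfun x| ≤ 2 * B := (mfun_bound x).trans (by linarith)
    have hmy : |mfun y| ≤ 2 * B := (mfun_bound y).trans (by linarith)
    have hRd : |max (x 0 * s + x 1) 0 - max (y 0 * s + y 1) 0| ≤ 2 * d := relu_diff x y hs1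
    have hmd : |mfun x - mfun y| ≤ 2 * d := mfun_lip x y
    have hPx : |max (x 0 * s + x 1) 0 - mfun x| ≤ 4 * B :=
      (habs_sub _ _).trans (by linarith)
    have hQ : |max (x 0 * s + x 1) 0 - max (y 0 * s + y 1) 0 - (mfun x - mfun y)| ≤ 4 * d :=
      (habs_sub _ _).trans (by linarith)
    have hgd : |gx - gy| ≤ 8 * B * d := by
      have hsplit : gx - gy = (x 2 - y 2) * (max (x 0 * s + x 1) 0 - mfun x) +
          y 2 * (max (x 0 * s + x 1) 0 - max (y 0 * s + y 1) 0 - (mfun x - mfun y)) := by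
        rw [hgx, hgy]; ring
      rw [hsplit]
      calc |(x 2 - y 2) * (max (x 0 * s + x 1) 0 - mfun x) +
          y 2 * (max (x 0 * s + x 1) 0 - max (y 0 * s + y 1) 0 - (mfun x - mfun y))|
          ≤ |(x 2 - y 2) * (max (x 0 * s + x 1) 0 - mfun x)| +
            |y 2 * (max (x 0 * s + x 1) 0 - max (y 0 * s + y 1) 0 - (mfun x - mfun y))| :=
            abs_add_le _ _
        _ = |x 2 - y 2| * |max (x 0 * s + x 1) 0 - mfun x| +
            |y 2| * |max (x 0 * s + x 1) 0 - max (y 0 * s + y 1) 0 - (mfun x - mfun y)| := by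
            rw [abs_mul, abs_mul]
        _ ≤ d * (4 * B) + B * (4 * d) := by
            have hdnn : (0:ℝ) ≤ d := norm_nonneg _
            have hBnn : (0:ℝ) ≤ B := by linarith
            exact add_le_add (mul_le_mul he2 hPx (abs_nonneg _) hdnn)
              (mul_le_mul hy2 hQ (abs_nonneg _) hBnn)
        _ = 8 * B * d := by ring
    have hgxb : |gx| ≤ 4 * B ^ 2 + C := by
      rw [hgx]
      have h1 : |x 2 * (max (x 0 * s + x 1) 0 - mfun x)| ≤ B * (4 * B) := by
        rw [abs_mul]
        have hBnn : (0:ℝ) ≤ B := by linarith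
        exact mul_le_mul hx2 hPx (abs_nonneg _) hBnn
      calc |x 2 * (max (x 0 * s + x 1) 0 - mfun x) + fbar f - f s|
          ≤ |x 2 * (max (x 0 * s + x 1) 0 - mfun x) + fbar f| + |f s| := habs_sub _ _
        _ ≤ |x 2 * (max (x 0 * s + x 1) 0 - mfun x)| + |fbar f| + |f s| := by
            have := abs_add_le (x 2 * (max (x 0 * s + x 1) 0 - mfun x)) (fbar f)
            linarith
        _ ≤ B * (4 * B) + |fbar f| + C0 := by linarith
        _ = 4 * B ^ 2 + C := by rw [hC]; ring
    have hPy : |max (y 0 * s + y 1) 0 - mfun y| ≤ 4 * B :=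
      (habs_sub _ _).trans (by linarith)
    have hgyb : |gy| ≤ 4 * B ^ 2 + C := by
      rw [hgy]
      have h1 : |y 2 * (max (y 0 * s + y 1) 0 - mfun y)| ≤ B * (4 * B) := by
        rw [abs_mul]
        have hBnn : (0:ℝ) ≤ B := by linarith
        exact mul_le_mul hy2 hPy (abs_nonneg _) hBnn
      calc |y 2 * (max (y 0 * s + y 1) 0 - mfun y) + fbar f - f s|
          ≤ |y 2 * (max (y 0 * s + y 1) 0 - mfun y) + fbar f| + |f s| := habs_sub _ _
        _ ≤ |y 2 * (max (y 0 * s + y 1) 0 - mfun y)| + |fbar f| + |f s| := by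
            have := abs_add_le (y 2 * (max (y 0 * s + y 1) 0 - mfun y)) (fbar f)
            linarith
        _ ≤ B * (4 * B) + |fbar f| + C0 := by linarith
        _ = 4 * B ^ 2 + C := by rw [hC]; ring
    have hK2 : ((Real.nnabs K : NNReal) : ℝ) = K := by
      simp [abs_of_nonneg hKnn]
    rw [Real.dist_eq, dist_eq_norm, hK2]
    have hsq : gx ^ 2 - gy ^ 2 = (gx - gy) * (gx + gy) := by ring
    rw [hsq, abs_mul]
    have hsum : |gx + gy| ≤ 8 * B ^ 2 + 2 * C := (abs_add_le _ _).trans (by linarith)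
    calc |gx - gy| * |gx + gy| ≤ (8 * B * d) * (8 * B ^ 2 + 2 * C) := by
          have hBnn : (0:ℝ) ≤ 8 * B * d := by positivity
          exact mul_le_mul hgd hsum (abs_nonneg _) (by positivity)
      _ = K * d := by rw [hKdef]; ring
  · -- differentiability at θ for a.e. s
    refine (ae_ne θ hθ).mono fun s hne hs => ?_
    rw [uIoc_of_le zero_le_one] at hs
    have hsIcc : s ∈ Set.Icc (0:ℝ) 1 := Ioc_subset_Icc_self hs
    have hm := (mfun_deriv θ hθ).2
    have hrel := relu_hasFDerivAt θ hsIcc hne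
    have hmul : HasFDerivAt (fun x : E3 => x 2 * (max (x 0 * s + x 1) 0 - mfun x))
        (θ 2 • (dind θ s • ell s - mder θ) +
          (max (θ 0 * s + θ 1) 0 - mfun θ) • (EuclideanSpace.proj 2 : E3 →L[ℝ] ℝ)) θ :=
      (proj_hasFDerivAt θ 2).mul (hrel.sub hm)
    have hg : HasFDerivAt
        (fun x : E3 => x 2 * (max (x 0 * s + x 1) 0 - mfun x) + fbar f - f s)
        (Amap f θ s) θ := (hmul.add_const (fbar f)).sub_const (f s)
    have hsq := hg.mul hg
    have hfe : (fun x : E3 => (x 2 * (max (x 0 * s + x 1) 0 - mfun x) + fbar f - f s) ^ 2)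
        = fun x => (x 2 * (max (x 0 * s + x 1) 0 - mfun x) + fbar f - f s) *
            (x 2 * (max (x 0 * s + x 1) 0 - mfun x) + fbar f - f s) := by
      funext x; rw [pow_two]
    have hce : (2 * (θ 2 * (max (θ 0 * s + θ 1) 0 - mfun θ) + fbar f - f s)) • Amap f θ s
        = (θ 2 * (max (θ 0 * s + θ 1) 0 - mfun θ) + fbar f - f s) • Amap f θ s +
          (θ 2 * (max (θ 0 * s + θ 1) 0 - mfun θ) + fbar f - f s) • Amap f θ s := by
      rw [two_mul, add_smul]
    show HasFDerivAt
      (fun x : E3 => (x 2 * (max (x 0 * s + x 1) 0 - mfun x) + fbar f - f s) ^ 2)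
      ((2 * (θ 2 * (max (θ 0 * s + θ 1) 0 - mfun θ) + fbar f - f s)) • Amap f θ s) θ
    rw [hfe, hce]
    exact hsq

lemma grad_apply {g : E3 → ℝ} {D : E3 →L[ℝ] ℝ} {θ : E3} (h : HasFDerivAt g D θ) (i : Fin 3) :
    gradient g θ i = D (EuclideanSpace.single i 1) := by
  have hg := h.hasGradientAt
  rw [hg.gradient]
  have h2 : ⟪((InnerProductSpace.toDual ℝ E3).symm D : E3), EuclideanSpace.single i (1:ℝ)⟫ =
      D (EuclideanSpace.single i 1) := InnerProductSpace.toDual_symm_apply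
  rw [EuclideanSpace.inner_single_right] at h2
  simpa using h2

end Stmt5Aux

open Stmt5Aux

/-- Lemma 3.1(i): explicit formulas for the components of the modified gradient `𝔊`
on the manifold `ℳ = {θ : θ₁² + θ₂² = 1}`. -/
theorem stmt5
    (f : ℝ → ℝ) (hf : ContinuousOn f (Set.Icc 0 1))
    (h𝓛diff : ∀ θ : EuclideanSpace ℝ (Fin 3), 0 < |θ 0| + |θ 1| →
      DifferentiableAt ℝ (riskL f) θ)
    (𝔊 : EuclideanSpace ℝ (Fin 3) → EuclideanSpace ℝ (Fin 3))
    (h𝔊meas : Measurable 𝔊)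
    (h𝔊loc : ∀ θ : EuclideanSpace ℝ (Fin 3),
      ∃ r > (0:ℝ), ∃ C : ℝ, ∀ x ∈ Metric.ball θ r, ‖𝔊 x‖ ≤ C)
    (h𝔊 : ∀ θ : EuclideanSpace ℝ (Fin 3), 0 < |θ 0| + |θ 1| →
      𝔊 θ = gradient (riskL f) θ -
        ((‖gradient gfun θ‖ ^ 2)⁻¹ * ⟪gradient (riskL f) θ, gradient gfun θ⟫) •
          gradient gfun θ) :
    ∀ θ : EuclideanSpace ℝ (Fin 3), gfun θ = 1 →
      𝔊 θ 0 = 2 * θ 2 * ∫ s in (0:ℝ)..1,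
          (θ 2 * (max (θ 0 * s + θ 1) 0 - mfun θ) + fbar f - f s) * (θ 1 ^ 2 * s - θ 0 * θ 1)
            * (Iact θ).indicator (fun _ => (1:ℝ)) s ∧
      𝔊 θ 1 = 2 * θ 2 * ∫ s in (0:ℝ)..1,
          (θ 2 * (max (θ 0 * s + θ 1) 0 - mfun θ) + fbar f - f s) * (θ 0 ^ 2 - θ 0 * θ 1 * s)
            * (Iact θ).indicator (fun _ => (1:ℝ)) s ∧
      𝔊 θ 2 = 2 * ∫ s in (0:ℝ)..1,
          (θ 2 * (max (θ 0 * s + θ 1) 0 - mfun θ) + fbar f - f s)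
            * (max (θ 0 * s + θ 1) 0 - mfun θ) := by
  intro θ hgf
  have hgf' : θ 0 ^ 2 + θ 1 ^ 2 = 1 := hgf
  have hθ01 : θ 0 ≠ 0 ∨ θ 1 ≠ 0 := by
    by_contra h
    push_neg at h
    rw [h.1, h.2] at hgf'
    norm_num at hgf'
  have hpos : 0 < |θ 0| + |θ 1| := by
    rcases hθ01 with h | h
    · have h1 := abs_pos.2 h
      have h2 := abs_nonneg (θ 1)
      linarith
    · have h1 := abs_pos.2 h
      have h2 := abs_nonneg (θ 0)
      linarith
  obtain ⟨hFint, hFder⟩ := riskL_deriv f hf θ hθ01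
  -- gradient components of riskL
  have hgradL : ∀ i : Fin 3, gradient (riskL f) θ i
      = ∫ s in (0:ℝ)..1, ((2 * Gfun f θ s) • Amap f θ s) (EuclideanSpace.single i 1) := by
    intro i
    rw [grad_apply hFder i, ContinuousLinearMap.intervalIntegral_apply hFint]
  have happly : ∀ v : EuclideanSpace ℝ (Fin 3),
      IntervalIntegrable (fun s => ((2 * Gfun f θ s) • Amap f θ s) v) volume 0 1 := by
    intro v
    rw [intervalIntegrable_iff] at hFint ⊢
    exact (ContinuousLinearMap.apply ℝ ℝ v).integrable_comp hFint
  set a0 : ℝ := mder θ (EuclideanSpace.single 0 1) with ha0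
  set a1 : ℝ := mder θ (EuclideanSpace.single 1 1) with ha1
  have ha2 : mder θ (EuclideanSpace.single 2 1) = 0 := by
    rw [mder_apply θ hθ01]
    simp [EuclideanSpace.single_apply]
  have e0 : ∀ s : ℝ, ((2 * Gfun f θ s) • Amap f θ s) (EuclideanSpace.single 0 1)
      = 2 * θ 2 * Gfun f θ s * (dind θ s * s - a0) := by
    intro s
    simp [Amap, ell_apply, EuclideanSpace.single_apply, ha0]
    ring
  have e1 : ∀ s : ℝ, ((2 * Gfun f θ s) • Amap f θ s) (EuclideanSpace.single 1 1)
      = 2 * θ 2 * Gfun f θ s * (dind θ s - a1) := by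
    intro s
    simp [Amap, ell_apply, EuclideanSpace.single_apply, ha1]
    ring
  have e2 : ∀ s : ℝ, ((2 * Gfun f θ s) • Amap f θ s) (EuclideanSpace.single 2 1)
      = 2 * (Gfun f θ s * (max (θ 0 * s + θ 1) 0 - mfun θ)) := by
    intro s
    simp [Amap, ell_apply, EuclideanSpace.single_apply, ha2]
    ring
  have hI0 : IntervalIntegrable (fun s => 2 * θ 2 * Gfun f θ s * (dind θ s * s - a0))
      volume 0 1 := by
    have h := happly (EuclideanSpace.single 0 1)
    rwa [show (fun s => ((2 * Gfun f θ s) • Amap f θ s) (EuclideanSpace.single 0 1))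
        = fun s => 2 * θ 2 * Gfun f θ s * (dind θ s * s - a0) from funext e0] at h
  have hI1 : IntervalIntegrable (fun s => 2 * θ 2 * Gfun f θ s * (dind θ s - a1))
      volume 0 1 := by
    have h := happly (EuclideanSpace.single 1 1)
    rwa [show (fun s => ((2 * Gfun f θ s) • Amap f θ s) (EuclideanSpace.single 1 1))
        = fun s => 2 * θ 2 * Gfun f θ s * (dind θ s - a1) from funext e1] at h
  have hL0 : gradient (riskL f) θ 0
      = ∫ s in (0:ℝ)..1, 2 * θ 2 * Gfun f θ s * (dind θ s * s - a0) := by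
    rw [hgradL 0]
    exact intervalIntegral.integral_congr fun s _ => e0 s
  have hL1 : gradient (riskL f) θ 1
      = ∫ s in (0:ℝ)..1, 2 * θ 2 * Gfun f θ s * (dind θ s - a1) := by
    rw [hgradL 1]
    exact intervalIntegral.integral_congr fun s _ => e1 s
  have hL2 : gradient (riskL f) θ 2
      = 2 * ∫ s in (0:ℝ)..1, Gfun f θ s * (max (θ 0 * s + θ 1) 0 - mfun θ) := by
    rw [hgradL 2]
    rw [intervalIntegral.integral_congr (fun s _ => e2 s)]
    rw [intervalIntegral.integral_const_mul]
  -- basic integrability and ∫ G = 0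
  have hfint : IntervalIntegrable f volume 0 1 := by
    apply ContinuousOn.intervalIntegrable
    rwa [uIcc_of_le zero_le_one]
  have hGint : IntervalIntegrable (Gfun f θ) volume 0 1 := by
    apply ContinuousOn.intervalIntegrable
    rw [uIcc_of_le zero_le_one]
    exact (Continuous.continuousOn (by fun_prop)).sub hf
  have hGzero : (∫ s in (0:ℝ)..1, Gfun f θ s) = 0 := by
    have he : ∀ s : ℝ, Gfun f θ s
        = θ 2 * max (θ 0 * s + θ 1) 0 + (fbar f - θ 2 * mfun θ) - f s := by
      intro s
      simp only [Gfun]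
      ring
    rw [intervalIntegral.integral_congr (fun s _ => he s)]
    rw [intervalIntegral.integral_sub
      (((relu_intervalIntegrable θ).const_mul (θ 2)).add intervalIntegrable_const) hfint]
    rw [intervalIntegral.integral_add ((relu_intervalIntegrable θ).const_mul (θ 2))
      intervalIntegrable_const]
    rw [intervalIntegral.integral_const_mul]
    have h1 : (∫ s in (0:ℝ)..1, max (θ 0 * s + θ 1) 0) = mfun θ := rfl
    have h2 : (∫ s in (0:ℝ)..1, f s) = fbar f := rfl
    rw [h1, h2, intervalIntegral.integral_const]
    simp only [smul_eq_mul]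
    ring
  -- gradient of gfun
  have hDg : HasFDerivAt gfun
      (θ 0 • (EuclideanSpace.proj 0 : EuclideanSpace ℝ (Fin 3) →L[ℝ] ℝ) +
          θ 0 • EuclideanSpace.proj 0 +
        (θ 1 • (EuclideanSpace.proj 1 : EuclideanSpace ℝ (Fin 3) →L[ℝ] ℝ) +
          θ 1 • EuclideanSpace.proj 1)) θ := by
    have he : gfun = fun x : EuclideanSpace ℝ (Fin 3) => x 0 * x 0 + x 1 * x 1 := by
      funext x
      simp [gfun]
      ring
    rw [he]
    exact ((proj_hasFDerivAt θ 0).mul (proj_hasFDerivAt θ 0)).add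
      ((proj_hasFDerivAt θ 1).mul (proj_hasFDerivAt θ 1))
  have hg0 : gradient gfun θ 0 = 2 * θ 0 := by
    rw [grad_apply hDg 0]
    simp [EuclideanSpace.single_apply]
    ring
  have hg1 : gradient gfun θ 1 = 2 * θ 1 := by
    rw [grad_apply hDg 1]
    simp [EuclideanSpace.single_apply]
    ring
  have hg2 : gradient gfun θ 2 = 0 := by
    rw [grad_apply hDg 2]
    simp [EuclideanSpace.single_apply]
  have hnorm4 : ‖gradient gfun θ‖ ^ 2 = 4 := by
    rw [← real_inner_self_eq_norm_sq, PiLp.inner_apply, Fin.sum_univ_three, hg0, hg1, hg2]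
    simp only [RCLike.inner_apply, conj_trivial]
    nlinarith [hgf']
  have hinner : ⟪gradient (riskL f) θ, gradient gfun θ⟫ =
      2 * θ 0 * gradient (riskL f) θ 0 + 2 * θ 1 * gradient (riskL f) θ 1 := by
    rw [PiLp.inner_apply, Fin.sum_univ_three, hg0, hg1, hg2]
    simp only [RCLike.inner_apply, conj_trivial]
    ring
  have hcomp : ∀ i : Fin 3, 𝔊 θ i = gradient (riskL f) θ i -
      ((‖gradient gfun θ‖ ^ 2)⁻¹ * ⟪gradient (riskL f) θ, gradient gfun θ⟫) *
        gradient gfun θ i := by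
    intro i
    rw [h𝔊 θ hpos]
    simp [PiLp.sub_apply, PiLp.smul_apply, smul_eq_mul]
  refine ⟨?_, ?_, ?_⟩
  · -- component 0
    rw [hcomp 0, hnorm4, hinner, hg0]
    have hstep : gradient (riskL f) θ 0 - (4:ℝ)⁻¹ *
          (2 * θ 0 * gradient (riskL f) θ 0 + 2 * θ 1 * gradient (riskL f) θ 1) * (2 * θ 0)
        = θ 1 ^ 2 * gradient (riskL f) θ 0 - θ 0 * θ 1 * gradient (riskL f) θ 1 := by
      linear_combination (-(gradient (riskL f) θ 0)) * hgf'
    rw [hstep, hL0, hL1]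
    rw [← intervalIntegral.integral_const_mul (θ 1 ^ 2),
      ← intervalIntegral.integral_const_mul (θ 0 * θ 1),
      ← intervalIntegral.integral_sub (hI0.const_mul _) (hI1.const_mul _)]
    have hsplit : ∀ s : ℝ, θ 1 ^ 2 * (2 * θ 2 * Gfun f θ s * (dind θ s * s - a0)) -
        θ 0 * θ 1 * (2 * θ 2 * Gfun f θ s * (dind θ s - a1))
        = 2 * θ 2 * (Gfun f θ s * (θ 1 ^ 2 * s - θ 0 * θ 1) * dind θ s)
          + (2 * θ 2 * (θ 0 * θ 1 * a1 - θ 1 ^ 2 * a0)) * Gfun f θ s := by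
      intro s
      ring
    rw [intervalIntegral.integral_congr (fun s _ => hsplit s)]
    have hPint : IntervalIntegrable
        (fun s => 2 * θ 2 * (Gfun f θ s * (θ 1 ^ 2 * s - θ 0 * θ 1) * dind θ s)) volume 0 1 := by
      have hcombint := (hI0.const_mul (θ 1 ^ 2)).sub (hI1.const_mul (θ 0 * θ 1))
      have he : (fun s => 2 * θ 2 * (Gfun f θ s * (θ 1 ^ 2 * s - θ 0 * θ 1) * dind θ s))
          = fun s => (θ 1 ^ 2 * (2 * θ 2 * Gfun f θ s * (dind θ s * s - a0)) -
              θ 0 * θ 1 * (2 * θ 2 * Gfun f θ s * (dind θ s - a1)))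
            - (2 * θ 2 * (θ 0 * θ 1 * a1 - θ 1 ^ 2 * a0)) * Gfun f θ s := by
        funext s
        have := hsplit s
        linarith
      rw [he]
      exact hcombint.sub (hGint.const_mul _)
    rw [intervalIntegral.integral_add hPint (hGint.const_mul _),
      intervalIntegral.integral_const_mul, intervalIntegral.integral_const_mul,
      hGzero, mul_zero, add_zero]
    simp only [Gfun, dind]
  · -- component 1
    rw [hcomp 1, hnorm4, hinner, hg1]
    have hstep : gradient (riskL f) θ 1 - (4:ℝ)⁻¹ *
          (2 * θ 0 * gradient (riskL f) θ 0 + 2 * θ 1 * gradient (riskL f) θ 1) * (2 * θ 1)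
        = θ 0 ^ 2 * gradient (riskL f) θ 1 - θ 0 * θ 1 * gradient (riskL f) θ 0 := by
      linear_combination (-(gradient (riskL f) θ 1)) * hgf'
    rw [hstep, hL0, hL1]
    rw [← intervalIntegral.integral_const_mul (θ 0 ^ 2),
      ← intervalIntegral.integral_const_mul (θ 0 * θ 1),
      ← intervalIntegral.integral_sub (hI1.const_mul _) (hI0.const_mul _)]
    have hsplit : ∀ s : ℝ, θ 0 ^ 2 * (2 * θ 2 * Gfun f θ s * (dind θ s - a1)) -
        θ 0 * θ 1 * (2 * θ 2 * Gfun f θ s * (dind θ s * s - a0))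
        = 2 * θ 2 * (Gfun f θ s * (θ 0 ^ 2 - θ 0 * θ 1 * s) * dind θ s)
          + (2 * θ 2 * (θ 0 * θ 1 * a0 - θ 0 ^ 2 * a1)) * Gfun f θ s := by
      intro s
      ring
    rw [intervalIntegral.integral_congr (fun s _ => hsplit s)]
    have hPint : IntervalIntegrable
        (fun s => 2 * θ 2 * (Gfun f θ s * (θ 0 ^ 2 - θ 0 * θ 1 * s) * dind θ s)) volume 0 1 := by
      have hcombint := (hI1.const_mul (θ 0 ^ 2)).sub (hI0.const_mul (θ 0 * θ 1))
      have he : (fun s => 2 * θ 2 * (Gfun f θ s * (θ 0 ^ 2 - θ 0 * θ 1 * s) * dind θ s))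
          = fun s => (θ 0 ^ 2 * (2 * θ 2 * Gfun f θ s * (dind θ s - a1)) -
              θ 0 * θ 1 * (2 * θ 2 * Gfun f θ s * (dind θ s * s - a0)))
            - (2 * θ 2 * (θ 0 * θ 1 * a0 - θ 0 ^ 2 * a1)) * Gfun f θ s := by
        funext s
        have := hsplit s
        linarith
      rw [he]
      exact hcombint.sub (hGint.const_mul _)
    rw [intervalIntegral.integral_add hPint (hGint.const_mul _),
      intervalIntegral.integral_const_mul, intervalIntegral.integral_const_mul,
      hGzero, mul_zero, add_zero]
    simp only [Gfun, dind]
  · -- component 2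
    rw [hcomp 2, hnorm4, hinner, hg2, mul_zero, sub_zero, hL2]
    simp only [Gfun]
end

section
/- For every ε > 0 it holds that sup_{t ∈ [0,∞)} [ ‖Θ(t)‖ · 𝟙_{[ε,1)}(μ(I^{Θ(t)})) ] < ∞, where μ denotes Lebesgue measure on ℝ; i.e., the gradient flow trajectory is bounded on the set of times t at which the Lebesgue measure of the activity interval I^{Θ(t)} lies in [ε, 1). -/
open MeasureTheory Real Set
open scoped RealInnerProductSpace
open scoped ENNReal

namespace Stmt8Aux



/-- If `g` is Lipschitz on `[a,b]` and has a nonpositive derivative at all points of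
`(a,b)` outside a null set, then `g b ≤ g a`. -/
lemma le_of_ae_deriv_nonpos {g : ℝ → ℝ} {a b K : ℝ} (hab : a ≤ b) (hK : 0 ≤ K)
    (hcont : ContinuousOn g (Icc a b))
    (hlip : ∀ x ∈ Icc a b, ∀ y ∈ Icc a b, |g y - g x| ≤ K * |y - x|)
    {E : Set ℝ} (hE : volume E = 0)
    (hderiv : ∀ x ∈ Ioo a b, x ∉ E → ∃ g', g' ≤ 0 ∧ HasDerivAt g g' x) :
    g b ≤ g a := by
  have key : ∀ ε : ℝ, 0 < ε → g b ≤ g a + (ε * (b - a) + K * ε) := by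
    intro ε hε
    obtain ⟨U, hEU, hUopen, hU⟩ :=
      Set.exists_isOpen_lt_of_lt (E ∪ {a}) (ENNReal.ofReal ε)
        (by rw [measure_union_null hE (measure_singleton a)]
            exact ENNReal.ofReal_pos.2 hε)
    set F : ℝ → ℝ := fun t => (volume (U ∩ Ioc a t)).toReal with hF
    have hUfin : ∀ t : ℝ, volume (U ∩ Ioc a t) ≠ ⊤ := fun t =>
      ((measure_mono Set.inter_subset_left).trans_lt (hU.trans_le le_top)).ne
    have hFsub : ∀ x y : ℝ, a ≤ x → x ≤ y →
        F y - F x = (volume (U ∩ Ioc x y)).toReal := by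
      intro x y hax hxy
      have hun : U ∩ Ioc a y = (U ∩ Ioc a x) ∪ (U ∩ Ioc x y) := by
        rw [← Set.inter_union_distrib_left, Set.Ioc_union_Ioc_eq_Ioc hax hxy]
      have hdisj : Disjoint (U ∩ Ioc a x) (U ∩ Ioc x y) := by
        rw [Set.disjoint_left]
        rintro s ⟨-, hs1⟩ ⟨-, hs2⟩
        exact absurd (hs1.2.trans_lt hs2.1) (lt_irrefl s)
      have hmeas : volume (U ∩ Ioc a y) = volume (U ∩ Ioc a x) + volume (U ∩ Ioc x y) := by
        rw [hun]
        exact measure_union hdisj (hUopen.measurableSet.inter measurableSet_Ioc)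
      simp only [hF]
      rw [hmeas, ENNReal.toReal_add (hUfin x) (by
        exact ((measure_mono Set.inter_subset_left).trans_lt (hU.trans_le le_top)).ne)]
      ring
    have hFincr : ∀ x y : ℝ, a ≤ x → x ≤ y → 0 ≤ F y - F x := by
      intro x y hax hxy
      rw [hFsub x y hax hxy]; positivity
    have hFlip : ∀ x y : ℝ, a ≤ x → x ≤ y → F y - F x ≤ y - x := by
      intro x y hax hxy
      rw [hFsub x y hax hxy]
      have : volume (U ∩ Ioc x y) ≤ ENNReal.ofReal (y - x) := by
        refine (measure_mono Set.inter_subset_right).trans ?_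
        rw [Real.volume_Ioc]
      exact ENNReal.toReal_le_of_le_ofReal (by linarith) this
    have hFa : F a = 0 := by simp [hF]
    have hFcont : ContinuousOn F (Icc a b) := by
      have : LipschitzOnWith 1 F (Ici a) := by
        refine LipschitzOnWith.of_dist_le_mul fun x hx y hy => ?_
        rw [Real.dist_eq, Real.dist_eq, NNReal.coe_one, one_mul]
        rcases le_total y x with h | h
        · rw [abs_of_nonneg (by linarith [hFincr y x hy h]), abs_of_nonneg (by linarith)]
          exact hFlip y x hy h
        · rw [abs_of_nonpos (by linarith [hFincr x y hx h]), abs_of_nonpos (by linarith)]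
          linarith [hFlip x y hx h]
      exact this.continuousOn.mono (Set.Icc_subset_Ici_self)
    -- apply the fencing lemma
    have main := image_le_of_liminf_slope_right_lt_deriv_boundary'
      (f := fun t => g t - K * F t) (f' := fun _ => 0) (a := a) (b := b)
      (B := fun t => g a + ε * (t - a)) (B' := fun _ => ε)
      (hcont.sub (continuousOn_const.mul hFcont))
      ?_ (by simp [hFa]) (by fun_prop)
      (fun x _ => by
        simpa using (((hasDerivAt_id x).sub_const a).const_mul ε).const_add (g a)
          |>.hasDerivWithinAt)
      (fun x _ _ => hε)
    · have hb : g b - K * F b ≤ g a + ε * (b - a) := main ⟨hab, le_rfl⟩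
      have hFb : F b ≤ ε := by
        have : volume (U ∩ Ioc a b) ≤ ENNReal.ofReal ε :=
          (measure_mono Set.inter_subset_left).trans hU.le
        exact ENNReal.toReal_le_of_le_ofReal hε.le this
      nlinarith
    · -- the liminf slope condition
      intro x hx r hr
      by_cases hxU : x ∈ U
      · -- inside U : slope of F is exactly 1, g has slope ≤ K
        obtain ⟨δ, hδ, hball⟩ := Metric.isOpen_iff.1 hUopen x hxU
        have hmin : x < min (x + δ) b := lt_min (by linarith) hx.2
        have hev : ∀ᶠ z in nhdsWithin x (Set.Ioi x), slope (fun t => g t - K * F t) x z < r := by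
          filter_upwards [Ioo_mem_nhdsGT_of_mem ⟨le_refl x, hmin⟩] with z hz
          have hxz : x < z := hz.1
          have hzb : z ≤ b := le_of_lt (lt_of_lt_of_le hz.2 (min_le_right _ _))
          have hzδ : z < x + δ := lt_of_lt_of_le hz.2 (min_le_left _ _)
          have hIoc : Ioc x z ⊆ U := by
            intro s hs
            apply hball
            rw [Metric.mem_ball, Real.dist_eq, abs_of_pos (by linarith [hs.1])]
            linarith [hs.2]
          have hFz : F z - F x = z - x := by
            rw [hFsub x z hx.1 hxz.le, Set.inter_eq_right.2 hIoc, Real.volume_Ioc,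
              ENNReal.toReal_ofReal (by linarith)]
          have hgz : g z - g x ≤ K * (z - x) := by
            have h1 := hlip x ⟨hx.1, hx.2.le⟩ z ⟨by linarith [hx.1], hzb⟩
            rw [abs_of_pos (show (0:ℝ) < z - x by linarith)] at h1
            calc g z - g x ≤ |g z - g x| := le_abs_self _
            _ ≤ K * (z - x) := h1
          rw [slope_def_field]
          have : (g z - K * F z - (g x - K * F x)) ≤ 0 := by nlinarith
          calc (g z - K * F z - (g x - K * F x)) / (z - x) ≤ 0 :=
                div_nonpos_of_nonpos_of_nonneg this (by linarith)
          _ < r := hr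
        exact hev.frequently
      · -- outside U : use the derivative
        have hxE : x ∉ E := fun h => hxU (hEU (Set.mem_union_left _ h))
        have hxa : x ≠ a := fun h => hxU (hEU (Set.mem_union_right _ (by simp [h])))
        obtain ⟨g', hg'le, hg'⟩ := hderiv x ⟨lt_of_le_of_ne hx.1 (Ne.symm hxa), hx.2⟩ hxE
        have hslope : Filter.Tendsto (slope g x) (nhdsWithin x {x}ᶜ) (nhds g') :=
          hasDerivAt_iff_tendsto_slope.1 hg'
        have hslope' : ∀ᶠ z in nhdsWithin x (Set.Ioi x), slope g x z < r := by
          have : nhdsWithin x (Set.Ioi x) ≤ nhdsWithin x {x}ᶜ :=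
            nhdsWithin_mono x (fun z hz => ne_of_gt hz)
          exact (hslope.mono_left this).eventually_lt_const (lt_of_le_of_lt hg'le hr)
        have hev : ∀ᶠ z in nhdsWithin x (Set.Ioi x),
            slope (fun t => g t - K * F t) x z < r := by
          filter_upwards [hslope', self_mem_nhdsWithin] with z hzslope hzx
          have hxz : x < z := hzx
          have hFmono : 0 ≤ F z - F x := hFincr x z hx.1 hxz.le
          rw [slope_def_field] at hzslope ⊢
          have hcmp : (g z - K * F z - (g x - K * F x)) / (z - x) ≤ (g z - g x) / (z - x) := by
            have hnum : g z - K * F z - (g x - K * F x) ≤ g z - g x := by nlinarith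
            exact div_le_div_of_nonneg_right hnum (by linarith) |>.trans_eq rfl
          exact lt_of_le_of_lt hcmp hzslope
        exact hev.frequently
  -- conclude
  refine le_of_forall_pos_le_add fun ε' hε' => ?_
  have hd : (0:ℝ) < b - a + K + 1 := by linarith
  have := key (ε' / (b - a + K + 1)) (by positivity)
  have h2 : (ε' / (b - a + K + 1)) * (b - a) + K * (ε' / (b - a + K + 1)) ≤ ε' := by
    have he : (ε' / (b - a + K + 1)) * (b - a) + K * (ε' / (b - a + K + 1))
        = ε' * ((b - a + K) / (b - a + K + 1)) := by
      field_simp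
    have hle : (b - a + K) / (b - a + K + 1) ≤ 1 := (div_le_one hd).2 (by linarith)
    rw [he]
    nlinarith
  linarith




lemma ae_hasDerivAt_primitive {E : Type*} [NormedAddCommGroup E] [NormedSpace ℝ E]
    [CompleteSpace E] {h : ℝ → E} {T : ℝ}
    (hint : IntegrableOn h (Ioc 0 T) volume) :
    ∀ᵐ x ∂volume, x ∈ Ioo (0:ℝ) T → HasDerivAt (fun t => ∫ u in (0:ℝ)..t, h u) (h x) x := by
  set hi : ℝ → E := Set.indicator (Ioc 0 T) h with hhi
  have hiInt : Integrable hi volume :=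
    (integrable_indicator_iff measurableSet_Ioc).2 hint
  have hiLoc : LocallyIntegrable hi volume := hiInt.locallyIntegrable
  filter_upwards [IsUnifLocDoublingMeasure.ae_tendsto_average (μ := (volume : Measure ℝ))
    hiLoc 1] with x hx hxT
  have hxi : hi x = h x :=
    Set.indicator_of_mem (show x ∈ Ioc 0 T from ⟨hxT.1, hxT.2.le⟩) h
  have hδ : Filter.Tendsto (fun z : ℝ => |z - x| / 2) (nhdsWithin x {x}ᶜ)
      (nhdsWithin 0 (Ioi 0)) := by
    rw [tendsto_nhdsWithin_iff]
    constructor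
    · apply Filter.Tendsto.mono_left ?_ nhdsWithin_le_nhds
      have : Filter.Tendsto (fun z : ℝ => |z - x| / 2) (nhds x) (nhds (|x - x| / 2)) :=
        (((continuous_id.sub continuous_const).abs).div_const 2).tendsto x
      simpa using this
    · filter_upwards [self_mem_nhdsWithin] with z hz
      have hne : z - x ≠ 0 := sub_ne_zero.2 hz
      have : 0 < |z - x| := abs_pos.2 hne
      exact div_pos this two_pos
  have hmem : ∀ᶠ z in nhdsWithin x {x}ᶜ,
      x ∈ Metric.closedBall ((x + z) / 2) (1 * (|z - x| / 2)) := by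
    filter_upwards with z
    rw [Metric.mem_closedBall, Real.dist_eq, one_mul]
    have hx2 : x - (x + z) / 2 = (x - z) / 2 := by ring
    rw [hx2, abs_div, abs_sub_comm x z, abs_two]
  have havg := hx (fun z : ℝ => (x + z) / 2) (fun z : ℝ => |z - x| / 2) hδ hmem
  rw [hxi] at havg
  rw [hasDerivAt_iff_tendsto_slope]
  refine havg.congr' ?_
  have hxmem : Ioo (0:ℝ) T ∈ nhds x := isOpen_Ioo.mem_nhds hxT
  filter_upwards [self_mem_nhdsWithin, nhdsWithin_le_nhds hxmem] with z hzx hzT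
  have hzne : z ≠ x := hzx
  set c := min x z with hc
  set d := max x z with hd
  have hcpos : 0 < c := lt_min hxT.1 hzT.1
  have hdT : d ≤ T := le_of_lt (max_lt hxT.2 hzT.2)
  have hsub : Ioc c d ⊆ Ioc 0 T := fun y hy => ⟨hcpos.trans hy.1, hy.2.trans hdT⟩
  have hball : Metric.closedBall ((x + z) / 2) (|z - x| / 2) = Icc c d := by
    rw [Real.closedBall_eq_Icc]
    rcases le_total x z with hle | hle
    · rw [abs_of_nonneg (by linarith), hc, hd, min_eq_left hle, max_eq_right hle]
      congr 1 <;> ring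
    · rw [abs_of_nonpos (by linarith), hc, hd, min_eq_right hle, max_eq_left hle]
      congr 1 <;> ring
  -- integrability on subintervals
  have hII : ∀ p q : ℝ, Set.uIoc p q ⊆ Ioc 0 T → IntervalIntegrable h volume p q := by
    intro p q hpq
    rw [intervalIntegrable_iff]
    exact hint.mono_set hpq
  have hI0x : IntervalIntegrable h volume 0 x := by
    apply hII; rw [Set.uIoc_of_le hxT.1.le]
    exact Ioc_subset_Ioc le_rfl hxT.2.le
  have hIxz : IntervalIntegrable h volume x z := by
    apply hII
    rw [Set.uIoc]; exact hsub
  -- the slope equals the average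
  have hdiff : (∫ u in (0:ℝ)..z, h u) - ∫ u in (0:ℝ)..x, h u = ∫ u in x..z, h u := by
    rw [eq_comm, eq_sub_iff_add_eq, add_comm]
    exact intervalIntegral.integral_add_adjacent_intervals hI0x hIxz
  have hint_cd : ∫ y in Icc c d, hi y = ∫ u in Ioc c d, h u := by
    rw [integral_Icc_eq_integral_Ioc]
    apply setIntegral_congr_fun measurableSet_Ioc
    intro y hy
    exact Set.indicator_of_mem (hsub hy) h
  have hvol : (volume (Icc c d)).toReal = d - c := by
    rw [Real.volume_Icc, ENNReal.toReal_ofReal (by simp [hc, hd, min_le_max])]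
  rw [hball, setAverage_eq, hint_cd, measureReal_def, hvol, slope_def_module, hdiff]
  rcases lt_or_gt_of_ne hzne with hlt | hgt
  · -- z < x : c = z, d = x
    have hcz : c = z := min_eq_right hlt.le
    have hdx : d = x := max_eq_left hlt.le
    rw [hcz, hdx, intervalIntegral.integral_symm,
      intervalIntegral.integral_of_le hlt.le]
    have h1 : (z - x)⁻¹ = -(x - z)⁻¹ := by
      rw [← neg_sub, ← inv_neg]
    rw [h1, smul_neg, neg_smul, neg_neg]
  · -- x < z : c = x, d = z
    have hcx : c = x := min_eq_left hgt.le
    have hdz : d = z := max_eq_right hgt.le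
    rw [hcx, hdz, intervalIntegral.integral_of_le hgt.le]


abbrev E3 := EuclideanSpace ℝ (Fin 3)





lemma norm_sq_eq3 (θ : E3) : ‖θ‖ ^ 2 = θ 0 ^ 2 + θ 1 ^ 2 + θ 2 ^ 2 := by
  rw [EuclideanSpace.norm_eq, Real.sq_sqrt (by positivity)]
  simp [Fin.sum_univ_three, sq_abs]

lemma abs_coord_le (θ : E3) (i : Fin 3) : |θ i| ≤ ‖θ‖ := by
  rw [EuclideanSpace.norm_eq, ← Real.sqrt_sq_eq_abs]
  apply Real.sqrt_le_sqrt
  have h := Finset.single_le_sum (f := fun j => ‖θ j‖ ^ 2)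
    (fun j _ => by positivity) (Finset.mem_univ i)
  simpa [Real.norm_eq_abs, sq_abs] using h

lemma inner_eq3 (v w : E3) : ⟪v, w⟫ = v 0 * w 0 + v 1 * w 1 + v 2 * w 2 := by
  rw [PiLp.inner_apply]
  simp [Fin.sum_univ_three, RCLike.inner_apply, mul_comm]

/-- the vector `(2 θ₀, 2 θ₁, 0)` -/
noncomputable def gvec (θ : E3) : E3 := (WithLp.equiv 2 _).symm ![2 * θ 0, 2 * θ 1, 0]

@[simp] lemma gvec_0 (θ : E3) : gvec θ 0 = 2 * θ 0 := rfl
@[simp] lemma gvec_1 (θ : E3) : gvec θ 1 = 2 * θ 1 := rfl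
@[simp] lemma gvec_2 (θ : E3) : gvec θ 2 = 0 := rfl

set_option maxHeartbeats 1000000 in
lemma hasGradientAt_gfun (θ : E3) : HasGradientAt gfun (gvec θ) θ := by
  rw [hasGradientAt_iff_hasFDerivAt]
  set p0 : E3 →L[ℝ] ℝ := EuclideanSpace.proj (0 : Fin 3) with hp0
  set p1 : E3 →L[ℝ] ℝ := EuclideanSpace.proj (1 : Fin 3) with hp1
  have hd0 : HasFDerivAt (fun x : E3 => p0 x * p0 x) (θ 0 • p0 + θ 0 • p0) θ := by
    have := p0.hasFDerivAt (x := θ)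
    exact this.mul this
  have hd1 : HasFDerivAt (fun x : E3 => p1 x * p1 x) (θ 1 • p1 + θ 1 • p1) θ := by
    have := p1.hasFDerivAt (x := θ)
    exact this.mul this
  have hsum : HasFDerivAt (fun x : E3 => p0 x * p0 x + p1 x * p1 x) _ θ := hd0.add hd1
  have hfun : (fun x : E3 => p0 x * p0 x + p1 x * p1 x) = gfun := by
    funext x; simp [gfun, sq, hp0, hp1]
  rw [hfun] at hsum
  have hD : (InnerProductSpace.toDual ℝ E3) (gvec θ) = θ 0 • p0 + θ 0 • p0 + (θ 1 • p1 + θ 1 • p1) := by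
    apply ContinuousLinearMap.ext
    intro w
    simp only [InnerProductSpace.toDual_apply_apply, ContinuousLinearMap.add_apply,
      ContinuousLinearMap.smul_apply, hp0, hp1, PiLp.proj_apply, smul_eq_mul]
    rw [inner_eq3]
    simp; ring
  rw [hD]
  exact hsum

lemma gradient_gfun (θ : E3) : gradient gfun θ = gvec θ :=
  (hasGradientAt_gfun θ).gradient

lemma norm_gvec_sq (θ : E3) : ‖gvec θ‖ ^ 2 = 4 * gfun θ := by
  rw [norm_sq_eq3]
  simp [gfun]; ring

lemma continuous_gfun : Continuous gfun := by
  have h0 : Continuous fun θ : E3 => θ 0 := (EuclideanSpace.proj (0:Fin 3)).continuous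
  have h1 : Continuous fun θ : E3 => θ 1 := (EuclideanSpace.proj (1:Fin 3)).continuous
  exact (h0.pow 2).add (h1.pow 2)

lemma proj_ortho {a b G : E3} (hb : ‖b‖ ≠ 0)
    (hG : G = a - ((‖b‖ ^ 2)⁻¹ * ⟪a, b⟫) • b) :
    ⟪G, b⟫ = 0 ∧ ⟪a, G⟫ = ‖G‖ ^ 2 := by
  have hbb : ⟪b, b⟫ = ‖b‖ ^ 2 := real_inner_self_eq_norm_sq b
  have hb2 : ‖b‖ ^ 2 ≠ 0 := pow_ne_zero 2 hb
  have h1 : ⟪G, b⟫ = 0 := by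
    rw [hG, inner_sub_left, real_inner_smul_left, hbb]
    field_simp; ring
  refine ⟨h1, ?_⟩
  have ha : a = G + ((‖b‖ ^ 2)⁻¹ * ⟪a, b⟫) • b := by rw [hG]; abel
  nth_rewrite 1 [ha]
  rw [inner_add_left, real_inner_smul_left, real_inner_comm G b, h1,
    real_inner_self_eq_norm_sq]
  ring









lemma sigma_cont (θ : E3) : Continuous (fun s : ℝ => max (θ 0 * s + θ 1) 0) :=
  ((continuous_const.mul continuous_id).add continuous_const).max continuous_const

lemma sigma_abs_le (θ : E3) {s : ℝ} (hs : s ∈ Icc (0:ℝ) 1) :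
    |max (θ 0 * s + θ 1) 0| ≤ |θ 0| + |θ 1| := by
  have h1 : |max (θ 0 * s + θ 1) 0| ≤ |θ 0 * s + θ 1| := by
    rw [abs_le]
    exact ⟨(neg_nonpos.2 (abs_nonneg _)).trans (le_max_right _ _),
      max_le (le_abs_self _) (abs_nonneg _)⟩
  refine h1.trans ?_
  calc |θ 0 * s + θ 1| ≤ |θ 0 * s| + |θ 1| := abs_add_le _ _
  _ ≤ |θ 0| * 1 + |θ 1| := by
      rw [abs_mul]
      have hs1 : |s| ≤ 1 := abs_le.2 ⟨by linarith [hs.1], hs.2⟩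
      nlinarith [abs_nonneg (θ 0), abs_nonneg s]
  _ = |θ 0| + |θ 1| := by ring

lemma sigma_sub_le (θ θ' : E3) {s : ℝ} (hs : s ∈ Icc (0:ℝ) 1) :
    |max (θ 0 * s + θ 1) 0 - max (θ' 0 * s + θ' 1) 0| ≤ 2 * ‖θ - θ'‖ := by
  refine (abs_max_sub_max_le_abs _ _ _).trans ?_
  have h : θ 0 * s + θ 1 - (θ' 0 * s + θ' 1) = (θ 0 - θ' 0) * s + (θ 1 - θ' 1) := by ring
  rw [h]
  have h0 : |θ 0 - θ' 0| ≤ ‖θ - θ'‖ := by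
    have := abs_coord_le (θ - θ') 0; simpa [PiLp.sub_apply] using this
  have h1 : |θ 1 - θ' 1| ≤ ‖θ - θ'‖ := by
    have := abs_coord_le (θ - θ') 1; simpa [PiLp.sub_apply] using this
  calc |(θ 0 - θ' 0) * s + (θ 1 - θ' 1)| ≤ |(θ 0 - θ' 0) * s| + |θ 1 - θ' 1| := abs_add_le _ _
  _ ≤ |θ 0 - θ' 0| * 1 + |θ 1 - θ' 1| := by
      rw [abs_mul]
      have hs1 : |s| ≤ 1 := abs_le.2 ⟨by linarith [hs.1], hs.2⟩
      nlinarith [abs_nonneg (θ 0 - θ' 0), abs_nonneg s]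
  _ ≤ 2 * ‖θ - θ'‖ := by linarith

lemma mfun_abs_le (θ : E3) : |mfun θ| ≤ |θ 0| + |θ 1| := by
  have := intervalIntegral.norm_integral_le_of_norm_le_const
    (C := |θ 0| + |θ 1|) (f := fun s => max (θ 0 * s + θ 1) 0) (a := (0:ℝ)) (b := 1) ?_
  · simpa [mfun] using this
  · intro s hs
    rw [Set.uIoc_of_le zero_le_one] at hs
    exact sigma_abs_le θ ⟨hs.1.le, hs.2⟩

lemma mfun_sub_le (θ θ' : E3) : |mfun θ - mfun θ'| ≤ 2 * ‖θ - θ'‖ := by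
  have hint : ∀ ϑ : E3, IntervalIntegrable (fun s => max (ϑ 0 * s + ϑ 1) 0) volume 0 1 :=
    fun ϑ => (sigma_cont ϑ).intervalIntegrable 0 1
  have hsub : mfun θ - mfun θ' =
      ∫ s in (0:ℝ)..1, (max (θ 0 * s + θ 1) 0 - max (θ' 0 * s + θ' 1) 0) := by
    rw [mfun, mfun, intervalIntegral.integral_sub (hint θ) (hint θ')]
  rw [hsub]
  have := intervalIntegral.norm_integral_le_of_norm_le_const
    (C := 2 * ‖θ - θ'‖)
    (f := fun s => max (θ 0 * s + θ 1) 0 - max (θ' 0 * s + θ' 1) 0) (a := (0:ℝ)) (b := 1) ?_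
  · simpa using this
  · intro s hs
    rw [Set.uIoc_of_le zero_le_one] at hs
    exact sigma_sub_le θ θ' ⟨hs.1.le, hs.2⟩

section WithF
variable {f : ℝ → ℝ}

lemma fbar_abs_le {Bf : ℝ} (hBf : ∀ s ∈ Icc (0:ℝ) 1, |f s| ≤ Bf) : |fbar f| ≤ Bf := by
  have := intervalIntegral.norm_integral_le_of_norm_le_const (C := Bf) (f := f)
    (a := (0:ℝ)) (b := 1) ?_
  · simpa [fbar] using this
  · intro s hs
    rw [Set.uIoc_of_le zero_le_one] at hs
    exact hBf s ⟨hs.1.le, hs.2⟩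

lemma A_contOn (hf : ContinuousOn f (Icc 0 1)) (θ : E3) :
    ContinuousOn (fun s => θ 2 * (max (θ 0 * s + θ 1) 0 - mfun θ) + fbar f - f s)
      (Icc (0:ℝ) 1) := by
  apply ContinuousOn.sub ?_ hf
  exact ((continuous_const.mul ((sigma_cont θ).sub continuous_const)).add
    continuous_const).continuousOn

lemma A_abs_le {Bf R : ℝ} (hBf : ∀ s ∈ Icc (0:ℝ) 1, |f s| ≤ Bf) (θ : E3)
    (hR : ‖θ‖ ≤ R) {s : ℝ} (hs : s ∈ Icc (0:ℝ) 1) :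
    |θ 2 * (max (θ 0 * s + θ 1) 0 - mfun θ) + fbar f - f s| ≤ 4 * R ^ 2 + 2 * Bf := by
  have h0 : |θ 0| ≤ R := (abs_coord_le θ 0).trans hR
  have h1 : |θ 1| ≤ R := (abs_coord_le θ 1).trans hR
  have h2 : |θ 2| ≤ R := (abs_coord_le θ 2).trans hR
  have hσ : |max (θ 0 * s + θ 1) 0| ≤ 2 * R := (sigma_abs_le θ hs).trans (by linarith)
  have hm : |mfun θ| ≤ 2 * R := (mfun_abs_le θ).trans (by linarith)
  have hfb : |fbar f| ≤ Bf := fbar_abs_le hBf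
  have hfs : |f s| ≤ Bf := hBf s hs
  have hprod : |θ 2 * (max (θ 0 * s + θ 1) 0 - mfun θ)| ≤ 4 * R ^ 2 := by
    rw [abs_mul]
    have : |max (θ 0 * s + θ 1) 0 - mfun θ| ≤ 4 * R := (abs_sub _ _).trans (by linarith)
    nlinarith [abs_nonneg (θ 2), abs_nonneg (max (θ 0 * s + θ 1) 0 - mfun θ)]
  calc |θ 2 * (max (θ 0 * s + θ 1) 0 - mfun θ) + fbar f - f s|
      ≤ |θ 2 * (max (θ 0 * s + θ 1) 0 - mfun θ)| + |fbar f| + |f s| := by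
        refine (abs_sub _ _).trans ?_
        gcongr
        exact abs_add_le _ _
  _ ≤ 4 * R ^ 2 + 2 * Bf := by linarith

lemma A_sub_le {R : ℝ} (θ θ' : E3) (hR : ‖θ‖ ≤ R) (hR' : ‖θ'‖ ≤ R)
    {s : ℝ} (hs : s ∈ Icc (0:ℝ) 1) :
    |(θ 2 * (max (θ 0 * s + θ 1) 0 - mfun θ) + fbar f - f s) -
      (θ' 2 * (max (θ' 0 * s + θ' 1) 0 - mfun θ') + fbar f - f s)| ≤ 8 * R * ‖θ - θ'‖ := by
  have h2 : |θ' 2| ≤ R := (abs_coord_le θ' 2).trans hR'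
  have hd2 : |θ 2 - θ' 2| ≤ ‖θ - θ'‖ := by
    have := abs_coord_le (θ - θ') 2; simpa [PiLp.sub_apply] using this
  have hσ : |max (θ 0 * s + θ 1) 0| ≤ 2 * R := by
    refine (sigma_abs_le θ hs).trans ?_
    have h0 : |θ 0| ≤ R := (abs_coord_le θ 0).trans hR
    have h1 : |θ 1| ≤ R := (abs_coord_le θ 1).trans hR
    linarith
  have hm : |mfun θ| ≤ 2 * R := by
    refine (mfun_abs_le θ).trans ?_
    have h0 : |θ 0| ≤ R := (abs_coord_le θ 0).trans hR
    have h1 : |θ 1| ≤ R := (abs_coord_le θ 1).trans hR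
    linarith
  have hσd : |max (θ 0 * s + θ 1) 0 - max (θ' 0 * s + θ' 1) 0| ≤ 2 * ‖θ - θ'‖ :=
    sigma_sub_le θ θ' hs
  have hmd : |mfun θ - mfun θ'| ≤ 2 * ‖θ - θ'‖ := mfun_sub_le θ θ'
  have hkey : (θ 2 * (max (θ 0 * s + θ 1) 0 - mfun θ) + fbar f - f s) -
      (θ' 2 * (max (θ' 0 * s + θ' 1) 0 - mfun θ') + fbar f - f s)
      = (θ 2 - θ' 2) * (max (θ 0 * s + θ 1) 0 - mfun θ)
        + θ' 2 * ((max (θ 0 * s + θ 1) 0 - max (θ' 0 * s + θ' 1) 0) - (mfun θ - mfun θ')) := by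
    ring
  rw [hkey]
  have hb1 : |(θ 2 - θ' 2) * (max (θ 0 * s + θ 1) 0 - mfun θ)| ≤ ‖θ - θ'‖ * (4 * R) := by
    rw [abs_mul]
    have : |max (θ 0 * s + θ 1) 0 - mfun θ| ≤ 4 * R := (abs_sub _ _).trans (by linarith)
    have hn : (0:ℝ) ≤ ‖θ - θ'‖ := norm_nonneg _
    nlinarith [abs_nonneg (θ 2 - θ' 2), abs_nonneg (max (θ 0 * s + θ 1) 0 - mfun θ)]
  have hb2 : |θ' 2 * ((max (θ 0 * s + θ 1) 0 - max (θ' 0 * s + θ' 1) 0) - (mfun θ - mfun θ'))|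
      ≤ R * (4 * ‖θ - θ'‖) := by
    rw [abs_mul]
    have : |(max (θ 0 * s + θ 1) 0 - max (θ' 0 * s + θ' 1) 0) - (mfun θ - mfun θ')|
        ≤ 4 * ‖θ - θ'‖ := (abs_sub _ _).trans (by linarith)
    have hRpos : (0:ℝ) ≤ R := (abs_nonneg _).trans h2
    nlinarith [abs_nonneg (θ' 2),
      abs_nonneg ((max (θ 0 * s + θ 1) 0 - max (θ' 0 * s + θ' 1) 0) - (mfun θ - mfun θ'))]
  calc |(θ 2 - θ' 2) * (max (θ 0 * s + θ 1) 0 - mfun θ)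
        + θ' 2 * ((max (θ 0 * s + θ 1) 0 - max (θ' 0 * s + θ' 1) 0) - (mfun θ - mfun θ'))|
      ≤ _ + _ := abs_add_le _ _
  _ ≤ ‖θ - θ'‖ * (4 * R) + R * (4 * ‖θ - θ'‖) := add_le_add hb1 hb2
  _ = 8 * R * ‖θ - θ'‖ := by ring

lemma riskL_lip (hf : ContinuousOn f (Icc 0 1)) {Bf R : ℝ}
    (hBf : ∀ s ∈ Icc (0:ℝ) 1, |f s| ≤ Bf) (θ θ' : E3) (hR : ‖θ‖ ≤ R) (hR' : ‖θ'‖ ≤ R) :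
    |riskL f θ - riskL f θ'| ≤ 16 * R * (4 * R ^ 2 + 2 * Bf) * ‖θ - θ'‖ := by
  have hint : ∀ ϑ : E3, IntervalIntegrable
      (fun s => (ϑ 2 * (max (ϑ 0 * s + ϑ 1) 0 - mfun ϑ) + fbar f - f s) ^ 2) volume 0 1 := by
    intro ϑ
    apply ContinuousOn.intervalIntegrable
    rw [Set.uIcc_of_le zero_le_one]
    exact (A_contOn hf ϑ).pow 2
  have hsub : riskL f θ - riskL f θ' = ∫ s in (0:ℝ)..1,
      ((θ 2 * (max (θ 0 * s + θ 1) 0 - mfun θ) + fbar f - f s) ^ 2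
        - (θ' 2 * (max (θ' 0 * s + θ' 1) 0 - mfun θ') + fbar f - f s) ^ 2) := by
    rw [riskL, riskL, intervalIntegral.integral_sub (hint θ) (hint θ')]
  rw [hsub]
  have := intervalIntegral.norm_integral_le_of_norm_le_const
    (C := 16 * R * (4 * R ^ 2 + 2 * Bf) * ‖θ - θ'‖)
    (f := fun s => (θ 2 * (max (θ 0 * s + θ 1) 0 - mfun θ) + fbar f - f s) ^ 2
        - (θ' 2 * (max (θ' 0 * s + θ' 1) 0 - mfun θ') + fbar f - f s) ^ 2)
    (a := (0:ℝ)) (b := 1) ?_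
  · simpa using this
  · intro s hs
    rw [Set.uIoc_of_le zero_le_one] at hs
    have hs' : s ∈ Icc (0:ℝ) 1 := ⟨hs.1.le, hs.2⟩
    set A1 := θ 2 * (max (θ 0 * s + θ 1) 0 - mfun θ) + fbar f - f s with hA1
    set A2 := θ' 2 * (max (θ' 0 * s + θ' 1) 0 - mfun θ') + fbar f - f s with hA2
    have hfact : A1 ^ 2 - A2 ^ 2 = (A1 - A2) * (A1 + A2) := by ring
    simp only [Real.norm_eq_abs]
    rw [show (θ 2 * (max (θ 0 * s + θ 1) 0 - mfun θ) + fbar f - f s) ^ 2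
        - (θ' 2 * (max (θ' 0 * s + θ' 1) 0 - mfun θ') + fbar f - f s) ^ 2
        = A1 ^ 2 - A2 ^ 2 from rfl, hfact, abs_mul]
    have hd : |A1 - A2| ≤ 8 * R * ‖θ - θ'‖ := A_sub_le θ θ' hR hR' hs'
    have ha1 : |A1| ≤ 4 * R ^ 2 + 2 * Bf := A_abs_le hBf θ hR hs'
    have ha2 : |A2| ≤ 4 * R ^ 2 + 2 * Bf := A_abs_le hBf θ' hR' hs'
    have hsum : |A1 + A2| ≤ 2 * (4 * R ^ 2 + 2 * Bf) := (abs_add_le _ _).trans (by linarith)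
    have h1 : (0:ℝ) ≤ |A1 - A2| := abs_nonneg _
    have h2 : (0:ℝ) ≤ |A1 + A2| := abs_nonneg _
    nlinarith

lemma riskL_lb (hf : ContinuousOn f (Icc 0 1)) (θ : E3) :
    (1/2) * (θ 2) ^ 2 * (∫ s in (0:ℝ)..1, (max (θ 0 * s + θ 1) 0 - mfun θ) ^ 2)
      - (∫ s in (0:ℝ)..1, (fbar f - f s) ^ 2) ≤ riskL f θ := by
  have hIy : IntervalIntegrable (fun s => (fbar f - f s) ^ 2) volume 0 1 := by
    apply ContinuousOn.intervalIntegrable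
    rw [Set.uIcc_of_le zero_le_one]
    exact ((continuousOn_const.sub hf).pow 2)
  have hIx : IntervalIntegrable
      (fun s => (1/2) * (θ 2) ^ 2 * (max (θ 0 * s + θ 1) 0 - mfun θ) ^ 2) volume 0 1 := by
    apply ContinuousOn.intervalIntegrable
    rw [Set.uIcc_of_le zero_le_one]
    exact (continuousOn_const.mul ((((sigma_cont θ).sub continuous_const).continuousOn).pow 2))
  have hIA : IntervalIntegrable
      (fun s => (θ 2 * (max (θ 0 * s + θ 1) 0 - mfun θ) + fbar f - f s) ^ 2) volume 0 1 := by
    apply ContinuousOn.intervalIntegrable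
    rw [Set.uIcc_of_le zero_le_one]
    exact (A_contOn hf θ).pow 2
  have hmono := intervalIntegral.integral_mono_on (μ := volume) zero_le_one
    (hIx.sub hIy) hIA (fun s hs => ?_)
  · rw [intervalIntegral.integral_sub hIx hIy, intervalIntegral.integral_const_mul] at hmono
    exact hmono.trans_eq rfl
  · have key : ∀ x y : ℝ, (1/2) * x ^ 2 - y ^ 2 ≤ (x + y) ^ 2 := by
      intro x y; nlinarith [sq_nonneg (x + 2*y)]
    have := key (θ 2 * (max (θ 0 * s + θ 1) 0 - mfun θ)) (fbar f - f s)
    calc (1/2) * (θ 2) ^ 2 * (max (θ 0 * s + θ 1) 0 - mfun θ) ^ 2 - (fbar f - f s) ^ 2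
        = (1/2) * (θ 2 * (max (θ 0 * s + θ 1) 0 - mfun θ)) ^ 2 - (fbar f - f s) ^ 2 := by ring
    _ ≤ (θ 2 * (max (θ 0 * s + θ 1) 0 - mfun θ) + (fbar f - f s)) ^ 2 := this
    _ = (θ 2 * (max (θ 0 * s + θ 1) 0 - mfun θ) + fbar f - f s) ^ 2 := by ring

end WithF







lemma sub_bound (θ : E3) (m : ℝ) {c d : ℝ} (L : ℝ) (hc : 0 ≤ c) (hcd : c ≤ d) (hd : d ≤ 1)
    (hq : ∀ s ∈ Ioc c d, L ^ 2 ≤ (max (θ 0 * s + θ 1) 0 - m) ^ 2) :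
    L ^ 2 * (d - c) ≤ ∫ s in (0:ℝ)..1, (max (θ 0 * s + θ 1) 0 - m) ^ 2 := by
  set q : ℝ → ℝ := fun s => (max (θ 0 * s + θ 1) 0 - m) ^ 2 with hq'
  have hqc : Continuous q := by
    apply Continuous.pow
    exact (((continuous_const.mul continuous_id).add continuous_const).max
      continuous_const).sub continuous_const
  have hint : IntegrableOn q (Ioc 0 1) := hqc.integrableOn_Ioc
  rw [intervalIntegral.integral_of_le zero_le_one]
  have h1 : L ^ 2 * (d - c) = L ^ 2 * (volume (Ioc c d)).toReal := by
    rw [Real.volume_Ioc, ENNReal.toReal_ofReal (by linarith)]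
  rw [h1]
  calc L ^ 2 * (volume (Ioc c d)).toReal ≤ ∫ s in Ioc c d, q s :=
        setIntegral_ge_of_const_le_real measurableSet_Ioc measure_Ioc_lt_top.ne hq
          (hqc.integrableOn_Ioc)
  _ ≤ ∫ s in Ioc 0 1, q s := by
      apply setIntegral_mono_set hint
      · filter_upwards with s
        positivity
      · exact HasSubset.Subset.eventuallyLE (Ioc_subset_Ioc hc hd)

set_option maxHeartbeats 1000000 in
lemma variance_lb {θ : E3} {ε : ℝ} (hε : 0 < ε) (hg : gfun θ = 1)
    (hvol : (volume (Iact θ)).toReal ∈ Ico ε 1) (m : ℝ) :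
    ε ^ 3 / 128 ≤ ∫ s in (0:ℝ)..1, (max (θ 0 * s + θ 1) 0 - m) ^ 2 := by
  have hab : θ 0 ^ 2 + θ 1 ^ 2 = 1 := hg
  have hIact : Iact θ = {s ∈ Icc (0:ℝ) 1 | 0 < θ 0 * s + θ 1} := rfl
  have hIs : Iact θ ⊆ Icc (0:ℝ) 1 := fun s hs => hs.1
  have hIle : volume (Iact θ) ≤ 1 := by
    have := measure_mono (μ := volume) hIs
    rwa [Real.volume_Icc, sub_zero, ENNReal.ofReal_one] at this
  rcases lt_trichotomy (θ 0) 0 with haneg | ha0 | hapos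
  · -- a < 0 : active interval is [0, t1)
    set t1 : ℝ := -θ 1 / θ 0 with ht1
    have hane : θ 0 ≠ 0 := ne_of_lt haneg
    have hset : Iact θ = Icc (0:ℝ) 1 ∩ Iio t1 := by
      rw [hIact]
      ext s
      simp only [Set.mem_setOf_eq, Set.mem_inter_iff, Set.mem_Iio, Set.mem_Icc]
      constructor
      · rintro ⟨hs1, hs2⟩
        exact ⟨hs1, by rw [ht1, lt_div_iff_of_neg haneg]; linarith⟩
      · rintro ⟨hs1, hs2⟩
        rw [ht1, lt_div_iff_of_neg haneg] at hs2
        exact ⟨hs1, by linarith⟩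
    by_cases h1t : 1 ≤ t1
    · exfalso
      have hsub : Ico (0:ℝ) 1 ⊆ Iact θ := by
        rw [hset]
        intro s hs
        exact ⟨⟨hs.1, hs.2.le⟩, lt_of_lt_of_le hs.2 h1t⟩
      have h1 : (1:ℝ≥0∞) ≤ volume (Iact θ) := by
        have := measure_mono (μ := volume) hsub
        rwa [Real.volume_Ico, sub_zero, ENNReal.ofReal_one] at this
      have heq : volume (Iact θ) = 1 := le_antisymm hIle h1
      rw [heq] at hvol
      simp at hvol
    push_neg at h1t
    by_cases ht0 : t1 ≤ 0
    · exfalso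
      have : Iact θ = ∅ := by
        rw [hset, Set.eq_empty_iff_forall_notMem]
        rintro s ⟨hs1, hs2⟩
        exact absurd (lt_of_le_of_lt (ht0.trans hs1.1) hs2) (lt_irrefl t1)
      rw [this] at hvol
      simp at hvol
      linarith
    push_neg at ht0
    have hset2 : Iact θ = Ico 0 t1 := by
      rw [hset]
      ext s
      simp only [Set.mem_inter_iff, Set.mem_Icc, Set.mem_Iio, Set.mem_Ico]
      exact ⟨fun ⟨⟨h1, h2⟩, h3⟩ => ⟨h1, h3⟩, fun ⟨h1, h2⟩ => ⟨⟨h1, by linarith⟩, h2⟩⟩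
    have hvol2 : (volume (Iact θ)).toReal = t1 := by
      rw [hset2, Real.volume_Ico, sub_zero, ENNReal.toReal_ofReal ht0.le]
    rw [hvol2] at hvol
    have hεu : ε ≤ t1 := hvol.1
    have hu1 : t1 < 1 := hvol.2
    have hat : θ 0 * t1 = -θ 1 := by
      rw [ht1]; field_simp
    have hb2 : θ 1 = -θ 0 * t1 := by linarith [hat]
    have hsq : (θ 0 * t1) ^ 2 = θ 1 ^ 2 := by rw [hat]; ring
    have ht1sq : t1 ^ 2 ≤ 1 := by nlinarith
    have ha2 : 1 / 2 ≤ θ 0 ^ 2 := by nlinarith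
    set α : ℝ := -θ 0 with hα'
    have hαpos : 0 < α := by rw [hα']; linarith
    have hα2 : 1 / 2 ≤ α ^ 2 := by rw [hα']; simpa using ha2
    have hbound : (α * t1 / 4) ^ 2 * (t1 / 4) ≤
        ∫ s in (0:ℝ)..1, (max (θ 0 * s + θ 1) 0 - m) ^ 2 := by
      by_cases hm : m ≤ α * t1 / 2
      · have hkey := sub_bound θ m (α * t1 / 4) (c := 0) (d := t1 / 4) le_rfl (by linarith)
          (by linarith) ?_
        · calc (α * t1 / 4) ^ 2 * (t1 / 4) = (α * t1 / 4) ^ 2 * (t1 / 4 - 0) := by ring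
          _ ≤ _ := hkey
        · intro s hs
          have hσ : θ 0 * s + θ 1 = α * (t1 - s) := by
            rw [hb2, hα']; ring
          have hpos : 0 < α * (t1 - s) := mul_pos hαpos (by linarith [hs.2])
          rw [hσ, max_eq_left hpos.le]
          have h1 : α * t1 / 4 ≤ α * (t1 - s) - m := by
            have : α * (3 * t1 / 4) ≤ α * (t1 - s) :=
              mul_le_mul_of_nonneg_left (by linarith [hs.2]) hαpos.le
            linarith
          have h2 : (0:ℝ) ≤ α * t1 / 4 := by positivity
          nlinarith
      · push_neg at hm
        have hkey := sub_bound θ m (α * t1 / 4) (c := 3 * t1 / 4) (d := t1)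
          (by positivity) (by linarith) (by linarith) ?_
        · calc (α * t1 / 4) ^ 2 * (t1 / 4) = (α * t1 / 4) ^ 2 * (t1 - 3 * t1 / 4) := by ring
          _ ≤ _ := hkey
        · intro s hs
          have hσ : θ 0 * s + θ 1 = α * (t1 - s) := by
            rw [hb2, hα']; ring
          have hnn : 0 ≤ α * (t1 - s) := mul_nonneg hαpos.le (by linarith [hs.2])
          rw [hσ, max_eq_left hnn]
          have hup : α * (t1 - s) ≤ α * t1 / 4 := by
            have : α * (t1 - s) ≤ α * (t1 / 4) :=
              mul_le_mul_of_nonneg_left (by linarith [hs.1]) hαpos.le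
            linarith
          have h1 : α * t1 / 4 ≤ m - α * (t1 - s) := by linarith
          have h2 : (0:ℝ) ≤ α * t1 / 4 := by positivity
          nlinarith
    refine le_trans ?_ hbound
    have hu0 : 0 < t1 := ht0
    have h1 : t1 ^ 3 / 128 ≤ (α * t1 / 4) ^ 2 * (t1 / 4) := by
      have he : (α * t1 / 4) ^ 2 * (t1 / 4) = α ^ 2 * t1 ^ 3 / 64 := by ring
      rw [he]
      nlinarith [mul_nonneg (show (0:ℝ) ≤ α ^ 2 - 1/2 by linarith) (pow_pos hu0 3).le]
    refine le_trans ?_ h1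
    exact div_le_div_of_nonneg_right (pow_le_pow_left₀ hε.le hεu 3) (by norm_num)
  · -- a = 0 : impossible
    exfalso
    rcases le_or_gt (θ 1) 0 with hb | hb
    · have : Iact θ = ∅ := by
        rw [hIact, Set.eq_empty_iff_forall_notMem]
        rintro s ⟨hs1, hs2⟩
        rw [ha0, zero_mul, zero_add] at hs2
        linarith
      rw [this] at hvol
      simp at hvol
      linarith
    · have : Iact θ = Icc 0 1 := by
        rw [hIact]
        ext s
        simp only [Set.mem_setOf_eq, Set.mem_Icc]
        refine ⟨fun h => h.1, fun h => ⟨h, ?_⟩⟩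
        rw [ha0, zero_mul, zero_add]
        exact hb
      rw [this] at hvol
      rw [Real.volume_Icc, sub_zero, ENNReal.toReal_ofReal zero_le_one] at hvol
      simp at hvol
  · -- a > 0 : active interval is (t0, 1]
    set t0 : ℝ := -θ 1 / θ 0 with ht0'
    have hane : θ 0 ≠ 0 := ne_of_gt hapos
    have hset : Iact θ = Icc (0:ℝ) 1 ∩ Ioi t0 := by
      rw [hIact]
      ext s
      simp only [Set.mem_setOf_eq, Set.mem_inter_iff, Set.mem_Ioi, Set.mem_Icc]
      constructor
      · rintro ⟨hs1, hs2⟩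
        exact ⟨hs1, by rw [ht0', div_lt_iff₀ hapos]; linarith⟩
      · rintro ⟨hs1, hs2⟩
        rw [ht0', div_lt_iff₀ hapos] at hs2
        exact ⟨hs1, by linarith⟩
    by_cases ht0neg : t0 ≤ 0
    · exfalso
      have hsub : Ioc (0:ℝ) 1 ⊆ Iact θ := by
        rw [hset]
        intro s hs
        exact ⟨⟨hs.1.le, hs.2⟩, lt_of_le_of_lt ht0neg hs.1⟩
      have h1 : (1:ℝ≥0∞) ≤ volume (Iact θ) := by
        have := measure_mono (μ := volume) hsub
        rwa [Real.volume_Ioc, sub_zero, ENNReal.ofReal_one] at this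
      have heq : volume (Iact θ) = 1 := le_antisymm hIle h1
      rw [heq] at hvol
      simp at hvol
    push_neg at ht0neg
    by_cases ht1 : 1 ≤ t0
    · exfalso
      have : Iact θ = ∅ := by
        rw [hset, Set.eq_empty_iff_forall_notMem]
        rintro s ⟨hs1, hs2⟩
        have h1 : s ≤ 1 := hs1.2
        have h2 : t0 < s := hs2
        linarith
      rw [this] at hvol
      simp at hvol
      linarith
    push_neg at ht1
    have hset2 : Iact θ = Ioc t0 1 := by
      rw [hset]
      ext s
      simp only [Set.mem_inter_iff, Set.mem_Icc, Set.mem_Ioi, Set.mem_Ioc]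
      exact ⟨fun ⟨⟨h1, h2⟩, h3⟩ => ⟨h3, h2⟩, fun ⟨h1, h2⟩ => ⟨⟨by linarith, h2⟩, h1⟩⟩
    have hvol2 : (volume (Iact θ)).toReal = 1 - t0 := by
      rw [hset2, Real.volume_Ioc, ENNReal.toReal_ofReal (by linarith)]
    rw [hvol2] at hvol
    have hεu : ε ≤ 1 - t0 := hvol.1
    have hu1 : 1 - t0 < 1 := hvol.2
    have hu0 : 0 < 1 - t0 := lt_of_lt_of_le hε hεu
    have hat : θ 0 * t0 = -θ 1 := by
      rw [ht0']; field_simp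
    have hb2 : θ 1 = -θ 0 * t0 := by linarith [hat]
    have hsq : (θ 0 * t0) ^ 2 = θ 1 ^ 2 := by rw [hat]; ring
    have ht0sq : t0 ^ 2 ≤ 1 := by nlinarith
    have ha2 : 1 / 2 ≤ θ 0 ^ 2 := by nlinarith
    set u : ℝ := 1 - t0 with hu'
    have hbound : (θ 0 * u / 4) ^ 2 * (u / 4) ≤
        ∫ s in (0:ℝ)..1, (max (θ 0 * s + θ 1) 0 - m) ^ 2 := by
      by_cases hm : m ≤ θ 0 * u / 2
      · have hkey := sub_bound θ m (θ 0 * u / 4) (c := 1 - u / 4) (d := 1)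
          (by rw [hu']; linarith) (by rw [hu']; linarith) le_rfl ?_
        · calc (θ 0 * u / 4) ^ 2 * (u / 4) = (θ 0 * u / 4) ^ 2 * (1 - (1 - u / 4)) := by ring
          _ ≤ _ := hkey
        · intro s hs
          have hσ : θ 0 * s + θ 1 = θ 0 * (s - t0) := by
            rw [hb2]; ring
          have hst : 3 * u / 4 ≤ s - t0 := by
            have h3 : 1 - u / 4 < s := hs.1
            rw [hu'] at *
            linarith
          have hpos : 0 < θ 0 * (s - t0) := mul_pos hapos (by linarith)
          rw [hσ, max_eq_left hpos.le]
          have h1 : θ 0 * u / 4 ≤ θ 0 * (s - t0) - m := by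
            have : θ 0 * (3 * u / 4) ≤ θ 0 * (s - t0) :=
              mul_le_mul_of_nonneg_left hst hapos.le
            linarith
          have h2 : (0:ℝ) ≤ θ 0 * u / 4 := by positivity
          nlinarith
      · push_neg at hm
        have hkey := sub_bound θ m (θ 0 * u / 4) (c := t0) (d := t0 + u / 4)
          ht0neg.le (by linarith) (by rw [hu']; linarith) ?_
        · calc (θ 0 * u / 4) ^ 2 * (u / 4) = (θ 0 * u / 4) ^ 2 * (t0 + u / 4 - t0) := by ring
          _ ≤ _ := hkey
        · intro s hs
          have hσ : θ 0 * s + θ 1 = θ 0 * (s - t0) := by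
            rw [hb2]; ring
          have hnn : 0 ≤ θ 0 * (s - t0) := mul_nonneg hapos.le (by linarith [hs.1])
          rw [hσ, max_eq_left hnn]
          have hup : θ 0 * (s - t0) ≤ θ 0 * u / 4 := by
            have : θ 0 * (s - t0) ≤ θ 0 * (u / 4) :=
              mul_le_mul_of_nonneg_left (by linarith [hs.2]) hapos.le
            linarith
          have h1 : θ 0 * u / 4 ≤ m - θ 0 * (s - t0) := by linarith
          have h2 : (0:ℝ) ≤ θ 0 * u / 4 := by positivity
          nlinarith
    refine le_trans ?_ hbound
    have h1 : u ^ 3 / 128 ≤ (θ 0 * u / 4) ^ 2 * (u / 4) := by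
      have he : (θ 0 * u / 4) ^ 2 * (u / 4) = θ 0 ^ 2 * u ^ 3 / 64 := by ring
      rw [he]
      nlinarith [mul_nonneg (show (0:ℝ) ≤ θ 0 ^ 2 - 1/2 by linarith) (pow_pos hu0 3).le]
    refine le_trans ?_ h1
    exact div_le_div_of_nonneg_right (pow_le_pow_left₀ hε.le hεu 3) (by norm_num)



end Stmt8Aux

namespace Stmt8Aux

lemma gfun_lip {R : ℝ} (θ θ' : E3) (hθ : ‖θ‖ ≤ R) (hθ' : ‖θ'‖ ≤ R) :
    |gfun θ - gfun θ'| ≤ 4 * R * ‖θ - θ'‖ := by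
  have h00 : |θ 0| ≤ R := (abs_coord_le θ 0).trans hθ
  have h01 : |θ 1| ≤ R := (abs_coord_le θ 1).trans hθ
  have h10 : |θ' 0| ≤ R := (abs_coord_le θ' 0).trans hθ'
  have h11 : |θ' 1| ≤ R := (abs_coord_le θ' 1).trans hθ'
  have hd0 : |θ 0 - θ' 0| ≤ ‖θ - θ'‖ := by
    have := abs_coord_le (θ - θ') 0; simpa [PiLp.sub_apply] using this
  have hd1 : |θ 1 - θ' 1| ≤ ‖θ - θ'‖ := by
    have := abs_coord_le (θ - θ') 1; simpa [PiLp.sub_apply] using this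
  have hkey : gfun θ - gfun θ' = (θ 0 - θ' 0) * (θ 0 + θ' 0) + (θ 1 - θ' 1) * (θ 1 + θ' 1) := by
    simp only [gfun]; ring
  rw [hkey]
  have hb0 : |(θ 0 - θ' 0) * (θ 0 + θ' 0)| ≤ ‖θ - θ'‖ * (2 * R) := by
    rw [abs_mul]
    have hsum : |θ 0 + θ' 0| ≤ 2 * R := (abs_add_le _ _).trans (by linarith)
    nlinarith [abs_nonneg (θ 0 - θ' 0), abs_nonneg (θ 0 + θ' 0), norm_nonneg (θ - θ')]
  have hb1 : |(θ 1 - θ' 1) * (θ 1 + θ' 1)| ≤ ‖θ - θ'‖ * (2 * R) := by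
    rw [abs_mul]
    have hsum : |θ 1 + θ' 1| ≤ 2 * R := (abs_add_le _ _).trans (by linarith)
    nlinarith [abs_nonneg (θ 1 - θ' 1), abs_nonneg (θ 1 + θ' 1), norm_nonneg (θ - θ')]
  calc |(θ 0 - θ' 0) * (θ 0 + θ' 0) + (θ 1 - θ' 1) * (θ 1 + θ' 1)|
      ≤ _ + _ := abs_add_le _ _
  _ ≤ ‖θ - θ'‖ * (2 * R) + ‖θ - θ'‖ * (2 * R) := add_le_add hb0 hb1
  _ = 4 * R * ‖θ - θ'‖ := by ring

lemma gfun_pos_coords {θ : E3} (h : 0 < gfun θ) : 0 < |θ 0| + |θ 1| := by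
  by_contra hc
  push_neg at hc
  have h0 : |θ 0| = 0 := le_antisymm (by linarith [abs_nonneg (θ 1)]) (abs_nonneg _)
  have h1 : |θ 1| = 0 := le_antisymm (by linarith [abs_nonneg (θ 0)]) (abs_nonneg _)
  have : gfun θ = 0 := by
    simp only [gfun, abs_eq_zero.1 h0, abs_eq_zero.1 h1]
    ring
  linarith

end Stmt8Aux

open Stmt8Aux in
set_option maxHeartbeats 2000000 in
/-- Lemma 3.4: the gradient flow trajectory is bounded on the set of times `t` at which
the Lebesgue measure of the activity interval `I^{Θ(t)}` lies in `[ε, 1)`. -/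
theorem stmt8
    (f : ℝ → ℝ) (hf : ContinuousOn f (Set.Icc 0 1))
    (h𝓛diff : ∀ θ : EuclideanSpace ℝ (Fin 3), 0 < |θ 0| + |θ 1| →
      DifferentiableAt ℝ (riskL f) θ)
    (𝔊 : EuclideanSpace ℝ (Fin 3) → EuclideanSpace ℝ (Fin 3))
    (h𝔊meas : Measurable 𝔊)
    (h𝔊loc : ∀ θ : EuclideanSpace ℝ (Fin 3),
      ∃ r > (0:ℝ), ∃ C : ℝ, ∀ x ∈ Metric.ball θ r, ‖𝔊 x‖ ≤ C)
    (h𝔊 : ∀ θ : EuclideanSpace ℝ (Fin 3), 0 < |θ 0| + |θ 1| →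
      𝔊 θ = gradient (riskL f) θ -
        ((‖gradient gfun θ‖ ^ 2)⁻¹ * ⟪gradient (riskL f) θ, gradient gfun θ⟫) •
          gradient gfun θ)
    (Θ : ℝ → EuclideanSpace ℝ (Fin 3))
    (hΘ0 : gfun (Θ 0) = 1)
    (hΘint : ∀ t : ℝ, 0 ≤ t → IntervalIntegrable (fun u => 𝔊 (Θ u)) volume 0 t)
    (hΘ : ∀ t : ℝ, 0 ≤ t → Θ t = Θ 0 - ∫ u in (0:ℝ)..t, 𝔊 (Θ u)) :
    ∀ ε : ℝ, 0 < ε → ∃ C : ℝ, ∀ t : ℝ, 0 ≤ t →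
      (volume (Iact (Θ t))).toReal ∈ Set.Ico ε 1 → ‖Θ t‖ ≤ C := by
  -- bound on `f`
  obtain ⟨Bf, hBf'⟩ := isCompact_Icc.exists_bound_of_continuousOn hf
  have hBf : ∀ s ∈ Icc (0:ℝ) 1, |f s| ≤ Bf := by
    intro s hs; simpa [Real.norm_eq_abs] using hBf' s hs
  have hBf0 : 0 ≤ Bf := le_trans (abs_nonneg (f 0)) (hBf 0 ⟨le_rfl, zero_le_one⟩)
  -- continuity of the trajectory
  have hcontΘ : ∀ T : ℝ, 0 ≤ T → ContinuousOn Θ (Icc 0 T) := by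
    intro T hT
    have hInt : IntegrableOn (fun u => 𝔊 (Θ u)) (uIcc 0 T) volume := by
      have := hΘint T hT
      rw [intervalIntegrable_iff_integrableOn_Icc_of_le hT] at this
      rwa [Set.uIcc_of_le hT]
    have hP := intervalIntegral.continuousOn_primitive_interval hInt
    rw [Set.uIcc_of_le hT] at hP
    exact (continuousOn_const.sub hP).congr fun x hx => hΘ x hx.1
  -- boundedness of the vector field along the trajectory on compact time intervals
  have hMT : ∀ T : ℝ, 0 ≤ T → ∃ M : ℝ, 0 ≤ M ∧ ∀ u ∈ Icc (0:ℝ) T, ‖𝔊 (Θ u)‖ ≤ M := by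
    intro T hT
    have hK : IsCompact (Θ '' Icc 0 T) := isCompact_Icc.image_of_continuousOn (hcontΘ T hT)
    choose r hr C hC using h𝔊loc
    obtain ⟨b', hb'K, hb'fin, hcover⟩ := hK.elim_finite_subcover_image
      (fun θ _ => Metric.isOpen_ball)
      (fun θ hθ => Set.mem_biUnion hθ (Metric.mem_ball_self (hr θ)))
    obtain ⟨M0, hM0⟩ := (hb'fin.image C).bddAbove
    refine ⟨max M0 0, le_max_right _ _, ?_⟩
    intro u hu
    obtain ⟨θi, hθi, hball⟩ := Set.mem_iUnion₂.1 (hcover (Set.mem_image_of_mem Θ hu))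
    exact (hC θi (Θ u) hball).trans ((hM0 (Set.mem_image_of_mem C hθi)).trans (le_max_left _ _))
  -- Lipschitz bound for the trajectory
  have hΘlip : ∀ T : ℝ, 0 ≤ T → ∀ M : ℝ, (∀ u ∈ Icc (0:ℝ) T, ‖𝔊 (Θ u)‖ ≤ M) →
      ∀ s ∈ Icc (0:ℝ) T, ∀ t ∈ Icc (0:ℝ) T, ‖Θ t - Θ s‖ ≤ M * |t - s| := by
    intro T hT M hM s hs t ht
    have hmem : ∀ x : ℝ, x ∈ Icc (0:ℝ) T → x ∈ uIcc (0:ℝ) T := by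
      intro x hx; rwa [Set.uIcc_of_le hT]
    have hII0s : IntervalIntegrable (fun u => 𝔊 (Θ u)) volume 0 s :=
      (hΘint T hT).mono_set (Set.uIcc_subset_uIcc (hmem 0 ⟨le_rfl, hT⟩) (hmem s hs))
    have hII0t : IntervalIntegrable (fun u => 𝔊 (Θ u)) volume 0 t :=
      (hΘint T hT).mono_set (Set.uIcc_subset_uIcc (hmem 0 ⟨le_rfl, hT⟩) (hmem t ht))
    have hIIst : IntervalIntegrable (fun u => 𝔊 (Θ u)) volume s t :=
      (hΘint T hT).mono_set (Set.uIcc_subset_uIcc (hmem s hs) (hmem t ht))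
    have hadd := intervalIntegral.integral_add_adjacent_intervals hII0s hIIst
    have hkey : Θ t - Θ s = -∫ u in s..t, 𝔊 (Θ u) := by
      rw [hΘ t ht.1, hΘ s hs.1, ← hadd]
      abel
    rw [hkey, norm_neg]
    apply intervalIntegral.norm_integral_le_of_norm_le_const
    intro u hu
    apply hM
    rcases le_total s t with hst | hst
    · rw [Set.uIoc_of_le hst] at hu
      exact ⟨hs.1.trans hu.1.le, hu.2.trans ht.2⟩
    · rw [Set.uIoc_of_ge hst] at hu
      exact ⟨ht.1.trans hu.1.le, hu.2.trans hs.2⟩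
  -- a.e. differentiability of the trajectory
  have hΘaeD : ∀ T : ℝ, 0 < T → ∃ E : Set ℝ, volume E = 0 ∧
      ∀ x ∈ Ioo (0:ℝ) T, x ∉ E → HasDerivAt Θ (-(𝔊 (Θ x))) x := by
    intro T hT
    have hint : IntegrableOn (fun u => 𝔊 (Θ u)) (Ioc 0 T) volume := by
      have := hΘint T hT.le
      rw [intervalIntegrable_iff, Set.uIoc_of_le hT.le] at this
      exact this
    have hae := ae_hasDerivAt_primitive hint
    refine ⟨{x | ¬ (x ∈ Ioo (0:ℝ) T →
      HasDerivAt (fun t => ∫ u in (0:ℝ)..t, 𝔊 (Θ u)) (𝔊 (Θ x)) x)}, ?_, ?_⟩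
    · exact ae_iff.1 hae
    · intro x hx hxE
      have hP : HasDerivAt (fun t => ∫ u in (0:ℝ)..t, 𝔊 (Θ u)) (𝔊 (Θ x)) x :=
        (of_not_not hxE) hx
      have h1 : HasDerivAt (fun u => Θ 0 - ∫ v in (0:ℝ)..u, 𝔊 (Θ v)) (-(𝔊 (Θ x))) x :=
        hP.const_sub (Θ 0)
      have heq : Θ =ᶠ[nhds x] fun u => Θ 0 - ∫ v in (0:ℝ)..u, 𝔊 (Θ v) := by
        filter_upwards [isOpen_Ioo.mem_nhds hx] with u hu
        exact hΘ u hu.1.le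
      exact h1.congr_of_eventuallyEq heq
  -- Invariance of the constraint manifold
  have master1 : ∀ t : ℝ, 0 ≤ t → gfun (Θ t) = 1 := by
    intro T hT0
    rcases eq_or_lt_of_le hT0 with hT | hT
    · rw [← hT]; exact hΘ0
    obtain ⟨M, hM0, hM⟩ := hMT T hT0
    obtain ⟨E, hE0, hED⟩ := hΘaeD T hT
    set ψ : ℝ → ℝ := fun s => gfun (Θ s) with hψ'
    have hψcont : ContinuousOn ψ (Icc 0 T) := continuous_gfun.comp_continuousOn (hcontΘ T hT0)
    set RT : ℝ := ‖Θ 0‖ + M * T with hRT'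
    have hRT0 : 0 ≤ RT := by positivity
    have hRT : ∀ s ∈ Icc (0:ℝ) T, ‖Θ s‖ ≤ RT := by
      intro s hs
      have := hΘlip T hT0 M hM 0 ⟨le_rfl, hT0⟩ s hs
      rw [sub_zero] at this
      have habs : |s| ≤ T := by rw [abs_of_nonneg hs.1]; exact hs.2
      calc ‖Θ s‖ = ‖Θ 0 + (Θ s - Θ 0)‖ := by
            rw [show Θ 0 + (Θ s - Θ 0) = Θ s from by abel]
      _ ≤ ‖Θ 0‖ + ‖Θ s - Θ 0‖ := norm_add_le _ _
      _ ≤ ‖Θ 0‖ + M * T := by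
          have h2 : M * |s| ≤ M * T := mul_le_mul_of_nonneg_left habs hM0
          have h3 : ‖Θ s - Θ 0‖ ≤ M * |s| := by
            simpa [abs_of_nonneg hs.1] using this
          linarith
      _ = RT := rfl
    set K : ℝ := 4 * RT * M with hK'
    have hKpos : 0 ≤ K := by positivity
    have hψlip : ∀ x ∈ Icc (0:ℝ) T, ∀ y ∈ Icc (0:ℝ) T, |ψ y - ψ x| ≤ K * |y - x| := by
      intro x hx y hy
      have h1 : |ψ y - ψ x| ≤ 4 * RT * ‖Θ y - Θ x‖ := gfun_lip _ _ (hRT y hy) (hRT x hx)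
      have h2 : ‖Θ y - Θ x‖ ≤ M * |y - x| := hΘlip T hT0 M hM x hx y hy
      calc |ψ y - ψ x| ≤ 4 * RT * (M * |y - x|) := by nlinarith
      _ = K * |y - x| := by rw [hK']; ring
    -- real induction via supremum
    set A : Set ℝ := {r ∈ Icc (0:ℝ) T | ∀ s ∈ Icc (0:ℝ) r, ψ s = 1} with hA'
    have hA0 : (0:ℝ) ∈ A := by
      refine ⟨⟨le_rfl, hT0⟩, fun s hs => ?_⟩
      have : s = 0 := le_antisymm hs.2 hs.1
      rw [this]; exact hΘ0
    have hAne : A.Nonempty := ⟨0, hA0⟩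
    have hAbdd : BddAbove A := ⟨T, fun r hr => hr.1.2⟩
    set c0 : ℝ := sSup A with hc0'
    have hc00 : 0 ≤ c0 := le_csSup hAbdd hA0
    have hc0T : c0 ≤ T := csSup_le hAne fun r hr => hr.1.2
    have hψlt : ∀ s : ℝ, 0 ≤ s → s < c0 → ψ s = 1 := by
      intro s hs0 hs
      obtain ⟨r, hrA, hsr⟩ := exists_lt_of_lt_csSup hAne hs
      exact hrA.2 s ⟨hs0, hsr.le⟩
    have hψc0 : ψ c0 = 1 := by
      rcases eq_or_lt_of_le hc00 with h0 | h0
      · rw [← h0]; exact hΘ0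
      · have hne : (nhdsWithin c0 (Ico 0 c0)).NeBot := by
          apply mem_closure_iff_nhdsWithin_neBot.mp
          rw [closure_Ico (ne_of_lt h0)]
          exact ⟨hc00, le_rfl⟩
        have htend : Filter.Tendsto ψ (nhdsWithin c0 (Ico 0 c0)) (nhds (ψ c0)) := by
          apply (hψcont c0 ⟨hc00, hc0T⟩).mono_left
          exact nhdsWithin_mono c0 (fun s hs => ⟨hs.1, hs.2.le.trans hc0T⟩)
        have htend1 : Filter.Tendsto ψ (nhdsWithin c0 (Ico 0 c0)) (nhds 1) := by
          apply Filter.Tendsto.congr' ?_ tendsto_const_nhds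
          filter_upwards [self_mem_nhdsWithin] with s hs
          exact (hψlt s hs.1 hs.2).symm
        exact tendsto_nhds_unique htend htend1
    have hc0eq : c0 = T := by
      by_contra hne
      have hlt : c0 < T := lt_of_le_of_ne hc0T hne
      have hev : ∀ᶠ s in nhdsWithin c0 (Icc 0 T), 1/2 < ψ s := by
        apply (hψcont c0 ⟨hc00, hc0T⟩).eventually
        rw [hψc0]
        exact eventually_gt_nhds (by norm_num)
      obtain ⟨δ, hδ, hball⟩ := Metric.mem_nhdsWithin_iff.1 hev
      set d : ℝ := min (c0 + δ/2) T with hd'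
      have hc0d : c0 < d := lt_min (by linarith) hlt
      have hdT : d ≤ T := min_le_right _ _
      have hhalf : ∀ s ∈ Icc c0 d, 1/2 < ψ s := by
        intro s hs
        apply hball
        constructor
        · rw [Metric.mem_ball, Real.dist_eq, abs_of_nonneg (by linarith [hs.1])]
          have h1 : s ≤ c0 + δ/2 := hs.2.trans (min_le_left _ _)
          linarith
        · exact ⟨hc00.trans hs.1, hs.2.trans hdT⟩
      have hconst : ∀ y ∈ Icc c0 d, ψ y = 1 := by
        intro y hy
        rcases eq_or_lt_of_le hy.1 with hcy | hcy
        · rw [← hcy]; exact hψc0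
        have hyT : y ≤ T := hy.2.trans hdT
        have hderivψ : ∀ x ∈ Ioo c0 y, x ∉ E → HasDerivAt ψ 0 x := by
          intro x hx hxE
          have hxT : x ∈ Ioo (0:ℝ) T := ⟨lt_of_le_of_lt hc00 hx.1, lt_of_lt_of_le hx.2 hyT⟩
          have hΘx := hED x hxT hxE
          have hgpos : 0 < gfun (Θ x) := by
            have := hhalf x ⟨hx.1.le, hx.2.le.trans hy.2⟩
            simp only [hψ'] at this
            linarith
          have hcoords := gfun_pos_coords hgpos
          have hbne : ‖gvec (Θ x)‖ ≠ 0 := by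
            intro h0
            have hn := norm_gvec_sq (Θ x)
            rw [h0] at hn
            nlinarith
          have hGform := h𝔊 (Θ x) hcoords
          rw [gradient_gfun] at hGform
          have horth := (proj_ortho hbne hGform).1
          have hchain := (hasGradientAt_gfun (Θ x)).hasFDerivAt.comp_hasDerivAt x hΘx
          have hval : (InnerProductSpace.toDual ℝ E3 (gvec (Θ x))) (-(𝔊 (Θ x))) = 0 := by
            have h1 : (InnerProductSpace.toDual ℝ E3 (gvec (Θ x))) (-(𝔊 (Θ x)))
                = ⟪gvec (Θ x), -(𝔊 (Θ x))⟫ := rfl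
            rw [h1, inner_neg_right, real_inner_comm, horth, neg_zero]
          rw [hval] at hchain
          exact hchain
        have hup : ψ y ≤ 1 := by
          have := le_of_ae_deriv_nonpos hcy.le hKpos
            (hψcont.mono (Icc_subset_Icc hc00 hyT))
            (fun x hx z hz => hψlip x (⟨hc00.trans hx.1, hx.2.trans hyT⟩) z
              ⟨hc00.trans hz.1, hz.2.trans hyT⟩)
            hE0 (fun x hx hxE => ⟨0, le_rfl, hderivψ x hx hxE⟩)
          rwa [hψc0] at this
        have hdown : 1 ≤ ψ y := by
          have := le_of_ae_deriv_nonpos (g := fun s => -ψ s) hcy.le hKpos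
            ((hψcont.mono (Icc_subset_Icc hc00 hyT)).neg)
            (fun x hx z hz => by
              rw [show -ψ z - -ψ x = -(ψ z - ψ x) by ring, abs_neg]
              exact hψlip x (⟨hc00.trans hx.1, hx.2.trans hyT⟩) z
                ⟨hc00.trans hz.1, hz.2.trans hyT⟩)
            hE0 (fun x hx hxE => ⟨0, le_rfl, by have := (hderivψ x hx hxE).neg; rw [neg_zero] at this; exact this⟩)
          have h2 : -ψ y ≤ -ψ c0 := this
          rw [hψc0] at h2
          linarith
        linarith
      have hdA : d ∈ A := by
        refine ⟨⟨hc00.trans hc0d.le, hdT⟩, fun s hs => ?_⟩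
        rcases le_or_gt s c0 with hsc | hsc
        · rcases eq_or_lt_of_le hsc with h1 | h1
          · rw [h1]; exact hψc0
          · exact hψlt s hs.1 h1
        · exact hconst s ⟨hsc.le, hs.2⟩
      exact absurd (le_csSup hAbdd hdA) (not_le.2 hc0d)
    have := hψc0
    rw [hc0eq] at this
    exact this
  -- Monotonicity of the risk
  have master2 : ∀ t : ℝ, 0 ≤ t → riskL f (Θ t) ≤ riskL f (Θ 0) := by
    intro T hT0
    rcases eq_or_lt_of_le hT0 with hT | hT
    · rw [← hT]
    obtain ⟨M, hM0, hM⟩ := hMT T hT0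
    obtain ⟨E, hE0, hED⟩ := hΘaeD T hT
    set ℓ : ℝ → ℝ := fun s => riskL f (Θ s) with hℓ'
    have hcoordΘ : ∀ s : ℝ, 0 ≤ s → 0 < |Θ s 0| + |Θ s 1| := by
      intro s hs
      apply gfun_pos_coords
      rw [master1 s hs]
      norm_num
    have hℓcont : ContinuousOn ℓ (Icc 0 T) := by
      intro x hx
      exact ((h𝓛diff (Θ x) (hcoordΘ x hx.1)).continuousAt).comp_continuousWithinAt
        (hcontΘ T hT0 x hx)
    set RT : ℝ := ‖Θ 0‖ + M * T with hRT'
    have hRT0 : 0 ≤ RT := by positivity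
    have hRT : ∀ s ∈ Icc (0:ℝ) T, ‖Θ s‖ ≤ RT := by
      intro s hs
      have := hΘlip T hT0 M hM 0 ⟨le_rfl, hT0⟩ s hs
      rw [sub_zero] at this
      have habs : |s| ≤ T := by rw [abs_of_nonneg hs.1]; exact hs.2
      have h3 : ‖Θ s - Θ 0‖ ≤ M * |s| := by simpa [abs_of_nonneg hs.1] using this
      have h2 : M * |s| ≤ M * T := mul_le_mul_of_nonneg_left habs hM0
      calc ‖Θ s‖ = ‖Θ 0 + (Θ s - Θ 0)‖ := by
            rw [show Θ 0 + (Θ s - Θ 0) = Θ s from by abel]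
      _ ≤ ‖Θ 0‖ + ‖Θ s - Θ 0‖ := norm_add_le _ _
      _ ≤ RT := by rw [hRT']; linarith
    set K : ℝ := 16 * RT * (4 * RT ^ 2 + 2 * Bf) * M with hK'
    have hKpos : 0 ≤ K := by positivity
    have hℓlip : ∀ x ∈ Icc (0:ℝ) T, ∀ y ∈ Icc (0:ℝ) T, |ℓ y - ℓ x| ≤ K * |y - x| := by
      intro x hx y hy
      have h1 : |ℓ y - ℓ x| ≤ 16 * RT * (4 * RT ^ 2 + 2 * Bf) * ‖Θ y - Θ x‖ :=
        riskL_lip hf hBf _ _ (hRT y hy) (hRT x hx)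
      have h2 : ‖Θ y - Θ x‖ ≤ M * |y - x| := hΘlip T hT0 M hM x hx y hy
      have h3 : (0:ℝ) ≤ 16 * RT * (4 * RT ^ 2 + 2 * Bf) := by positivity
      calc |ℓ y - ℓ x| ≤ 16 * RT * (4 * RT ^ 2 + 2 * Bf) * (M * |y - x|) := by nlinarith
      _ = K * |y - x| := by rw [hK']; ring
    have hderivℓ : ∀ x ∈ Ioo (0:ℝ) T, x ∉ E → ∃ g', g' ≤ 0 ∧ HasDerivAt ℓ g' x := by
      intro x hx hxE
      have hΘx := hED x hx hxE
      have hcoords := hcoordΘ x hx.1.le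
      have hgpos : 0 < gfun (Θ x) := by rw [master1 x hx.1.le]; norm_num
      have hbne : ‖gvec (Θ x)‖ ≠ 0 := by
        intro h0
        have hn := norm_gvec_sq (Θ x)
        rw [h0] at hn
        nlinarith
      have hGform := h𝔊 (Θ x) hcoords
      rw [gradient_gfun] at hGform
      have hinner := (proj_ortho hbne hGform).2
      have hdiffL := h𝓛diff (Θ x) hcoords
      have hchain := hdiffL.hasGradientAt.hasFDerivAt.comp_hasDerivAt x hΘx
      have hval : (InnerProductSpace.toDual ℝ E3 (gradient (riskL f) (Θ x))) (-(𝔊 (Θ x)))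
          = -‖𝔊 (Θ x)‖ ^ 2 := by
        have h1 : (InnerProductSpace.toDual ℝ E3 (gradient (riskL f) (Θ x))) (-(𝔊 (Θ x)))
            = ⟪gradient (riskL f) (Θ x), -(𝔊 (Θ x))⟫ := rfl
        rw [h1, inner_neg_right, hinner]
      rw [hval] at hchain
      exact ⟨-‖𝔊 (Θ x)‖ ^ 2, neg_nonpos.2 (by positivity), hchain⟩
    exact le_of_ae_deriv_nonpos hT0 hKpos hℓcont hℓlip hE0 hderivℓ
  -- Conclusion
  intro ε hε
  set L0 : ℝ := riskL f (Θ 0) with hL0'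
  set Bq : ℝ := ∫ s in (0:ℝ)..1, (fbar f - f s) ^ 2 with hBq'
  set c : ℝ := ε ^ 3 / 128 with hc'
  have hcpos : 0 < c := by positivity
  refine ⟨Real.sqrt (1 + (2 * L0 + 2 * Bq) / c), ?_⟩
  intro t ht hvol
  have hg1 : gfun (Θ t) = 1 := master1 t ht
  have hV := variance_lb hε hg1 hvol (mfun (Θ t))
  have hlb := riskL_lb (θ := Θ t) hf
  have hm2 : riskL f (Θ t) ≤ L0 := master2 t ht
  set V : ℝ := ∫ s in (0:ℝ)..1, (max (Θ t 0 * s + Θ t 1) 0 - mfun (Θ t)) ^ 2 with hV'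
  have hsq : (Θ t 2) ^ 2 ≤ (2 * L0 + 2 * Bq) / c := by
    rw [le_div_iff₀ hcpos]
    have h1 : (Θ t 2) ^ 2 * c ≤ (Θ t 2) ^ 2 * V :=
      mul_le_mul_of_nonneg_left (by exact hV) (sq_nonneg _)
    nlinarith [hlb, hm2]
  have hns : ‖Θ t‖ ^ 2 = 1 + (Θ t 2) ^ 2 := by
    rw [norm_sq_eq3]
    have : Θ t 0 ^ 2 + Θ t 1 ^ 2 = 1 := hg1
    linarith
  have hfin : ‖Θ t‖ ^ 2 ≤ 1 + (2 * L0 + 2 * Bq) / c := by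
    rw [hns]; linarith
  calc ‖Θ t‖ = Real.sqrt (‖Θ t‖ ^ 2) := (Real.sqrt_sq (norm_nonneg _)).symm
  _ ≤ Real.sqrt (1 + (2 * L0 + 2 * Bq) / c) := Real.sqrt_le_sqrt hfin
end

section
/- Let α, β ∈ ℝ and let I ⊆ ℝ be a bounded interval. Then ∫_I (αx + β)² dx ≥ (α²/12) (μ(I))³, where μ denotes Lebesgue measure on ℝ. -/
open MeasureTheory Set

/-- Lemma 3.5: for real `α, β` and a bounded interval `I ⊆ ℝ` one has
`∫_I (αx + β)² dx ≥ (α²/12) (μ(I))³`. -/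
theorem stmt9 (α β : ℝ) (I : Set ℝ)
    (hIbdd : Bornology.IsBounded I) (hIint : I.OrdConnected) :
    α ^ 2 / 12 * (volume I).toReal ^ 3 ≤ ∫ x in I, (α * x + β) ^ 2 := by
  rcases I.eq_empty_or_nonempty with rfl | hne
  · simp
  set a := sInf I
  set b := sSup I
  have hbdd : BddBelow I := hIbdd.bddBelow
  have hbda : BddAbove I := hIbdd.bddAbove
  have hab : a ≤ b := Real.sInf_le_sSup I hbdd hbda
  have hsub1 : Ioo a b ⊆ I := by
    intro x hx
    obtain ⟨y, hy, hyx⟩ := exists_lt_of_csInf_lt hne hx.1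
    obtain ⟨z, hz, hxz⟩ := exists_lt_of_lt_csSup hne hx.2
    exact hIint.out hy hz ⟨hyx.le, hxz.le⟩
  have hsub2 : I ⊆ Icc a b := subset_Icc_csInf_csSup hbdd hbda
  -- volume of I
  have hvol : (volume I).toReal = b - a := by
    have h1 : volume (Ioo a b) ≤ volume I := measure_mono hsub1
    have h2 : volume I ≤ volume (Icc a b) := measure_mono hsub2
    rw [Real.volume_Ioo] at h1
    rw [Real.volume_Icc] at h2
    have : volume I = ENNReal.ofReal (b - a) := le_antisymm h2 h1
    rw [this, ENNReal.toReal_ofReal (by linarith)]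
  -- integrability
  have hcont : Continuous fun x : ℝ => (α * x + β) ^ 2 := by continuity
  have hintIcc : IntegrableOn (fun x : ℝ => (α * x + β) ^ 2) (Icc a b) :=
    hcont.continuousOn.integrableOn_Icc
  have hintI : IntegrableOn (fun x : ℝ => (α * x + β) ^ 2) I :=
    hintIcc.mono_set hsub2
  -- integral over Ioo a b ≤ integral over I
  have hmono : ∫ x in Ioo a b, (α * x + β) ^ 2 ≤ ∫ x in I, (α * x + β) ^ 2 := by
    apply setIntegral_mono_set hintI
    · filter_upwards with x using sq_nonneg _
    · exact HasSubset.Subset.eventuallyLE hsub1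
  -- compute integral over Ioo a b
  have hF : ∀ x : ℝ, HasDerivAt (fun x : ℝ => α ^ 2 * x ^ 3 / 3 + α * β * x ^ 2 + β ^ 2 * x)
      ((α * x + β) ^ 2) x := by
    intro x
    have h1 := (((hasDerivAt_pow 3 x).const_mul (α ^ 2)).div_const 3).add
        (((hasDerivAt_pow 2 x).const_mul (α * β)).add ((hasDerivAt_id x).const_mul (β ^ 2)))
    replace h1 : HasDerivAt ((fun x => α ^ 2 * x ^ 3 / 3) + ((fun y => α * β * y ^ 2) + fun y => β ^ 2 * id y))
        (α ^ 2 * (((3:ℕ):ℝ) * x ^ (3 - 1)) / 3 + (α * β * (((2:ℕ):ℝ) * x ^ (2 - 1)) + β ^ 2 * 1)) x := h1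
    convert h1 using 1
    · funext y; simp only [Pi.add_apply, id_eq]; ring
    · rw [show (3:ℕ) - 1 = 2 from rfl, show (2:ℕ) - 1 = 1 from rfl]; push_cast; ring
  have hcalc : ∫ x in Ioo a b, (α * x + β) ^ 2
      = (α ^ 2 * b ^ 3 / 3 + α * β * b ^ 2 + β ^ 2 * b)
        - (α ^ 2 * a ^ 3 / 3 + α * β * a ^ 2 + β ^ 2 * a) := by
    rw [← integral_Ioc_eq_integral_Ioo, ← intervalIntegral.integral_of_le hab]
    exact intervalIntegral.integral_eq_sub_of_hasDerivAt (fun x _ => hF x)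
      (hcont.intervalIntegrable a b)
  rw [hvol]
  refine le_trans ?_ hmono
  rw [hcalc]
  nlinarith [mul_nonneg (sub_nonneg.2 hab) (sq_nonneg (α * (a + b) + 2 * β)), sq_nonneg (b - a)]
end
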